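/- arXiv:0904.2342 — 12 statements merged into one kernel-verified Lean document; each statement's English description precedes it below -/
import Mathlib

section
/- Let X be a real Banach space, let a ≤ b be reals, and let y : [a,b] → X be continuously differentiable. Suppose there are continuous functions γ : [a,b] → (−∞,1] and h : [a,b] → ℝ such that ‖y(t) + y'(t)‖ ≤ (1 − γ(t))‖y(t)‖ + h(t) for all t ∈ [a,b]. Then for all t ∈ [a,b], ‖y(t)‖ ≤ e^{−∫_a^t γ(s) ds} ( ‖y(a)‖ + ∫_a^t h(s) e^{∫_a^s γ(r) dr} ds ). -/
open intervalIntegral Real Set Filter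

/-- Slope estimate: if `y` has derivative `v` at `x`, then the right slope of
`‖y‖` at `x` is eventually less than any `r > ‖y x + v‖ - ‖y x‖`. -/
lemma slope_norm_aux {X : Type*} [NormedAddCommGroup X] [NormedSpace ℝ X]
    {y : ℝ → X} {v : X} {x : ℝ} (hd : HasDerivAt y v x) {r : ℝ}
    (hr : ‖y x + v‖ - ‖y x‖ < r) :
    ∀ᶠ z in nhdsWithin x (Set.Ioi x), slope (norm ∘ y) x z < r := by
  set c : ℝ := r - (‖y x + v‖ - ‖y x‖) with hc
  have hc0 : 0 < c := by linarith
  have hlo := hasDerivAt_iff_isLittleO.1 hd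
  have hbound : ∀ᶠ z in nhds x, ‖y z - y x - (z - x) • v‖ ≤ c / 2 * ‖z - x‖ :=
    hlo.def (by positivity)
  have h1 : ∀ᶠ z in nhds x, z - x < 1 := by
    have ht : Filter.Tendsto (fun z : ℝ => z - x) (nhds x) (nhds 0) := by
      have := ((continuous_id (X := ℝ)).sub (continuous_const (y := x))).tendsto x
      simpa [Pi.sub_def] using this
    exact ht.eventually_lt_const (by norm_num)
  filter_upwards [nhdsWithin_le_nhds hbound, nhdsWithin_le_nhds h1,
    self_mem_nhdsWithin] with z hz h1z (hzx : x < z)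
  have hzx' : 0 < z - x := sub_pos.2 hzx
  have herr : ‖y z - y x - (z - x) • v‖ ≤ c / 2 * (z - x) := by
    rwa [Real.norm_eq_abs, abs_of_pos hzx'] at hz
  have key : ‖y z‖ - ‖y x‖ < (z - x) * r := by
    have e1 : ‖y z‖ ≤ ‖y x + (z - x) • v‖ + c / 2 * (z - x) := by
      calc ‖y z‖ = ‖y x + (z - x) • v + (y z - y x - (z - x) • v)‖ := by congr 1; abel
        _ ≤ ‖y x + (z - x) • v‖ + ‖y z - y x - (z - x) • v‖ := norm_add_le _ _
        _ ≤ ‖y x + (z - x) • v‖ + c / 2 * (z - x) := by linarith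
    have e2 : ‖y x + (z - x) • v‖ ≤ (1 - (z - x)) * ‖y x‖ + (z - x) * ‖y x + v‖ := by
      have hrw : y x + (z - x) • v = (1 - (z - x)) • y x + (z - x) • (y x + v) := by
        module
      rw [hrw]
      calc ‖(1 - (z - x)) • y x + (z - x) • (y x + v)‖
          ≤ ‖(1 - (z - x)) • y x‖ + ‖(z - x) • (y x + v)‖ := norm_add_le _ _
        _ = |1 - (z - x)| * ‖y x‖ + |z - x| * ‖y x + v‖ := by
            rw [norm_smul, norm_smul, Real.norm_eq_abs, Real.norm_eq_abs]
        _ = (1 - (z - x)) * ‖y x‖ + (z - x) * ‖y x + v‖ := by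
            rw [abs_of_nonneg (by linarith), abs_of_pos hzx']
    nlinarith [norm_nonneg (y x)]
  have hs : slope (norm ∘ y) x z = (‖y z‖ - ‖y x‖) / (z - x) := by
    simp [slope_def_field, Function.comp]
  rw [hs, div_lt_iff₀ hzx']
  linarith [key]

/-- Gronwall-type estimate: if `y : [a,b] → X` is continuously
differentiable with `‖y(t) + y'(t)‖ ≤ (1 - γ(t))‖y(t)‖ + h(t)` for continuous
`γ : [a,b] → (-∞,1]` and continuous `h`, then
`‖y(t)‖ ≤ e^{-∫_a^t γ}(‖y(a)‖ + ∫_a^t h(s) e^{∫_a^s γ} ds)`. -/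
theorem norm_le_gronwall_exp
    {X : Type*} [NormedAddCommGroup X] [NormedSpace ℝ X] [CompleteSpace X]
    (a b : ℝ) (hab : a ≤ b)
    (y y' : ℝ → X) (γ h : ℝ → ℝ)
    (hy : ∀ t ∈ Set.Icc a b, HasDerivAt y (y' t) t)
    (hy' : ContinuousOn y' (Set.Icc a b))
    (hγ : ContinuousOn γ (Set.Icc a b))
    (hγ1 : ∀ t ∈ Set.Icc a b, γ t ≤ 1)
    (hh : ContinuousOn h (Set.Icc a b))
    (hineq : ∀ t ∈ Set.Icc a b, ‖y t + y' t‖ ≤ (1 - γ t) * ‖y t‖ + h t) :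
    ∀ t ∈ Set.Icc a b,
      ‖y t‖ ≤ Real.exp (-∫ s in a..t, γ s) *
        (‖y a‖ + ∫ s in a..t, h s * Real.exp (∫ r in a..s, γ r)) := by
  -- continuous extensions of `γ` and `h` to all of `ℝ`
  have hproj : Continuous fun t : ℝ => (Set.projIcc a b hab t : ℝ) :=
    continuous_subtype_val.comp continuous_projIcc
  set Γ : ℝ → ℝ := fun t => γ (Set.projIcc a b hab t) with hΓdef
  set H : ℝ → ℝ := fun t => h (Set.projIcc a b hab t) with hHdef
  have hΓc : Continuous Γ := hγ.comp_continuous hproj fun t => (Set.projIcc a b hab t).2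
  have hHc : Continuous H := hh.comp_continuous hproj fun t => (Set.projIcc a b hab t).2
  have hΓeq : ∀ t ∈ Set.Icc a b, Γ t = γ t := fun t ht => by
    simp [hΓdef, Set.projIcc_of_mem hab ht]
  have hHeq : ∀ t ∈ Set.Icc a b, H t = h t := fun t ht => by
    simp [hHdef, Set.projIcc_of_mem hab ht]
  -- the integral of Γ and its derivative
  set G : ℝ → ℝ := fun t => ∫ s in a..t, Γ s with hGdef
  have hGd : ∀ x, HasDerivAt G (Γ x) x := fun x =>
    intervalIntegral.integral_hasDerivAt_right (hΓc.intervalIntegrable a x)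
      (hΓc.stronglyMeasurableAtFilter _ _) hΓc.continuousAt
  have hGc : Continuous G := continuous_iff_continuousAt.2 fun x => (hGd x).continuousAt
  have hycont : ContinuousOn y (Set.Icc a b) := fun t ht =>
    (hy t ht).continuousAt.continuousWithinAt
  -- Key step: comparison with the perturbed bound, for each ε > 0
  have key : ∀ ε : ℝ, 0 < ε → ∀ t ∈ Set.Icc a b,
      ‖y t‖ ≤ Real.exp (-G t) * (‖y a‖ + ∫ s in a..t, (H s + ε) * Real.exp (G s)) := by
    intro ε hε
    set φ : ℝ → ℝ := fun s => (H s + ε) * Real.exp (G s) with hφdef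
    have hφc : Continuous φ := (hHc.add continuous_const).mul (Real.continuous_exp.comp hGc)
    set I : ℝ → ℝ := fun t => ∫ s in a..t, φ s with hIdef
    have hId : ∀ x, HasDerivAt I (φ x) x := fun x =>
      intervalIntegral.integral_hasDerivAt_right (hφc.intervalIntegrable a x)
        (hφc.stronglyMeasurableAtFilter _ _) hφc.continuousAt
    set B : ℝ → ℝ := fun t => Real.exp (-G t) * (‖y a‖ + I t) with hBdef
    set B' : ℝ → ℝ := fun x => Real.exp (-G x) * (-Γ x) * (‖y a‖ + I x) + (H x + ε) with hB'def
    have hBd : ∀ x, HasDerivAt B (B' x) x := by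
      intro x
      have h1 : HasDerivAt (fun t => Real.exp (-G t)) (Real.exp (-G x) * (-Γ x)) x :=
        ((hGd x).neg).exp
      have h2 : HasDerivAt (fun t => ‖y a‖ + I t) (φ x) x := by
        exact (hId x).const_add ‖y a‖
      have : HasDerivAt (fun t => Real.exp (-G t) * (‖y a‖ + I t))
          (Real.exp (-G x) * (-Γ x) * (‖y a‖ + I x) + Real.exp (-G x) * φ x) x := h1.mul h2
      convert this using 1
      simp only [hB'def, hφdef]
      rw [Real.exp_neg]
      field_simp
      try ring
    have bound : ∀ x ∈ Set.Ico a b, ‖y x‖ = B x → ‖y x + y' x‖ - ‖y x‖ < B' x := by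
      intro x hx hEq
      have hxI : x ∈ Set.Icc a b := Set.Ico_subset_Icc_self hx
      have h1 := hineq x hxI
      have hB'x : B' x = -Γ x * B x + (H x + ε) := by
        simp only [hB'def, hBdef]; ring
      rw [hB'x, hΓeq x hxI, hHeq x hxI, ← hEq]
      nlinarith [h1]
    have main := image_norm_le_of_liminf_right_slope_norm_lt_deriv_boundary
      (f := y) (f' := fun x => ‖y x + y' x‖ - ‖y x‖) (B := B) (B' := B')
      hycont
      (fun x hx r hr =>
        (slope_norm_aux (hy x (Set.Ico_subset_Icc_self hx)) hr).frequently)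
      (by simp [hBdef, hIdef, hGdef, intervalIntegral.integral_same])
      (fun x _ => (hBd x).continuousAt.continuousWithinAt)
      (fun x _ => (hBd x).hasDerivWithinAt)
      bound
    exact fun t ht => main ht
  -- Transfer back and let ε → 0
  intro t ht
  have hsub : Set.uIcc a t ⊆ Set.Icc a b := by
    rw [Set.uIcc_of_le ht.1]
    exact Set.Icc_subset_Icc le_rfl ht.2
  have e1 : (∫ s in a..t, γ s) = G t :=
    intervalIntegral.integral_congr fun s hs => (hΓeq s (hsub hs)).symm
  have e2 : (∫ s in a..t, h s * Real.exp (∫ r in a..s, γ r))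
      = ∫ s in a..t, H s * Real.exp (G s) := by
    refine intervalIntegral.integral_congr fun s hs => ?_
    have hsI : s ∈ Set.Icc a b := hsub hs
    have hsub' : Set.uIcc a s ⊆ Set.Icc a b := by
      rw [Set.uIcc_of_le hsI.1]
      exact Set.Icc_subset_Icc le_rfl hsI.2
    have : (∫ r in a..s, γ r) = G s :=
      intervalIntegral.integral_congr fun r hr => (hΓeq r (hsub' hr)).symm
    rw [hHeq s hsI, this]
  rw [e1, e2]
  -- split the perturbed integral
  have hi1 : IntervalIntegrable (fun s => H s * Real.exp (G s)) MeasureTheory.volume a t :=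
    (hHc.mul (Real.continuous_exp.comp hGc)).intervalIntegrable a t
  have hi2 : IntervalIntegrable (fun s => Real.exp (G s)) MeasureTheory.volume a t :=
    (Real.continuous_exp.comp hGc).intervalIntegrable a t
  set C : ℝ := ∫ s in a..t, Real.exp (G s) with hCdef
  have hC0 : 0 ≤ C :=
    intervalIntegral.integral_nonneg ht.1 fun s _ => (Real.exp_pos _).le
  set D : ℝ := Real.exp (-G t) * C with hDdef
  have hD0 : 0 ≤ D := mul_nonneg (Real.exp_pos _).le hC0
  have hsplit : ∀ ε : ℝ, (∫ s in a..t, (H s + ε) * Real.exp (G s))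
      = (∫ s in a..t, H s * Real.exp (G s)) + ε * C := by
    intro ε
    have : (fun s => (H s + ε) * Real.exp (G s))
        = fun s => H s * Real.exp (G s) + ε * Real.exp (G s) := by
      funext s; ring
    rw [this, intervalIntegral.integral_add hi1 (hi2.const_mul ε),
      intervalIntegral.integral_const_mul]
  have hkey' : ∀ ε : ℝ, 0 < ε →
      ‖y t‖ ≤ Real.exp (-G t) * (‖y a‖ + ∫ s in a..t, H s * Real.exp (G s)) + ε * D := by
    intro ε hε
    have := key ε hε t ht
    rw [hsplit ε] at this
    calc ‖y t‖ ≤ Real.exp (-G t) * (‖y a‖ + ((∫ s in a..t, H s * Real.exp (G s)) + ε * C)) :=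
          this
      _ = Real.exp (-G t) * (‖y a‖ + ∫ s in a..t, H s * Real.exp (G s)) + ε * D := by
          rw [hDdef]; ring
  refine le_of_forall_pos_le_add fun ε hε => ?_
  have hε' : 0 < ε / (D + 1) := by positivity
  have := hkey' (ε / (D + 1)) hε'
  have hle : ε / (D + 1) * D ≤ ε := by
    rw [div_mul_eq_mul_div, div_le_iff₀ (by linarith)]
    nlinarith
  linarith
end

section
/- Let X be a real Banach space and J : X → X nonexpansive. If U, V : [0,∞) → X are differentiable and satisfy U'(t) = J(U(t)) − U(t) and V'(t) = J(V(t)) − V(t) for all t ≥ 0, then the function t ↦ ‖U(t) − V(t)‖ is non-increasing on [0,∞). -/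
open Real Set

/-- if `U` and `V` both solve `U'(t) = J(U(t)) - U(t)` on `[0,∞)`
for a nonexpansive `J`, then `t ↦ ‖U(t) - V(t)‖` is non-increasing on `[0,∞)`. -/
theorem norm_sub_solutions_antitone
    {X : Type*} [NormedAddCommGroup X] [NormedSpace ℝ X] [CompleteSpace X]
    (J : X → X) (hJ : ∀ x y : X, ‖J x - J y‖ ≤ ‖x - y‖)
    (U V : ℝ → X)
    (hU : ∀ t ≥ (0 : ℝ), HasDerivAt U (J (U t) - U t) t)
    (hV : ∀ t ≥ (0 : ℝ), HasDerivAt V (J (V t) - V t) t) :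
    AntitoneOn (fun t => ‖U t - V t‖) (Set.Ici (0 : ℝ)) := by
  intro s hs t ht hst
  simp only [Set.mem_Ici] at hs ht
  set f : ℝ → X := fun τ => Real.exp τ • (U τ - V τ) with hfdef
  have hderivAt : ∀ τ, 0 ≤ τ → HasDerivAt f (Real.exp τ • (J (U τ) - J (V τ))) τ := by
    intro τ hτ0
    have hW : HasDerivAt (fun τ => U τ - V τ) ((J (U τ) - U τ) - (J (V τ) - V τ)) τ :=
      (hU τ hτ0).sub (hV τ hτ0)
    have hE : HasDerivAt Real.exp (Real.exp τ) τ := Real.hasDerivAt_exp τ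
    have h := hE.smul hW
    convert h using 1
    · rfl
    rw [← smul_add]
    congr 1
    abel
  have hcont : ContinuousOn f (Set.Icc s t) := fun τ hτ =>
    ((Real.continuous_exp.continuousAt.smul
      (((hU τ (hs.trans hτ.1)).continuousAt).sub
        ((hV τ (hs.trans hτ.1)).continuousAt))).continuousWithinAt)
  have key := norm_le_gronwallBound_of_norm_deriv_right_le (E := X)
    (f := f) (f' := fun τ => Real.exp τ • (J (U τ) - J (V τ)))
    (δ := ‖f s‖) (K := 1) (ε := 0) (a := s) (b := t) hcont
    (fun τ hτ => (hderivAt τ (hs.trans hτ.1)).hasDerivWithinAt)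
    le_rfl
    (by
      intro τ hτ
      rw [norm_smul, Real.norm_eq_abs, abs_of_pos (Real.exp_pos τ), add_zero, one_mul,
        hfdef]
      simp only [norm_smul, Real.norm_eq_abs, abs_of_pos (Real.exp_pos τ)]
      exact mul_le_mul_of_nonneg_left (hJ _ _) (Real.exp_pos τ).le)
  have h := key t ⟨hst, le_rfl⟩
  rw [gronwallBound_ε0] at h
  have hfs : ‖f s‖ = Real.exp s * ‖U s - V s‖ := by
    simp [hfdef, norm_smul, abs_of_pos (Real.exp_pos s)]
  have hft : ‖f t‖ = Real.exp t * ‖U t - V t‖ := by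
    simp [hfdef, norm_smul, abs_of_pos (Real.exp_pos t)]
  rw [hft, hfs, one_mul] at h
  have : Real.exp s * ‖U s - V s‖ * Real.exp (t - s) = Real.exp t * ‖U s - V s‖ := by
    rw [mul_right_comm, ← Real.exp_add]
    ring_nf
  rw [this] at h
  exact le_of_mul_le_mul_left h (Real.exp_pos t)
end

section
/- Let X be a real Banach space, J : X → X nonexpansive, and U : [0,∞) → X a differentiable function satisfying U'(t) = J(U(t)) − U(t) for all t ≥ 0. Then the function t ↦ ‖U'(t)‖ = ‖J(U(t)) − U(t)‖ is non-increasing on [0,∞). -/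
open Real Set Filter Topology

/-- Key contraction lemma: for `h ≥ 0`, `t ↦ ‖U (t+h) - U t‖` is nonincreasing on `[0,∞)`. -/
lemma shift_contract
    {X : Type*} [NormedAddCommGroup X] [NormedSpace ℝ X]
    (J : X → X) (hJ : ∀ x y : X, ‖J x - J y‖ ≤ ‖x - y‖)
    (U : ℝ → X)
    (hU : ∀ t ≥ (0 : ℝ), HasDerivAt U (J (U t) - U t) t)
    {h : ℝ} (hh : 0 ≤ h) {s t : ℝ} (hs : 0 ≤ s) (hst : s ≤ t) :
    ‖U (t + h) - U t‖ ≤ ‖U (s + h) - U s‖ := by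
  set g : ℝ → X := fun x => Real.exp x • (U (x + h) - U x) with hg
  set g' : ℝ → X := fun x => Real.exp x • (J (U (x + h)) - J (U x)) with hg'
  have hderiv : ∀ x, 0 ≤ x → HasDerivAt g (g' x) x := by
    intro x hx0
    have h1 : HasDerivAt (fun y => U (y + h)) (J (U (x + h)) - U (x + h)) x := by
      have base : HasDerivAt U (J (U (x + h)) - U (x + h)) (id x + h) := by
        simpa using hU (x + h) (by linarith)
      simpa [Function.comp_def] using base.scomp x ((hasDerivAt_id x).add_const h)
    have h2 : HasDerivAt U (J (U x) - U x) x := hU x hx0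
    have h3 : HasDerivAt (fun y => U (y + h) - U y)
        ((J (U (x + h)) - U (x + h)) - (J (U x) - U x)) x := h1.sub h2
    have h4 := (Real.hasDerivAt_exp x).smul h3
    convert h4 using 1
    · funext y; rfl
    simp only [hg', smul_sub, smul_add]
    module
  have hcont : ContinuousOn g (Icc s t) := fun x hx =>
    (hderiv x (le_trans hs hx.1)).continuousAt.continuousWithinAt
  have hbound : ∀ x ∈ Ico s t, ‖g' x‖ ≤ 1 * ‖g x‖ + 0 := by
    intro x hx
    simp only [hg, hg', norm_smul, Real.norm_eq_abs, abs_of_pos (Real.exp_pos x),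
      one_mul, add_zero]
    have := hJ (U (x + h)) (U x)
    nlinarith [Real.exp_pos x]
  have key := norm_le_gronwallBound_of_norm_deriv_right_le hcont
    (fun x hx => (hderiv x (le_trans hs hx.1)).hasDerivWithinAt)
    (le_refl ‖g s‖) hbound t (right_mem_Icc.2 hst)
  rw [gronwallBound_ε0] at key
  simp only [hg, norm_smul, Real.norm_eq_abs, abs_of_pos (Real.exp_pos _)] at key
  rw [one_mul, Real.exp_sub] at key
  have hes := Real.exp_pos s
  have het := Real.exp_pos t
  have key2 : Real.exp t * ‖U (t + h) - U t‖ ≤ Real.exp t * ‖U (s + h) - U s‖ := by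
    calc Real.exp t * ‖U (t + h) - U t‖
        ≤ Real.exp s * ‖U (s + h) - U s‖ * (Real.exp t / Real.exp s) := key
      _ = Real.exp t * ‖U (s + h) - U s‖ := by field_simp
  exact le_of_mul_le_mul_left key2 het

/-- if `U` solves `U'(t) = J(U(t)) - U(t)` on `[0,∞)` for a
nonexpansive `J`, then `t ↦ ‖U'(t)‖ = ‖J(U(t)) - U(t)‖` is non-increasing on `[0,∞)`. -/
theorem norm_deriv_solution_antitone
    {X : Type*} [NormedAddCommGroup X] [NormedSpace ℝ X] [CompleteSpace X]
    (J : X → X) (hJ : ∀ x y : X, ‖J x - J y‖ ≤ ‖x - y‖)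
    (U : ℝ → X)
    (hU : ∀ t ≥ (0 : ℝ), HasDerivAt U (J (U t) - U t) t) :
    AntitoneOn (fun t => ‖J (U t) - U t‖) (Set.Ici (0 : ℝ)) := by
  intro s hs t ht hst
  simp only
  have hts : Tendsto (fun h : ℝ => ‖h⁻¹ • (U (t + h) - U t)‖) (𝓝[>] 0)
      (𝓝 ‖J (U t) - U t‖) :=
    ((hU t ht).tendsto_slope_zero_right).norm
  have hss : Tendsto (fun h : ℝ => ‖h⁻¹ • (U (s + h) - U s)‖) (𝓝[>] 0)
      (𝓝 ‖J (U s) - U s‖) :=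
    ((hU s hs).tendsto_slope_zero_right).norm
  refine le_of_tendsto_of_tendsto hts hss ?_
  filter_upwards [self_mem_nhdsWithin] with h hh
  rw [Set.mem_Ioi] at hh
  simp only [norm_smul, Real.norm_eq_abs]
  exact mul_le_mul_of_nonneg_left
    (shift_contract J hJ U hU hh.le hs hst) (abs_nonneg _)
end

section
/- (Chernoff's estimate) Let X be a real Banach space, J : X → X nonexpansive, U_0 ∈ X, and U : [0,∞) → X the differentiable solution of U'(t) = J(U(t)) − U(t) with U(0) = U_0. Then for every t ≥ 0 and every natural number n, ‖U(t) − J^n(U_0)‖ ≤ ‖J(U_0) − U_0‖ · √(t + (n − t)²). -/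
open Set Filter Real
open scoped Topology

section helpers

variable {X : Type*} [NormedAddCommGroup X] [NormedSpace ℝ X]

/-- Slope estimate for `t ↦ ‖U t - c‖` when `U' x = J (U x) - U x`. -/
lemma chernoff_slope_main (J : X → X) (U : ℝ → X) (x : ℝ)
    (hx : HasDerivAt U (J (U x) - U x) x) (c : X) (r : ℝ)
    (hr : ‖J (U x) - c‖ - ‖U x - c‖ < r) :
    ∃ᶠ z in 𝓝[>] x, slope (fun t => ‖U t - c‖) x z < r := by
  have htend : Tendsto (slope U x) (𝓝[>] x) (𝓝 (J (U x) - U x)) :=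
    (hasDerivAt_iff_tendsto_slope.1 hx).mono_left
      (nhdsWithin_mono x (fun z hz => ne_of_gt hz))
  set s : ℝ := ‖J (U x) - c‖ - ‖U x - c‖ with hs
  have hη : 0 < r - s := by linarith
  have h1 : ∀ᶠ z in 𝓝[>] x, ‖slope U x z - (J (U x) - U x)‖ < r - s := by
    have := Metric.tendsto_nhds.1 htend (r - s) hη
    simpa [dist_eq_norm] using this
  have h2 : ∀ᶠ z in 𝓝[>] x, z ∈ Ioc x (x + 1) :=
    Ioc_mem_nhdsGT_of_mem ⟨le_rfl, lt_add_one x⟩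
  refine (h1.and h2).frequently.mono ?_
  rintro z ⟨hz1, hz2⟩
  have hzx : 0 < z - x := sub_pos.2 hz2.1
  have hz1' : z - x ≤ 1 := by linarith [hz2.2]
  set e : X := slope U x z - (J (U x) - U x) with he
  have h0 : U z - U x = (z - x) • slope U x z := by
    rw [slope_def_module, smul_inv_smul₀ hzx.ne']
  have h0' : U z = U x + (z - x) • ((J (U x) - U x) + e) := by
    have hve : (J (U x) - U x) + e = slope U x z := by rw [he]; abel
    rw [hve, ← h0]; abel
  have hid : U z - c = (1 - (z - x)) • (U x - c) + (z - x) • (J (U x) - c)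
      + (z - x) • e := by
    rw [h0']; module
  have e1 : ‖(1 - (z - x)) • (U x - c)‖ = (1 - (z - x)) * ‖U x - c‖ := by
    rw [norm_smul, Real.norm_of_nonneg (by linarith)]
  have e2 : ‖(z - x) • (J (U x) - c)‖ = (z - x) * ‖J (U x) - c‖ := by
    rw [norm_smul, Real.norm_of_nonneg hzx.le]
  have e3 : ‖(z - x) • e‖ = (z - x) * ‖e‖ := by
    rw [norm_smul, Real.norm_of_nonneg hzx.le]
  have hnorm : ‖U z - c‖ ≤ (1 - (z - x)) * ‖U x - c‖ + (z - x) * ‖J (U x) - c‖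
      + (z - x) * ‖e‖ := by
    rw [hid]
    calc ‖(1 - (z - x)) • (U x - c) + (z - x) • (J (U x) - c) + (z - x) • e‖
        ≤ ‖(1 - (z - x)) • (U x - c) + (z - x) • (J (U x) - c)‖ + ‖(z - x) • e‖ :=
          norm_add_le _ _
      _ ≤ ‖(1 - (z - x)) • (U x - c)‖ + ‖(z - x) • (J (U x) - c)‖ + ‖(z - x) • e‖ := by
          gcongr; exact norm_add_le _ _
      _ = _ := by rw [e1, e2, e3]
  have h4 : (z - x) * ‖e‖ < (z - x) * (r - s) := mul_lt_mul_of_pos_left hz1 hzx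
  rw [hs] at h4
  simp only [slope_def_field]
  rw [div_lt_iff₀ hzx]
  nlinarith [hnorm, h4]

/-- Slope estimate for `t ↦ ‖J (U t) - U t‖`. -/
lemma chernoff_slope_A (J : X → X) (hJ : ∀ x y : X, ‖J x - J y‖ ≤ ‖x - y‖)
    (U : ℝ → X) (x : ℝ) (hx : HasDerivAt U (J (U x) - U x) x) (r : ℝ) (hr : 0 < r) :
    ∃ᶠ z in 𝓝[>] x, slope (fun t => ‖J (U t) - U t‖) x z < r := by
  have htend : Tendsto (slope U x) (𝓝[>] x) (𝓝 (J (U x) - U x)) :=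
    (hasDerivAt_iff_tendsto_slope.1 hx).mono_left
      (nhdsWithin_mono x (fun z hz => ne_of_gt hz))
  have h1 : ∀ᶠ z in 𝓝[>] x, ‖slope U x z - (J (U x) - U x)‖ < r / 2 := by
    have := Metric.tendsto_nhds.1 htend (r / 2) (by linarith)
    simpa [dist_eq_norm] using this
  have h2 : ∀ᶠ z in 𝓝[>] x, z ∈ Ioc x (x + 1) :=
    Ioc_mem_nhdsGT_of_mem ⟨le_rfl, lt_add_one x⟩
  refine (h1.and h2).frequently.mono ?_
  rintro z ⟨hz1, hz2⟩
  have hzx : 0 < z - x := sub_pos.2 hz2.1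
  have hz1' : z - x ≤ 1 := by linarith [hz2.2]
  set e : X := slope U x z - (J (U x) - U x) with he
  have h0 : U z - U x = (z - x) • ((J (U x) - U x) + e) := by
    have hve : (J (U x) - U x) + e = slope U x z := by rw [he]; abel
    rw [hve, slope_def_module, smul_inv_smul₀ hzx.ne']
  have h0' : U z = U x + (z - x) • ((J (U x) - U x) + e) := by rw [← h0]; abel
  have ha : ‖U z - U x‖ ≤ (z - x) * ‖J (U x) - U x‖ + (z - x) * ‖e‖ := by
    rw [h0, smul_add]
    refine (norm_add_le _ _).trans ?_
    rw [norm_smul, norm_smul, Real.norm_of_nonneg hzx.le]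
  have hb : ‖J (U x) - U z‖ ≤ (1 - (z - x)) * ‖J (U x) - U x‖ + (z - x) * ‖e‖ := by
    have hid : J (U x) - U z = (1 - (z - x)) • (J (U x) - U x) - (z - x) • e := by
      rw [h0']; module
    rw [hid]
    refine (norm_sub_le _ _).trans ?_
    rw [norm_smul, norm_smul, Real.norm_of_nonneg hzx.le,
      Real.norm_of_nonneg (by linarith : (0:ℝ) ≤ 1 - (z - x))]
  have hJz : ‖J (U z) - J (U x)‖ ≤ ‖U z - U x‖ := hJ _ _
  have htri : ‖J (U z) - U z‖ ≤ ‖J (U z) - J (U x)‖ + ‖J (U x) - U z‖ := by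
    calc ‖J (U z) - U z‖ = ‖(J (U z) - J (U x)) + (J (U x) - U z)‖ := by abel_nf
      _ ≤ ‖J (U z) - J (U x)‖ + ‖J (U x) - U z‖ := norm_add_le _ _
  simp only [slope_def_field]
  rw [div_lt_iff₀ hzx]
  have h4 : (z - x) * ‖e‖ < (z - x) * (r / 2) := mul_lt_mul_of_pos_left hz1 hzx
  nlinarith [htri, ha, hb, h4, hJz]

end helpers

/-- Chernoff's estimate: if `U` solves `U'(t) = J(U(t)) - U(t)` with
`U(0) = U₀` for a nonexpansive `J`, then for every `t ≥ 0` and `n : ℕ`,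
`‖U(t) - J^n(U₀)‖ ≤ ‖J(U₀) - U₀‖ √(t + (n - t)²)`. -/
theorem chernoff_estimate
    {X : Type*} [NormedAddCommGroup X] [NormedSpace ℝ X] [CompleteSpace X]
    (J : X → X) (hJ : ∀ x y : X, ‖J x - J y‖ ≤ ‖x - y‖)
    (U₀ : X) (U : ℝ → X)
    (hU : ∀ t ≥ (0 : ℝ), HasDerivAt U (J (U t) - U t) t)
    (hU0 : U 0 = U₀) :
    ∀ t ≥ (0 : ℝ), ∀ n : ℕ,
      ‖U t - J^[n] U₀‖ ≤ ‖J U₀ - U₀‖ * Real.sqrt (t + ((n : ℝ) - t) ^ 2) := by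
  set d : ℝ := ‖J U₀ - U₀‖ with hd_def
  have hd0 : 0 ≤ d := norm_nonneg _
  have hJcont : Continuous J := by
    refine (LipschitzWith.of_dist_le_mul (K := 1) (fun x y => ?_)).continuous
    simpa [dist_eq_norm] using hJ x y
  have hUcont : ∀ T : ℝ, ContinuousOn U (Icc 0 T) := fun T x hx =>
    ((hU x hx.1).continuousAt).continuousWithinAt
  -- Step 1 : ‖J (U t) - U t‖ ≤ d for t ≥ 0
  have hA : ∀ t ≥ (0:ℝ), ‖J (U t) - U t‖ ≤ d := by
    intro t ht
    refine le_of_forall_pos_le_add (fun ε' hε' => ?_)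
    set ε : ℝ := ε' / (t + 1) with hε_def
    have hε : 0 < ε := div_pos hε' (by linarith)
    have key : ∀ ⦃x⦄, x ∈ Icc (0:ℝ) t → ‖J (U x) - U x‖ ≤ d + ε * x := by
      refine image_le_of_liminf_slope_right_lt_deriv_boundary
        (f := fun s => ‖J (U s) - U s‖) (f' := fun _ => 0)
        (B := fun s => d + ε * s) (B' := fun _ => ε) ?_ ?_ ?_ ?_ ?_
      · exact ((hJcont.comp_continuousOn (hUcont t)).sub (hUcont t)).norm
      · intro x hx r hr
        exact chernoff_slope_A J hJ U x (hU x hx.1) r hr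
      · simp [hU0]; exact hd_def.ge
      · intro x
        simpa using ((hasDerivAt_id x).const_mul ε).const_add d
      · exact fun x _ _ => hε
    have h5 := key ⟨le_rfl, ht⟩  -- wrong; fix below
    have h6 := key (right_mem_Icc.2 ht)
    have h7 : ε * t ≤ ε' := by
      rw [hε_def, div_mul_eq_mul_div, div_le_iff₀ (by linarith : (0:ℝ) < t + 1)]
      nlinarith
    linarith
  -- telescoping : ‖U₀ - J^[m] U₀‖ ≤ m * d
  have htel : ∀ m : ℕ, ‖U₀ - J^[m] U₀‖ ≤ m * d := by
    intro m
    induction m with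
    | zero => simp
    | succ m ih =>
      have h1 : ‖U₀ - J^[m+1] U₀‖ ≤ ‖U₀ - J U₀‖ + ‖J U₀ - J^[m+1] U₀‖ :=
        norm_sub_le_norm_sub_add_norm_sub _ _ _
      have h2 : ‖J U₀ - J^[m+1] U₀‖ ≤ ‖U₀ - J^[m] U₀‖ := by
        rw [Function.iterate_succ_apply']
        exact hJ _ _
      have h3 : ‖U₀ - J U₀‖ = d := by rw [hd_def, norm_sub_rev]
      push_cast
      linarith
  -- ‖U t - U₀‖ ≤ d * t for t ≥ 0
  have hphi0 : ∀ t ≥ (0:ℝ), ‖U t - U₀‖ ≤ d * t := by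
    intro t ht
    have := norm_image_sub_le_of_norm_deriv_le_segment'
      (f := U) (f' := fun s => J (U s) - U s) (a := 0) (b := t) (C := d)
      (fun x hx => (hU x hx.1).hasDerivWithinAt)
      (fun x hx => hA x hx.1) t (right_mem_Icc.2 ht)
    simpa [hU0] using this
  -- main induction
  have main : ∀ n : ℕ, ∀ t : ℝ, 0 ≤ t →
      ‖U t - J^[n] U₀‖ ≤ d * Real.sqrt (t + ((n : ℝ) - t) ^ 2) := by
    intro n
    induction n with
    | zero =>
      intro t ht
      simp only [Function.iterate_zero_apply, Nat.cast_zero]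
      refine (hphi0 t ht).trans ?_
      have h1 : t ≤ Real.sqrt (t + ((0:ℝ) - t) ^ 2) := by
        rw [Real.le_sqrt ht (by nlinarith)]
        nlinarith
      exact mul_le_mul_of_nonneg_left h1 hd0
    | succ n ih =>
      intro T hT
      set c : X := J^[n+1] U₀ with hc
      set q : ℝ → ℝ := fun x => x + ((n:ℝ) + 1 - x) ^ 2 with hq
      have hqpos : ∀ x : ℝ, 0 < q x := by
        intro x
        have hn : (0:ℝ) ≤ n := Nat.cast_nonneg n
        simp only [hq]
        nlinarith [sq_nonneg ((n:ℝ) - x + 1/2)]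
      set b : ℝ → ℝ := fun x => Real.sqrt (q x) with hb
      have hbpos : ∀ x : ℝ, 0 < b x := fun x => Real.sqrt_pos.2 (hqpos x)
      have hbderiv : ∀ x : ℝ,
          HasDerivAt b ((1 - 2 * ((n:ℝ) + 1 - x)) / (2 * b x)) x := by
        intro x
        have hq' : HasDerivAt q (1 + 2 * ((n:ℝ) + 1 - x) ^ 1 * (-1)) x := by
          have h1 : HasDerivAt (fun y : ℝ => ((n:ℝ) + 1 - y)) (-1) x := by
            simpa using (hasDerivAt_id x).const_sub ((n:ℝ) + 1)
          exact ((hasDerivAt_id x).add (h1.pow 2)).congr_deriv (by norm_num)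
        have := (Real.hasDerivAt_sqrt (hqpos x).ne').comp x hq'
        refine this.congr_deriv ?_
        show _ = (1 - 2 * ((n:ℝ) + 1 - x)) / (2 * Real.sqrt (q x))
        ring
      -- key AM-GM inequality
      have hkey : ∀ x : ℝ, 0 ≤ x →
          Real.sqrt (x + ((n:ℝ) - x) ^ 2) ≤ b x + (1 - 2 * ((n:ℝ) + 1 - x)) / (2 * b x) := by
        intro x hx
        set γ : ℝ := Real.sqrt (x + ((n:ℝ) - x) ^ 2) with hγ
        have hγ0 : 0 ≤ γ := Real.sqrt_nonneg _
        have hγ2 : γ ^ 2 = x + ((n:ℝ) - x) ^ 2 :=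
          Real.sq_sqrt (by positivity)
        have hβ2 : b x ^ 2 = x + ((n:ℝ) + 1 - x) ^ 2 := Real.sq_sqrt (hqpos x).le
        have hβ : 0 < b x := hbpos x
        rw [← sub_le_iff_le_add', le_div_iff₀ (by positivity)]
        nlinarith [sq_nonneg (γ - b x)]
      -- Gronwall comparison with ε-perturbation
      have hstep : ∀ ε : ℝ, 0 < ε → ‖U T - c‖ ≤ d * b T + ε * (1 + T) := by
        intro ε hε
        have key : ∀ ⦃x⦄, x ∈ Icc (0:ℝ) T → ‖U x - c‖ ≤ d * b x + ε * (1 + x) := by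
          refine image_le_of_liminf_slope_right_lt_deriv_boundary
            (f := fun s => ‖U s - c‖)
            (f' := fun x => ‖J (U x) - c‖ - ‖U x - c‖)
            (B := fun x => d * b x + ε * (1 + x))
            (B' := fun x => d * ((1 - 2 * ((n:ℝ) + 1 - x)) / (2 * b x)) + ε) ?_ ?_ ?_ ?_ ?_
          · exact (((hUcont T).sub continuousOn_const).norm)
          · intro x hx r hr
            exact chernoff_slope_main J U x (hU x hx.1) c r hr
          · show ‖U 0 - c‖ ≤ d * b 0 + ε * (1 + 0)
            have hb0 : b 0 = (n:ℝ) + 1 := by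
              rw [hb]
              simp only [hq]
              rw [show (0:ℝ) + ((n:ℝ) + 1 - 0) ^ 2 = ((n:ℝ) + 1) ^ 2 by ring]
              exact Real.sqrt_sq (by positivity)
            have h1 : ‖U 0 - c‖ ≤ ((n:ℝ) + 1) * d := by
              rw [hU0, hc]
              simpa using htel (n + 1)
            rw [hb0]
            nlinarith
          · intro x
            have h1 := (hbderiv x).const_mul d
            have h2 : HasDerivAt (fun y : ℝ => ε * (1 + y)) ε x := by
              simpa using ((hasDerivAt_id x).const_add (1:ℝ)).const_mul ε
            exact h1.add h2
          · intro x hx heq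
            have hJe : ‖J (U x) - c‖ ≤ ‖U x - J^[n] U₀‖ := by
              rw [hc, Function.iterate_succ_apply']
              exact hJ _ _
            have hih := ih x hx.1
            have hkx := hkey x hx.1
            have hkx' : d * Real.sqrt (x + ((n:ℝ) - x) ^ 2)
                ≤ d * b x + d * ((1 - 2 * ((n:ℝ) + 1 - x)) / (2 * b x)) := by
              nlinarith
            have hεx : ε * (1 + x) ≥ ε := by nlinarith [hx.1]
            have h9 : ‖J (U x) - c‖ ≤ d * b x + d * ((1 - 2 * ((n:ℝ) + 1 - x)) / (2 * b x)) := by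
              linarith
            have heq' : ‖U x - c‖ = d * b x + ε * (1 + x) := heq
            show ‖J (U x) - c‖ - ‖U x - c‖ < d * ((1 - 2 * ((n:ℝ) + 1 - x)) / (2 * b x)) + ε
            rw [heq']
            linarith
        exact key (right_mem_Icc.2 hT)
      -- let ε → 0
      have hfin : ‖U T - c‖ ≤ d * b T := by
        refine le_of_forall_pos_le_add (fun ε' hε' => ?_)
        have h1T : (0:ℝ) < 1 + T := by linarith
        have := hstep (ε' / (1 + T)) (div_pos hε' h1T)
        rwa [div_mul_cancel₀ _ h1T.ne'] at this
      have hcast : ((n + 1 : ℕ) : ℝ) = (n:ℝ) + 1 := by push_cast; ring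
      rw [hcast]
      exact hfin
  intro t ht n
  exact main n t ht
end

section
/- Let X be a real Banach space, J : X → X nonexpansive, and U : [0,∞) → X the differentiable solution of U'(t) = J(U(t)) − U(t) with U(0) = 0. Then for every n ≥ 1, ‖U(n)/n − J^n(0)/n‖ ≤ ‖J(0)‖/√n. Consequently v_n = J^n(0)/n converges (as n → ∞) if and only if U(t)/t converges (as t → ∞), and in that case the limits coincide. -/
set_option linter.unusedSectionVars false
set_option linter.unusedVariables false
set_option maxHeartbeats 1000000

open Filter Set MeasureTheory intervalIntegral Topology

section Helpers

variable {X : Type*} [NormedAddCommGroup X] [NormedSpace ℝ X]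

lemma sol_contract (J : X → X) (hJ : ∀ x y : X, ‖J x - J y‖ ≤ ‖x - y‖)
    (f g : ℝ → X)
    (hf : ∀ t ≥ (0:ℝ), HasDerivAt f (J (f t) - f t) t)
    (hg : ∀ t ≥ (0:ℝ), HasDerivAt g (J (g t) - g t) t) :
    ∀ t ≥ (0:ℝ), ‖f t - g t‖ ≤ ‖f 0 - g 0‖ := by
  intro T hT
  have hD : ∀ x ≥ (0:ℝ), HasDerivAt (fun x => Real.exp x • (f x - g x))
      (Real.exp x • (J (f x) - J (g x))) x := by
    intro x hx
    have h := (Real.hasDerivAt_exp x).smul ((hf x hx).sub (hg x hx))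
    convert h using 1
    · rfl
    rw [Pi.sub_apply, ← smul_add]
    congr 1
    abel
  have key := norm_le_gronwallBound_of_norm_deriv_right_le
    (f := fun x => Real.exp x • (f x - g x))
    (f' := fun x => Real.exp x • (J (f x) - J (g x)))
    (δ := ‖f 0 - g 0‖) (K := 1) (ε := 0) (a := 0) (b := T)
    (fun x hx => ((hD x hx.1).continuousAt.continuousWithinAt))
    (fun x hx => (hD x hx.1).hasDerivWithinAt)
    (by simp)
    (fun x hx => by
      rw [norm_smul, norm_smul, Real.norm_eq_abs, abs_of_pos (Real.exp_pos x)]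
      have := hJ (f x) (g x)
      nlinarith [Real.exp_pos x, norm_nonneg (f x - g x)])
  have h2 := key T ⟨hT, le_rfl⟩
  rw [gronwallBound_ε0, norm_smul, Real.norm_eq_abs, abs_of_pos (Real.exp_pos T)] at h2
  have hE := Real.exp_pos T
  rw [sub_zero, one_mul] at h2
  calc ‖f T - g T‖ = (Real.exp T * ‖f T - g T‖) / Real.exp T := by field_simp
    _ ≤ (‖f 0 - g 0‖ * Real.exp T) / Real.exp T := by gcongr
    _ = ‖f 0 - g 0‖ := by field_simp

lemma U_shift (J : X → X) (hJ : ∀ x y : X, ‖J x - J y‖ ≤ ‖x - y‖)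
    (U : ℝ → X) (hU : ∀ t ≥ (0 : ℝ), HasDerivAt U (J (U t) - U t) t) (hU0 : U 0 = 0) :
    ∀ t ≥ (0:ℝ), ∀ h ≥ (0:ℝ), ‖U (t + h) - U t‖ ≤ ‖U h‖ := by
  intro t ht h hh
  have hg : ∀ s ≥ (0:ℝ), HasDerivAt (fun s => U (s + h)) (J (U (s + h)) - U (s + h)) s :=
    fun s hs => (hU (s + h) (by linarith)).comp_add_const s h
  have := sol_contract J hJ (fun s => U (s + h)) U hg hU t ht
  simpa [hU0, zero_add] using this

lemma U_deriv_norm (J : X → X) (hJ : ∀ x y : X, ‖J x - J y‖ ≤ ‖x - y‖)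
    (U : ℝ → X) (hU : ∀ t ≥ (0 : ℝ), HasDerivAt U (J (U t) - U t) t) (hU0 : U 0 = 0) :
    ∀ t ≥ (0:ℝ), ‖J (U t) - U t‖ ≤ ‖J 0‖ := by
  intro t ht
  -- limit of slopes from the right at t
  have h1 : Tendsto (fun x => ‖slope U t x‖) (𝓝[>] t) (𝓝 ‖J (U t) - U t‖) := by
    have := (hasDerivAt_iff_tendsto_slope.1 (hU t ht)).mono_left
      (nhdsWithin_mono t (fun x hx => ne_of_gt hx))
    exact (continuous_norm.tendsto _).comp this
  have h0 : Tendsto (fun h : ℝ => ‖slope U 0 h‖) (𝓝[>] 0) (𝓝 ‖J 0‖) := by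
    have := (hasDerivAt_iff_tendsto_slope.1 (hU 0 le_rfl)).mono_left
      (nhdsWithin_mono 0 (fun x hx => ne_of_gt hx))
    have h2 := (continuous_norm.tendsto _).comp this
    rw [hU0, sub_zero] at h2
    exact h2
  have h2 : Tendsto (fun x => ‖slope U 0 (x - t)‖) (𝓝[>] t) (𝓝 ‖J 0‖) := by
    apply h0.comp
    have : Tendsto (fun x : ℝ => x - t) (𝓝[>] t) (𝓝[>] 0) := by
      apply tendsto_nhdsWithin_of_tendsto_nhds_of_eventually_within
      · have : Tendsto (fun x : ℝ => x - t) (𝓝 t) (𝓝 (t - t)) :=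
          (continuous_id.sub continuous_const).tendsto t
        simpa using this.mono_left nhdsWithin_le_nhds
      · filter_upwards [self_mem_nhdsWithin] with x hx
        simpa using hx
    exact this
  refine le_of_tendsto_of_tendsto h1 h2 ?_
  filter_upwards [self_mem_nhdsWithin] with x hx
  have hxt : t < x := hx
  rw [slope_def_module, slope_def_module, hU0, sub_zero, sub_zero, norm_smul, norm_smul]
  have hpos : (0:ℝ) < x - t := by linarith
  apply mul_le_mul_of_nonneg_left _ (norm_nonneg _)
  have := U_shift J hJ U hU hU0 t ht (x - t) hpos.le
  have hxx : t + (x - t) = x := by ring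
  rw [hxx] at this
  exact this

lemma U_lip (J : X → X) (hJ : ∀ x y : X, ‖J x - J y‖ ≤ ‖x - y‖)
    (U : ℝ → X) (hU : ∀ t ≥ (0 : ℝ), HasDerivAt U (J (U t) - U t) t) (hU0 : U 0 = 0) :
    ∀ s ≥ (0:ℝ), ∀ t, s ≤ t → ‖U t - U s‖ ≤ ‖J 0‖ * (t - s) := by
  intro s hs t hst
  have := (convex_Icc s t).norm_image_sub_le_of_norm_hasDerivWithin_le
    (f := U) (f' := fun x => J (U x) - U x) (C := ‖J 0‖)
    (fun x hx => (hU x (le_trans hs hx.1)).hasDerivWithinAt)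
    (fun x hx => U_deriv_norm J hJ U hU hU0 x (le_trans hs hx.1))
    (left_mem_Icc.2 hst) (right_mem_Icc.2 hst)
  calc ‖U t - U s‖ ≤ ‖J 0‖ * ‖t - s‖ := this
    _ = ‖J 0‖ * (t - s) := by rw [Real.norm_eq_abs, abs_of_nonneg (by linarith)]

lemma iter_step (J : X → X) (hJ : ∀ x y : X, ‖J x - J y‖ ≤ ‖x - y‖) :
    ∀ n : ℕ, ‖J^[n+1] (0:X) - J^[n] 0‖ ≤ ‖J 0‖ := by
  intro n
  induction n with
  | zero => simp
  | succ n ih =>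
    simp only [Function.iterate_succ_apply'] at ih ⊢
    exact (hJ _ _).trans ih

lemma iter_norm (J : X → X) (hJ : ∀ x y : X, ‖J x - J y‖ ≤ ‖x - y‖) :
    ∀ n : ℕ, ‖J^[n] (0:X)‖ ≤ n * ‖J 0‖ := by
  intro n
  induction n with
  | zero => simp
  | succ n ih =>
    have h : J^[n+1] (0:X) = (J^[n+1] 0 - J^[n] 0) + J^[n] 0 := by abel
    calc ‖J^[n+1] (0:X)‖ ≤ ‖J^[n+1] (0:X) - J^[n] 0‖ + ‖J^[n] 0‖ := by
          conv_lhs => rw [h]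
          exact norm_add_le _ _
      _ ≤ ‖J 0‖ + n * ‖J 0‖ := add_le_add (iter_step J hJ n) ih
      _ = (n+1 : ℕ) * ‖J 0‖ := by push_cast; ring

lemma ftc_ineq [CompleteSpace X] (J : X → X) (hJ : ∀ x y : X, ‖J x - J y‖ ≤ ‖x - y‖)
    (U : ℝ → X) (hU : ∀ t ≥ (0 : ℝ), HasDerivAt U (J (U t) - U t) t) (hU0 : U 0 = 0)
    (n : ℕ) (t : ℝ) (ht : 0 ≤ t) :
    Real.exp t * ‖U t - J^[n+1] 0‖ ≤
      ‖J^[n+1] (0:X)‖ + ∫ r in (0:ℝ)..t, Real.exp r * ‖U r - J^[n] 0‖ := by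
  set c : X := J^[n+1] 0 with hc
  set b : X := J^[n] 0 with hb
  have hcb : c = J b := Function.iterate_succ_apply' J n 0
  have hJL : LipschitzWith 1 J := LipschitzWith.of_dist_le_mul (fun x y => by
    rw [dist_eq_norm, dist_eq_norm]; simpa using hJ x y)
  have hUc' : ContinuousOn U (uIcc 0 t) := by
    rw [uIcc_of_le ht]
    exact fun x hx => ((hU x hx.1).continuousAt.continuousWithinAt)
  have hF : ∀ r ∈ uIcc (0:ℝ) t, HasDerivAt (fun r => Real.exp r • (U r - c))
      (Real.exp r • (J (U r) - c)) r := by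
    intro r hr
    rw [uIcc_of_le ht] at hr
    have h := (Real.hasDerivAt_exp r).smul ((hU r hr.1).sub_const c)
    convert h using 1
    · rfl
    rw [← smul_add]
    congr 1
    abel
  have hcont : ContinuousOn (fun r => Real.exp r • (J (U r) - c)) (uIcc 0 t) :=
    (Real.continuous_exp.continuousOn).smul
      ((hJL.continuous.comp_continuousOn hUc').sub continuousOn_const)
  have hFTC := intervalIntegral.integral_eq_sub_of_hasDerivAt hF hcont.intervalIntegrable
  have hle : ∀ r ∈ Icc (0:ℝ) t, ‖Real.exp r • (J (U r) - c)‖ ≤ Real.exp r * ‖U r - b‖ := by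
    intro r hr
    rw [norm_smul, Real.norm_eq_abs, abs_of_pos (Real.exp_pos r), hcb]
    exact mul_le_mul_of_nonneg_left (hJ _ _) (Real.exp_pos r).le
  have hint1 : IntervalIntegrable (fun r => Real.exp r * ‖U r - b‖) volume 0 t :=
    ((Real.continuous_exp.continuousOn).mul
      ((hUc'.sub continuousOn_const).norm)).intervalIntegrable
  have hnorm : ‖∫ r in (0:ℝ)..t, Real.exp r • (J (U r) - c)‖ ≤
      ∫ r in (0:ℝ)..t, Real.exp r * ‖U r - b‖ :=
    calc ‖∫ r in (0:ℝ)..t, Real.exp r • (J (U r) - c)‖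
        ≤ ∫ r in (0:ℝ)..t, ‖Real.exp r • (J (U r) - c)‖ :=
          intervalIntegral.norm_integral_le_integral_norm ht
      _ ≤ ∫ r in (0:ℝ)..t, Real.exp r * ‖U r - b‖ :=
          intervalIntegral.integral_mono_on ht hcont.norm.intervalIntegrable hint1 hle
  have hF0 : ‖Real.exp (0:ℝ) • (U 0 - c)‖ = ‖c‖ := by simp [hU0]
  have hFt : ‖Real.exp t • (U t - c)‖ = Real.exp t * ‖U t - c‖ := by
    rw [norm_smul, Real.norm_eq_abs, abs_of_pos (Real.exp_pos t)]
  have htri := norm_sub_norm_le (Real.exp t • (U t - c)) (Real.exp (0:ℝ) • (U 0 - c))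
  rw [← hFTC] at htri
  linarith

-- integral computation: ∫_0^t e^r ((r-n)²+r) dr = e^t ((t-n-1)²+t) - (n+1)²
lemma int_exp_q (n : ℕ) (t : ℝ) (ht : 0 ≤ t) :
    ∫ r in (0:ℝ)..t, Real.exp r * ((r - n)^2 + r)
      = Real.exp t * ((t - (n+1))^2 + t) - ((n:ℝ)+1)^2 := by
  have hG : ∀ r ∈ uIcc (0:ℝ) t, HasDerivAt (fun r => Real.exp r * ((r - ((n:ℝ)+1))^2 + r))
      (Real.exp r * ((r - n)^2 + r)) r := by
    intro r _
    have h1 : HasDerivAt (fun r : ℝ => (r - ((n:ℝ)+1))^2 + r) (2*(r - ((n:ℝ)+1)) + 1) r := by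
      have h2 : HasDerivAt (fun r : ℝ => (r - ((n:ℝ)+1))^2) (2*(r - ((n:ℝ)+1))) r := by
        have := ((hasDerivAt_id r).sub_const ((n:ℝ)+1)).pow 2
        exact this.congr_deriv (by simp)
      exact h2.add (hasDerivAt_id r)
    have := (Real.hasDerivAt_exp r).mul h1
    exact this.congr_deriv (by ring)
  have h := intervalIntegral.integral_eq_sub_of_hasDerivAt hG (by
    apply ContinuousOn.intervalIntegrable
    exact (Real.continuous_exp.continuousOn).mul (by fun_prop))
  rw [h]
  norm_num
  ring

lemma int_exp (t : ℝ) : ∫ r in (0:ℝ)..t, Real.exp r = Real.exp t - 1 := by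
  simpa using integral_exp (a := 0) (b := t)

lemma cs_calc (A B : ℝ) (hA0 : 0 < A) (hB0 : 0 < B) :
    (2 * Real.sqrt (A / B))⁻¹ * (A + (A / B) * B) = Real.sqrt A * Real.sqrt B := by
  have h1 : (A / B) * B = A := div_mul_cancel₀ A hB0.ne'
  have hsA : 0 < Real.sqrt A := Real.sqrt_pos.2 hA0
  have hsB : 0 < Real.sqrt B := Real.sqrt_pos.2 hB0
  have hAsq : Real.sqrt A * Real.sqrt A = A := Real.mul_self_sqrt hA0.le
  rw [h1, Real.sqrt_div hA0.le, show A + A = 2 * (Real.sqrt A * Real.sqrt A) by rw [hAsq]; ring]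
  field_simp

lemma key_est [CompleteSpace X] (J : X → X) (hJ : ∀ x y : X, ‖J x - J y‖ ≤ ‖x - y‖)
    (U : ℝ → X) (hU : ∀ t ≥ (0 : ℝ), HasDerivAt U (J (U t) - U t) t) (hU0 : U 0 = 0) :
    ∀ n : ℕ, ∀ t ≥ (0:ℝ), ‖U t - J^[n] 0‖ ≤ ‖J 0‖ * Real.sqrt ((t - n)^2 + t) := by
  intro n
  induction n with
  | zero =>
    intro t ht
    have h1 : ‖U t - J^[0] (0:X)‖ = ‖U t‖ := by simp
    have h2 := U_lip J hJ U hU hU0 0 le_rfl t ht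
    rw [hU0, sub_zero, sub_zero] at h2
    rw [h1]
    refine h2.trans ?_
    have ht2 : t ≤ Real.sqrt ((t - (0:ℕ))^2 + t) := by
      push_cast
      rw [sub_zero]
      calc t = Real.sqrt (t^2) := (Real.sqrt_sq ht).symm
        _ ≤ _ := Real.sqrt_le_sqrt (by linarith)
    exact mul_le_mul_of_nonneg_left ht2 (norm_nonneg _)
  | succ n ih =>
    intro t ht
    set m : ℝ := (n:ℝ) + 1 with hm
    have hm1 : (1:ℝ) ≤ m := by
      have : (0:ℝ) ≤ n := Nat.cast_nonneg n
      rw [hm]; linarith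
    have hcast : ((n+1 : ℕ) : ℝ) = m := by rw [hm]; push_cast; ring
    rw [hcast]
    rcases eq_or_lt_of_le ht with rfl | htpos
    · -- t = 0
      rw [hU0, zero_sub, norm_neg]
      have hsq : ((0:ℝ) - m)^2 + 0 = m^2 := by ring
      rw [hsq, Real.sqrt_sq (by linarith)]
      calc ‖J^[n+1] (0:X)‖ ≤ (n+1 : ℕ) * ‖J 0‖ := iter_norm J hJ (n+1)
        _ = ‖J 0‖ * m := by rw [hcast]; ring
    · -- t > 0
      set E := Real.exp t with hE
      set s := (t - m)^2 + t with hs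
      set B := E - 1 with hB
      set A := E * s - m^2 with hA
      have hs0 : 0 ≤ s := by nlinarith [sq_nonneg (t - m)]
      have hEpos : (0:ℝ) < E := Real.exp_pos t
      have hB0 : 0 < B := by
        have : (1:ℝ) < E := Real.one_lt_exp_iff.2 htpos
        linarith
      have hint_q : IntervalIntegrable (fun r => Real.exp r * ((r - n)^2 + r)) volume 0 t :=
        Continuous.intervalIntegrable (by fun_prop) 0 t
      have hIq : ∫ r in (0:ℝ)..t, Real.exp r * ((r - n)^2 + r) = A := by
        rw [int_exp_q n t ht, hA, hs, hm, hE]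
      have hA0 : 0 < A := by
        rw [← hIq]
        apply intervalIntegral.intervalIntegral_pos_of_pos_on hint_q _ htpos
        intro x hx
        have hx0 : (0:ℝ) < x := hx.1
        have hq : 0 < (x - (n:ℝ))^2 + x := by nlinarith [sq_nonneg (x - (n:ℝ))]
        exact mul_pos (Real.exp_pos x) hq
      set lam := A / B with hlam
      have hlam0 : 0 < lam := div_pos hA0 hB0
      -- continuity facts
      have hUcont : ContinuousOn U (Icc 0 t) :=
        fun x hx => (hU x hx.1).continuousAt.continuousWithinAt
      have hint_l : IntervalIntegrable (fun r => Real.exp r * ‖U r - J^[n] 0‖) volume 0 t := by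
        apply ContinuousOn.intervalIntegrable
        rw [uIcc_of_le ht]
        exact (Real.continuous_exp.continuousOn).mul ((hUcont.sub continuousOn_const).norm)
      have hsqcont : Continuous (fun r : ℝ => Real.sqrt ((r - n)^2 + r)) := by fun_prop
      have hint_sq : IntervalIntegrable (fun r => Real.exp r * Real.sqrt ((r - n)^2 + r))
          volume 0 t := Continuous.intervalIntegrable (Real.continuous_exp.mul hsqcont) 0 t
      -- Step 1 : compare with IH
      have hstep1 : ∫ r in (0:ℝ)..t, Real.exp r * ‖U r - J^[n] 0‖
          ≤ ‖J 0‖ * ∫ r in (0:ℝ)..t, Real.exp r * Real.sqrt ((r - n)^2 + r) := by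
        rw [← intervalIntegral.integral_const_mul]
        apply intervalIntegral.integral_mono_on ht hint_l
          (Continuous.intervalIntegrable (by fun_prop) 0 t)
        intro r hr
        have := ih r hr.1
        calc Real.exp r * ‖U r - J^[n] 0‖
            ≤ Real.exp r * (‖J 0‖ * Real.sqrt ((r - n)^2 + r)) :=
              mul_le_mul_of_nonneg_left this (Real.exp_pos r).le
          _ = ‖J 0‖ * (Real.exp r * Real.sqrt ((r - n)^2 + r)) := by ring
      -- Step 2 : sqrt pointwise bound and integration
      have hsl : 0 < Real.sqrt lam := Real.sqrt_pos.2 hlam0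
      have hstep2 : ∫ r in (0:ℝ)..t, Real.exp r * Real.sqrt ((r - n)^2 + r)
          ≤ (2 * Real.sqrt lam)⁻¹ * (A + lam * B) := by
        have hcont2 : Continuous (fun r : ℝ =>
            (2 * Real.sqrt lam)⁻¹ * (Real.exp r * ((r - n)^2 + r) + lam * Real.exp r)) := by
          fun_prop
        have hmono := intervalIntegral.integral_mono_on ht hint_sq
          (hcont2.intervalIntegrable 0 t) ?_
        · have hsum : ∫ r in (0:ℝ)..t,
              (2 * Real.sqrt lam)⁻¹ * (Real.exp r * ((r - n)^2 + r) + lam * Real.exp r)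
              = (2 * Real.sqrt lam)⁻¹ * (A + lam * B) := by
            rw [intervalIntegral.integral_const_mul]
            congr 1
            rw [intervalIntegral.integral_add (g := fun x => lam * Real.exp x) hint_q
              ((continuous_const.mul Real.continuous_exp).intervalIntegrable 0 t),
              hIq, intervalIntegral.integral_const_mul, integral_exp, Real.exp_zero]
          rw [hsum] at hmono
          exact hmono
        · intro r hr
          have hq0 : 0 ≤ (r - n)^2 + r := by nlinarith [sq_nonneg (r - (n:ℝ)), hr.1]
          have h2 : 2 * Real.sqrt lam * Real.sqrt ((r - n)^2 + r) ≤ ((r - n)^2 + r) + lam := by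
            nlinarith [sq_nonneg (Real.sqrt ((r - n)^2 + r) - Real.sqrt lam),
              Real.sq_sqrt hq0, Real.sq_sqrt hlam0.le]
          have h1 : Real.sqrt ((r - n)^2 + r)
              ≤ (2 * Real.sqrt lam)⁻¹ * (((r - n)^2 + r) + lam) := by
            rw [inv_mul_eq_div, le_div_iff₀ (by positivity)]
            nlinarith [h2]
          calc Real.exp r * Real.sqrt ((r - n)^2 + r)
              ≤ Real.exp r * ((2 * Real.sqrt lam)⁻¹ * (((r - n)^2 + r) + lam)) :=
                mul_le_mul_of_nonneg_left h1 (Real.exp_pos r).le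
            _ = (2 * Real.sqrt lam)⁻¹ * (Real.exp r * ((r - n)^2 + r) + lam * Real.exp r) := by
                ring
      -- Step 3 : the value equals √A √B
      have hstep3 : (2 * Real.sqrt lam)⁻¹ * (A + lam * B) = Real.sqrt A * Real.sqrt B := by
        rw [hlam]
        exact cs_calc A B hA0 hB0
      -- Step 4 : assembling
      have hc : ‖J^[n+1] (0:X)‖ ≤ m * ‖J 0‖ := by
        have := iter_norm J hJ (n+1)
        rwa [hcast] at this
      have hkey2 : m + Real.sqrt A * Real.sqrt B ≤ E * Real.sqrt s := by
        set sa := Real.sqrt A with hsa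
        set sb := Real.sqrt B with hsb
        set ss := Real.sqrt s with hss
        have h1 : sa^2 = A := Real.sq_sqrt hA0.le
        have h2 : sb^2 = B := Real.sq_sqrt hB0.le
        have h3 : ss^2 = s := Real.sq_sqrt hs0
        have e1 : E = 1 + B := by rw [hB]; ring
        have e2 : E * s = m^2 + A := by rw [hA]; ring
        have hnn : 0 ≤ m + sa * sb := by positivity
        have hkey : 2 * m * (sa * sb) ≤ A + B * m^2 := by
          rw [← h1, ← h2]
          nlinarith [sq_nonneg (sa - m * sb)]
        have e4 : (sa * sb)^2 = A * B := by rw [mul_pow, h1, h2]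
        have hsq2 : (m + sa * sb)^2 ≤ (E * ss)^2 := by
          have e3 : (E * ss)^2 = E * (E * s) := by rw [mul_pow, h3]; ring
          rw [e3, e2, e1]
          nlinarith [hkey, e4]
        calc m + sa * sb = Real.sqrt ((m + sa * sb)^2) := (Real.sqrt_sq hnn).symm
          _ ≤ Real.sqrt ((E * ss)^2) := Real.sqrt_le_sqrt hsq2
          _ = E * ss := Real.sqrt_sq (by positivity)
      have hftc := ftc_ineq J hJ U hU hU0 n t ht
      have hfinal : E * ‖U t - J^[n+1] 0‖ ≤ E * (‖J 0‖ * Real.sqrt s) := by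
        calc E * ‖U t - J^[n+1] 0‖
            ≤ ‖J^[n+1] (0:X)‖ + ∫ r in (0:ℝ)..t, Real.exp r * ‖U r - J^[n] 0‖ := hftc
          _ ≤ m * ‖J 0‖ + ‖J 0‖ * (Real.sqrt A * Real.sqrt B) := by
              apply add_le_add hc
              refine hstep1.trans ?_
              exact mul_le_mul_of_nonneg_left (hstep2.trans_eq hstep3) (norm_nonneg _)
          _ = ‖J 0‖ * (m + Real.sqrt A * Real.sqrt B) := by ring
          _ ≤ ‖J 0‖ * (E * Real.sqrt s) := mul_le_mul_of_nonneg_left hkey2 (norm_nonneg _)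
          _ = E * (‖J 0‖ * Real.sqrt s) := by ring
      exact le_of_mul_le_mul_left hfinal hEpos

end Helpers

open Filter

/-- if `U` solves `U'(t) = J(U(t)) - U(t)` with `U(0) = 0` for a
nonexpansive `J`, then `‖U(n)/n - J^n(0)/n‖ ≤ ‖J 0‖/√n` for all `n ≥ 1`; consequently
`v_n = J^n(0)/n` converges to `l` iff `U(t)/t` converges to `l` as `t → ∞`. -/
theorem normalized_solution_close_to_vn
    {X : Type*} [NormedAddCommGroup X] [NormedSpace ℝ X] [CompleteSpace X]
    (J : X → X) (hJ : ∀ x y : X, ‖J x - J y‖ ≤ ‖x - y‖)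
    (U : ℝ → X)
    (hU : ∀ t ≥ (0 : ℝ), HasDerivAt U (J (U t) - U t) t)
    (hU0 : U 0 = 0) :
    (∀ n : ℕ, 1 ≤ n →
        ‖(n : ℝ)⁻¹ • U (n : ℝ) - (n : ℝ)⁻¹ • J^[n] 0‖ ≤ ‖J 0‖ / Real.sqrt n) ∧
    (∀ l : X,
      Tendsto (fun n : ℕ => (n : ℝ)⁻¹ • J^[n] 0) atTop (nhds l) ↔
      Tendsto (fun t : ℝ => t⁻¹ • U t) atTop (nhds l)) := by
  have parta : ∀ n : ℕ, 1 ≤ n →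
      ‖(n : ℝ)⁻¹ • U (n : ℝ) - (n : ℝ)⁻¹ • J^[n] 0‖ ≤ ‖J 0‖ / Real.sqrt n := by
    intro n hn
    have hn0 : (0:ℝ) < n := by exact_mod_cast hn
    have hke := key_est J hJ U hU hU0 n n hn0.le
    rw [show ((n:ℝ) - n)^2 + n = (n:ℝ) by ring] at hke
    rw [← smul_sub, norm_smul, Real.norm_eq_abs, abs_of_pos (inv_pos.2 hn0), div_eq_mul_inv]
    calc (n:ℝ)⁻¹ * ‖U n - J^[n] 0‖
        ≤ (n:ℝ)⁻¹ * (‖J 0‖ * Real.sqrt n) :=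
          mul_le_mul_of_nonneg_left hke (inv_pos.2 hn0).le
      _ = ‖J 0‖ * ((n:ℝ)⁻¹ * Real.sqrt n) := by ring
      _ = ‖J 0‖ * (Real.sqrt n)⁻¹ := by
          rw [inv_mul_eq_div, Real.sqrt_div_self]
  refine ⟨parta, ?_⟩
  -- the difference between U(n)/n and v_n tends to 0
  have hdiff : Tendsto (fun n : ℕ => (n:ℝ)⁻¹ • U n - (n:ℝ)⁻¹ • J^[n] 0) atTop (𝓝 0) := by
    apply squeeze_zero_norm' (a := fun n : ℕ => ‖J 0‖ / Real.sqrt n)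
    · filter_upwards [eventually_ge_atTop 1] with n hn
      exact parta n hn
    · have h1 : Tendsto (fun n : ℕ => ((n:ℝ))⁻¹) atTop (𝓝 0) :=
        tendsto_inv_atTop_zero.comp tendsto_natCast_atTop_atTop
      have h2 : Tendsto (fun n : ℕ => Real.sqrt ((n:ℝ)⁻¹)) atTop (𝓝 0) := by
        have := (Real.continuous_sqrt.tendsto 0).comp h1
        simpa [Function.comp_def] using this
      have h3 : Tendsto (fun n : ℕ => ‖J 0‖ * Real.sqrt ((n:ℝ)⁻¹)) atTop (𝓝 0) := by
        simpa using h2.const_mul ‖J 0‖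
      refine h3.congr (fun n => ?_)
      rw [Real.sqrt_inv, div_eq_mul_inv]
  intro l
  constructor
  · -- v_n → l  ⇒  U(t)/t → l
    intro hv
    have hUn : Tendsto (fun n : ℕ => (n:ℝ)⁻¹ • U n) atTop (𝓝 l) := by
      have := hdiff.add hv
      rw [zero_add] at this
      refine this.congr (fun n => ?_)
      abel
    have hUnorm : Tendsto (fun n : ℕ => ‖(n:ℝ)⁻¹ • U n - l‖) atTop (𝓝 0) :=
      tendsto_iff_norm_sub_tendsto_zero.1 hUn
    have hfloor : Tendsto (fun t : ℝ => ‖((⌊t⌋₊:ℝ))⁻¹ • U (⌊t⌋₊:ℝ) - l‖) atTop (𝓝 0) :=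
      hUnorm.comp tendsto_nat_floor_atTop
    have hb1 : Tendsto (fun t : ℝ => 2 * ‖J 0‖ * t⁻¹) atTop (𝓝 0) := by
      simpa using tendsto_inv_atTop_zero.const_mul (2 * ‖J 0‖)
    have hbound : ∀ᶠ t : ℝ in atTop, ‖t⁻¹ • U t - l‖ ≤
        2 * ‖J 0‖ * t⁻¹ + ‖((⌊t⌋₊:ℝ))⁻¹ • U (⌊t⌋₊:ℝ) - l‖ := by
      filter_upwards [eventually_ge_atTop (1:ℝ)] with t ht
      set n : ℕ := ⌊t⌋₊ with hn
      have ht0 : (0:ℝ) < t := by linarith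
      have hn1 : 1 ≤ n := Nat.le_floor (by exact_mod_cast ht)
      have hnpos : (0:ℝ) < n := by exact_mod_cast hn1
      have hnt : (n:ℝ) ≤ t := Nat.floor_le ht0.le
      have htn1 : t < (n:ℝ) + 1 := Nat.lt_floor_add_one t
      have hUtn : ‖U t - U n‖ ≤ ‖J 0‖ * (t - n) :=
        U_lip J hJ U hU hU0 n hnpos.le t hnt
      have hUn' : ‖U (n:ℝ)‖ ≤ ‖J 0‖ * n := by
        have := U_lip J hJ U hU hU0 0 le_rfl (n:ℝ) hnpos.le
        rw [hU0, sub_zero, sub_zero] at this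
        exact this
      have hdecomp : t⁻¹ • U t - l =
          t⁻¹ • (U t - U n) + (t⁻¹ - (n:ℝ)⁻¹) • U (n:ℝ) + ((n:ℝ)⁻¹ • U (n:ℝ) - l) := by
        rw [smul_sub, sub_smul]
        abel
      rw [hdecomp]
      have h1 : ‖t⁻¹ • (U t - U (n:ℝ))‖ ≤ ‖J 0‖ * t⁻¹ := by
        rw [norm_smul, Real.norm_eq_abs, abs_of_pos (inv_pos.2 ht0)]
        calc t⁻¹ * ‖U t - U (n:ℝ)‖ ≤ t⁻¹ * (‖J 0‖ * (t - n)) :=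
              mul_le_mul_of_nonneg_left hUtn (inv_pos.2 ht0).le
          _ ≤ t⁻¹ * (‖J 0‖ * 1) := by
              apply mul_le_mul_of_nonneg_left _ (inv_pos.2 ht0).le
              apply mul_le_mul_of_nonneg_left _ (norm_nonneg _)
              linarith
          _ = ‖J 0‖ * t⁻¹ := by ring
      have h2 : ‖(t⁻¹ - (n:ℝ)⁻¹) • U (n:ℝ)‖ ≤ ‖J 0‖ * t⁻¹ := by
        rw [norm_smul, Real.norm_eq_abs]
        have habs : |t⁻¹ - (n:ℝ)⁻¹| = (t - n) / (t * n) := by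
          have hmono : t⁻¹ ≤ (n:ℝ)⁻¹ := inv_anti₀ hnpos hnt
          rw [abs_sub_comm, abs_of_nonneg (by linarith), inv_sub_inv hnpos.ne' ht0.ne',
            mul_comm]
        rw [habs]
        calc (t - n) / (t * n) * ‖U (n:ℝ)‖ ≤ (t - n) / (t * n) * (‖J 0‖ * n) := by
              apply mul_le_mul_of_nonneg_left hUn'
              exact div_nonneg (by linarith) (by positivity)
          _ = ‖J 0‖ * ((t - n) / t) := by field_simp
          _ ≤ ‖J 0‖ * (1 / t) := by
              have hle : (t - (n:ℝ)) / t ≤ 1 / t :=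
                (div_le_div_iff_of_pos_right ht0).2 (by linarith)
              exact mul_le_mul_of_nonneg_left hle (norm_nonneg _)
          _ = ‖J 0‖ * t⁻¹ := by rw [one_div]
      calc ‖t⁻¹ • (U t - U (n:ℝ)) + (t⁻¹ - (n:ℝ)⁻¹) • U (n:ℝ) + ((n:ℝ)⁻¹ • U (n:ℝ) - l)‖
          ≤ ‖t⁻¹ • (U t - U (n:ℝ)) + (t⁻¹ - (n:ℝ)⁻¹) • U (n:ℝ)‖ + ‖(n:ℝ)⁻¹ • U (n:ℝ) - l‖ :=
            norm_add_le _ _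
        _ ≤ (‖t⁻¹ • (U t - U (n:ℝ))‖ + ‖(t⁻¹ - (n:ℝ)⁻¹) • U (n:ℝ)‖) + ‖(n:ℝ)⁻¹ • U (n:ℝ) - l‖ := by
            gcongr
            exact norm_add_le _ _
        _ ≤ (‖J 0‖ * t⁻¹ + ‖J 0‖ * t⁻¹) + ‖(n:ℝ)⁻¹ • U (n:ℝ) - l‖ := by gcongr
        _ = 2 * ‖J 0‖ * t⁻¹ + ‖((n:ℝ))⁻¹ • U ((n:ℝ)) - l‖ := by ring_nf
    have hsum : Tendsto (fun t : ℝ => 2 * ‖J 0‖ * t⁻¹ + ‖((⌊t⌋₊:ℝ))⁻¹ • U (⌊t⌋₊:ℝ) - l‖)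
        atTop (𝓝 0) := by simpa using hb1.add hfloor
    have hsq := squeeze_zero_norm' hbound hsum
    rw [tendsto_iff_norm_sub_tendsto_zero]
    exact (tendsto_iff_norm_sub_tendsto_zero.1 hsq).congr (fun t => by rw [sub_zero])
  · -- U(t)/t → l ⇒ v_n → l
    intro hreal
    have hUn : Tendsto (fun n : ℕ => ((n:ℝ))⁻¹ • U ((n:ℕ):ℝ)) atTop (𝓝 l) :=
      hreal.comp tendsto_natCast_atTop_atTop
    have := hUn.sub hdiff
    rw [sub_zero] at this
    refine this.congr (fun n => ?_)
    abel
end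

section
/- (Eulerian exponential formula) Let X be a real Banach space, J : X → X nonexpansive, A = I − J, U_0 ∈ X, and U : [0,∞) → X the differentiable solution of U'(t) = −A(U(t)) with U(0) = U_0. For t ≥ 0 and m ≥ 1 define U_t^m(U_0) = (I − (t/m)A)^m (U_0), i.e. the m-th iterate of the map x ↦ x − (t/m)(x − J(x)) applied to U_0. Then for every m ≥ t, ‖U_t^m(U_0) − U(t)‖ ≤ ‖U_0 − J(U_0)‖ · t/√m. In particular, for every fixed t ≥ 0, (I − (t/m)A)^m(U_0) converges strongly to U(t) as m → ∞. -/
open Filter Set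

set_option maxHeartbeats 1600000

/-- Positivity of `(a - s)^2 + s` for `a ≥ 1`, `s ≥ 0`. -/
private lemma Qpos {a s : ℝ} (ha : 1 ≤ a) (hs : 0 ≤ s) : 0 < (a - s) ^ 2 + s := by
  rcases eq_or_lt_of_le hs with h | h
  · rw [← h]; nlinarith
  · nlinarith [sq_nonneg (a - s)]

/-- The key real inequality behind the Crandall–Liggett style estimate. -/
private lemma keyineq {a s : ℝ} (ha : 1 ≤ a) (hs : 0 ≤ s) :
    Real.sqrt ((a - 1 - s) ^ 2 + s) ≤
      Real.sqrt ((a - s) ^ 2 + s) + (s - a + 1 / 2) / Real.sqrt ((a - s) ^ 2 + s) := by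
  have hQ : 0 < (a - s) ^ 2 + s := Qpos ha hs
  have hsq : 0 < Real.sqrt ((a - s) ^ 2 + s) := Real.sqrt_pos.mpr hQ
  have e : Real.sqrt ((a - s) ^ 2 + s) * Real.sqrt ((a - s) ^ 2 + s) = (a - s) ^ 2 + s :=
    Real.mul_self_sqrt hQ.le
  have hN : 0 ≤ ((a - s) ^ 2 + s) + (s - a + 1 / 2) := by nlinarith [sq_nonneg (a - s - 1 / 2)]
  have key : Real.sqrt ((a - 1 - s) ^ 2 + s) * Real.sqrt ((a - s) ^ 2 + s) ≤
      ((a - s) ^ 2 + s) + (s - a + 1 / 2) := by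
    rw [← Real.sqrt_mul (by positivity)]
    calc Real.sqrt (((a - 1 - s) ^ 2 + s) * ((a - s) ^ 2 + s))
        ≤ Real.sqrt ((((a - s) ^ 2 + s) + (s - a + 1 / 2)) ^ 2) := by
          apply Real.sqrt_le_sqrt
          nlinarith [sq_nonneg (a - s - 1 / 2), sq_nonneg (a - s), hs]
      _ = ((a - s) ^ 2 + s) + (s - a + 1 / 2) := Real.sqrt_sq hN
  have h2 : Real.sqrt ((a - s) ^ 2 + s) + (s - a + 1 / 2) / Real.sqrt ((a - s) ^ 2 + s) =
      (((a - s) ^ 2 + s) + (s - a + 1 / 2)) / Real.sqrt ((a - s) ^ 2 + s) := by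
    field_simp
    linarith [e]
  rw [h2, le_div_iff₀ hsq]
  exact key

/-- Dini-derivative fencing lemma: if `W' = F ∘ W - W` and `B` fences the
one-sided derivative condition, then `‖c - W s‖ ≤ B s`. -/
private lemma fencing {X : Type*} [NormedAddCommGroup X] [NormedSpace ℝ X]
    {W : ℝ → X} {F : X → X} {b : ℝ}
    (hW : ∀ s ∈ Set.Icc (0:ℝ) b, HasDerivAt W (F (W s) - W s) s)
    (c : X) {B B' : ℝ → ℝ}
    (hB : ∀ s ∈ Set.Icc (0:ℝ) b, HasDerivAt B (B' s) s)
    (h0 : ‖c - W 0‖ ≤ B 0)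
    (hbound : ∀ s ∈ Set.Ico (0:ℝ) b, B s ≤ ‖c - W s‖ →
      ‖c - F (W s)‖ - ‖c - W s‖ ≤ B' s) :
    ∀ s ∈ Set.Icc (0:ℝ) b, ‖c - W s‖ ≤ B s := by
  intro s hs
  have hcont : ContinuousOn (fun σ => c - W σ) (Set.Icc 0 b) := fun σ hσ =>
    (continuousAt_const.sub (hW σ hσ).continuousAt).continuousWithinAt
  -- the liminf right-slope estimate
  have hf' : ∀ x ∈ Set.Ico (0:ℝ) b, ∀ r,
      (‖c - F (W x)‖ - ‖c - W x‖) < r →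
      ∃ᶠ z in nhdsWithin x (Set.Ioi x), slope (norm ∘ fun σ => c - W σ) x z < r := by
    intro x hx r hr
    have hx' : x ∈ Set.Icc (0:ℝ) b := Set.Ico_subset_Icc_self hx
    set v : X := F (W x) - W x with hv
    have hder : HasDerivAt (fun σ => c - W σ) (-v) x := (hW x hx').const_sub c
    have hslope : Tendsto (slope (fun σ => c - W σ) x) (nhdsWithin x (Set.Ioi x)) (nhds (-v)) :=
      (hasDerivAt_iff_tendsto_slope.mp hder).mono_left
        (nhdsWithin_mono x (fun z hz => Set.mem_compl_singleton_iff.mpr (ne_of_gt hz)))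
    have hnorm : Tendsto (fun z => ‖slope (fun σ => c - W σ) x z + v‖)
        (nhdsWithin x (Set.Ioi x)) (nhds 0) := by
      have h1 := (hslope.add (tendsto_const_nhds (x := v))).norm
      simpa using h1
    have hev : ∀ᶠ z in nhdsWithin x (Set.Ioi x),
        slope (norm ∘ fun σ => c - W σ) x z < r := by
      have h2 : (0:ℝ) < r - (‖c - F (W x)‖ - ‖c - W x‖) := by linarith
      filter_upwards [hnorm.eventually (gt_mem_nhds h2),
        Ioo_mem_nhdsGT_of_mem (Set.left_mem_Ico.mpr (lt_add_one x)),
        self_mem_nhdsWithin] with z hz1 hz2 hz3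
      have hzx : x < z := hz3
      have hpos : 0 < z - x := by linarith
      have hle1 : z - x ≤ 1 := by
        rcases hz2 with ⟨_, h⟩; linarith
      set S := slope (fun σ => c - W σ) x z with hS
      have hfz : c - W z = (c - W x) + (z - x) • S := by
        rw [hS, slope_def_module, smul_inv_smul₀ (sub_ne_zero.mpr hzx.ne')]
        abel
      have hid : (c - W x) + (z - x) • S
          = ((1 - (z - x)) • (c - W x) + (z - x) • (c - F (W x))) + (z - x) • (S + v) := by
        rw [hv]; module
      have hnz : ‖c - W z‖ ≤ (1 - (z - x)) * ‖c - W x‖ + (z - x) * ‖c - F (W x)‖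
          + (z - x) * ‖S + v‖ := by
        rw [hfz, hid]
        refine (norm_add_le _ _).trans ?_
        have h3 : ‖(1 - (z - x)) • (c - W x) + (z - x) • (c - F (W x))‖
            ≤ (1 - (z - x)) * ‖c - W x‖ + (z - x) * ‖c - F (W x)‖ := by
          refine (norm_add_le _ _).trans ?_
          rw [norm_smul, norm_smul, Real.norm_of_nonneg (by linarith),
            Real.norm_of_nonneg hpos.le]
        have h4 : ‖(z - x) • (S + v)‖ = (z - x) * ‖S + v‖ := by
          rw [norm_smul, Real.norm_of_nonneg hpos.le]
        linarith
      have hslope_le : slope (norm ∘ fun σ => c - W σ) x z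
          ≤ (‖c - F (W x)‖ - ‖c - W x‖) + ‖S + v‖ := by
        have : slope (norm ∘ fun σ => c - W σ) x z = (‖c - W z‖ - ‖c - W x‖) / (z - x) := by
          rw [slope_def_field]; rfl
        rw [this, div_le_iff₀ hpos]
        nlinarith [hnz]
      calc slope (norm ∘ fun σ => c - W σ) x z
          ≤ (‖c - F (W x)‖ - ‖c - W x‖) + ‖S + v‖ := hslope_le
        _ < r := by linarith [hz1]
    exact hev.frequently
  -- ε-perturbation
  have main : ∀ ε > (0:ℝ), ‖c - W s‖ ≤ B s + ε * (1 + s) := by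
    intro ε hε
    have hinit : ‖c - W 0‖ ≤ B 0 + ε * (1 + 0) := by nlinarith
    have hBcont : ContinuousOn (fun σ : ℝ => B σ + ε * (1 + σ)) (Set.Icc 0 b) :=
      fun σ hσ => ((hB σ hσ).continuousAt.add (by fun_prop)).continuousWithinAt
    have hBder : ∀ σ ∈ Set.Ico (0:ℝ) b,
        HasDerivWithinAt (fun σ : ℝ => B σ + ε * (1 + σ)) (B' σ + ε) (Set.Ici σ) σ := by
      intro σ hσ
      have h2 : HasDerivAt (fun σ : ℝ => ε * (1 + σ)) ε σ := by
        simpa using ((hasDerivAt_id σ).const_add (1:ℝ)).const_mul ε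
      exact ((hB σ (Set.Ico_subset_Icc_self hσ)).add h2).hasDerivWithinAt
    have hbd : ∀ σ ∈ Set.Ico (0:ℝ) b, ‖c - W σ‖ = B σ + ε * (1 + σ) →
        ‖c - F (W σ)‖ - ‖c - W σ‖ < B' σ + ε := by
      intro σ hσ heq
      have hσ0 : 0 ≤ σ := hσ.1
      have hεσ : 0 ≤ ε * (1 + σ) := mul_nonneg hε.le (by linarith)
      have hBle : B σ ≤ ‖c - W σ‖ := by rw [heq]; linarith
      have h5 := hbound σ hσ hBle
      have hεσ' : 0 < ε * (1 + σ) := mul_pos hε (by linarith)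
      nlinarith
    exact image_norm_le_of_liminf_right_slope_norm_lt_deriv_boundary
      (f := fun σ => c - W σ) (a := 0) (b := b)
      (f' := fun σ => ‖c - F (W σ)‖ - ‖c - W σ‖)
      (B := fun σ => B σ + ε * (1 + σ)) (B' := fun σ => B' σ + ε)
      hcont hf' hinit hBcont hBder hbd hs
  -- take ε → 0
  have h1s : (0:ℝ) < 1 + s := by linarith [hs.1]
  refine le_of_forall_pos_le_add fun ε hε => ?_
  have := main (ε / (1 + s)) (by positivity)
  calc ‖c - W s‖ ≤ B s + ε / (1 + s) * (1 + s) := this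
    _ = B s + ε := by field_simp

/-- Eulerian exponential formula: for a nonexpansive `J`, `A = I - J`,
and `U` the solution of `U' = -A(U)`, `U(0) = U₀`, the Euler iterates
`(I - (t/m)A)^m(U₀)` satisfy `‖(I - (t/m)A)^m(U₀) - U(t)‖ ≤ ‖U₀ - J U₀‖ t/√m`
whenever `m ≥ t`, and hence converge strongly to `U(t)` as `m → ∞`. -/
theorem eulerian_exponential_formula
    {X : Type*} [NormedAddCommGroup X] [NormedSpace ℝ X] [CompleteSpace X]
    (J : X → X) (hJ : ∀ x y : X, ‖J x - J y‖ ≤ ‖x - y‖)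
    (U₀ : X) (U : ℝ → X)
    (hU : ∀ s ≥ (0 : ℝ), HasDerivAt U (J (U s) - U s) s)
    (hU0 : U 0 = U₀)
    (t : ℝ) (ht : 0 ≤ t) :
    (∀ m : ℕ, 1 ≤ m → t ≤ (m : ℝ) →
      ‖(fun x => x - (t / (m : ℝ)) • (x - J x))^[m] U₀ - U t‖ ≤
        ‖U₀ - J U₀‖ * t / Real.sqrt m) ∧
    Tendsto (fun m : ℕ => (fun x => x - (t / (m : ℝ)) • (x - J x))^[m] U₀ )
      atTop (nhds (U t)) := by
  have part1 : ∀ m : ℕ, 1 ≤ m → t ≤ (m : ℝ) →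
      ‖(fun x => x - (t / (m : ℝ)) • (x - J x))^[m] U₀ - U t‖ ≤
        ‖U₀ - J U₀‖ * t / Real.sqrt m := by
    intro m hm hmt
    have hm0 : (0:ℝ) < m := by exact_mod_cast hm
    set l : ℝ := t / m with hl
    have hl0 : 0 ≤ l := div_nonneg ht hm0.le
    have hl1 : l ≤ 1 := by rw [hl, div_le_one hm0]; exact hmt
    set F : X → X := fun x => x - l • (x - J x) with hF
    -- F is nonexpansive
    have hFne : ∀ x y : X, ‖F x - F y‖ ≤ ‖x - y‖ := by
      intro x y
      have h : F x - F y = (1 - l) • (x - y) + l • (J x - J y) := by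
        simp only [hF]; module
      rw [h]
      refine (norm_add_le _ _).trans ?_
      rw [norm_smul, norm_smul, Real.norm_of_nonneg (by linarith), Real.norm_of_nonneg hl0]
      nlinarith [hJ x y, norm_nonneg (x - y)]
    set W : ℝ → X := fun s => U (l * s) with hWdef
    have hW : ∀ s ∈ Set.Icc (0:ℝ) (m:ℝ), HasDerivAt W (F (W s) - W s) s := by
      intro s hs
      have hls : 0 ≤ l * s := mul_nonneg hl0 hs.1
      have h1 := hU (l * s) hls
      have h2 : HasDerivAt (fun s : ℝ => l * s) l s := by
        simpa using (hasDerivAt_id s).const_mul l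
      have h3 : HasDerivAt W (l • (J (U (l * s)) - U (l * s))) s := h1.scomp s h2
      have h4 : F (W s) - W s = l • (J (U (l * s)) - U (l * s)) := by
        simp only [hF, hWdef]; module
      rw [h4]; exact h3
    set C : ℝ := l * ‖U₀ - J U₀‖ with hCdef
    have hC0 : 0 ≤ C := mul_nonneg hl0 (norm_nonneg _)
    have hFU₀ : ∀ x : X, ‖F x - x‖ = l * ‖x - J x‖ := by
      intro x
      have : F x - x = -(l • (x - J x)) := by simp only [hF]; module
      rw [this, norm_neg, norm_smul, Real.norm_of_nonneg hl0]
    -- iterates move by at most C each step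
    have hiter : ∀ k : ℕ, ∀ x y : X, ‖F^[k] x - F^[k] y‖ ≤ ‖x - y‖ := by
      intro k
      induction k with
      | zero => intro x y; simp
      | succ n ih =>
        intro x y
        rw [Function.iterate_succ_apply', Function.iterate_succ_apply']
        exact (hFne _ _).trans (ih x y)
    have htel : ∀ k : ℕ, ‖F^[k] U₀ - U₀‖ ≤ k * C := by
      intro k
      induction k with
      | zero => simp
      | succ n ih =>
        have h1 : ‖F^[n+1] U₀ - F^[n] U₀‖ ≤ C := by
          rw [Function.iterate_succ_apply]
          calc ‖F^[n] (F U₀) - F^[n] U₀‖ ≤ ‖F U₀ - U₀‖ := hiter n _ _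
            _ = C := by rw [hFU₀ U₀, hCdef]
        calc ‖F^[n+1] U₀ - U₀‖ ≤ ‖F^[n+1] U₀ - F^[n] U₀‖ + ‖F^[n] U₀ - U₀‖ :=
              norm_sub_le_norm_sub_add_norm_sub _ _ _
          _ ≤ C + n * C := by linarith
          _ = (n + 1 : ℕ) * C := by push_cast; ring
    have hW0 : W 0 = U₀ := by simp only [hWdef, mul_zero, hU0]
    -- base case
    have key0 : ∀ s ∈ Set.Icc (0:ℝ) (m:ℝ), ‖U₀ - W s‖ ≤ C * s := by
      refine fencing hW U₀ (B := fun s => C * s) (B' := fun _ => C)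
        (fun s _ => by simpa using (hasDerivAt_id s).const_mul C) (by simp [hW0]) ?_
      intro s hs hBle
      have h1 : ‖U₀ - F (W s)‖ ≤ ‖U₀ - F U₀‖ + ‖F U₀ - F (W s)‖ :=
        norm_sub_le_norm_sub_add_norm_sub _ _ _
      have h2 : ‖F U₀ - F (W s)‖ ≤ ‖U₀ - W s‖ := hFne _ _
      have h3 : ‖U₀ - F U₀‖ = C := by rw [← norm_neg, neg_sub, hFU₀ U₀, hCdef]
      linarith
    -- inductive Crandall–Liggett style bound
    have key : ∀ k : ℕ, ∀ s ∈ Set.Icc (0:ℝ) (m:ℝ),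
        ‖F^[k] U₀ - W s‖ ≤ C * Real.sqrt (((k:ℝ) - s) ^ 2 + s) := by
      intro k
      induction k with
      | zero =>
        intro s hs
        have h1 : s ≤ Real.sqrt (((0:ℝ) - s) ^ 2 + s) := by
          rcases eq_or_lt_of_le hs.1 with h | h
          · rw [← h]; simp
          · rw [Real.le_sqrt h.le (by nlinarith)]
            nlinarith
        have hk := key0 s hs
        have h2 := mul_le_mul_of_nonneg_left h1 hC0
        simp only [Function.iterate_zero_apply, Nat.cast_zero]
        linarith
      | succ k ih =>
        have ha1 : (1:ℝ) ≤ (k:ℝ) + 1 := by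
          have := Nat.cast_nonneg (α := ℝ) k; linarith
        simp only [Nat.cast_add, Nat.cast_one]
        refine fencing hW (F^[k+1] U₀)
          (B := fun s => C * Real.sqrt ((((k:ℝ)+1) - s) ^ 2 + s))
          (B' := fun s => C * ((s - ((k:ℝ)+1) + 1/2) / Real.sqrt ((((k:ℝ)+1) - s) ^ 2 + s)))
          ?_ ?_ ?_
        · -- derivative of B
          intro s hs
          have hQ : (0:ℝ) < (((k:ℝ)+1) - s) ^ 2 + s := Qpos ha1 hs.1
          have h1 : HasDerivAt (fun s : ℝ => (((k:ℝ)+1) - s)) (-1) s := by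
            simpa using (hasDerivAt_id s).const_sub ((k:ℝ)+1)
          have hpoly := (h1.pow 2).add (hasDerivAt_id s)
          have hval : ((2:ℕ):ℝ) * ((((k:ℝ)+1) - s)) ^ (2-1) * (-1) + 1
              = 2 * (s - ((k:ℝ)+1) + 1/2) := by norm_num; ring
          have hpoly' : HasDerivAt (fun x : ℝ => (((k:ℝ)+1) - x) ^ 2 + x)
              (2 * (s - ((k:ℝ)+1) + 1/2)) s := hval ▸ hpoly
          have hsqrt := hpoly'.sqrt (ne_of_gt hQ)
          have hfin := hsqrt.const_mul C
          exact hfin.congr_deriv (by rw [mul_div_mul_left _ _ (two_ne_zero' ℝ)])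
        · -- initial value
          show ‖F^[k+1] U₀ - W 0‖ ≤ C * Real.sqrt ((((k:ℝ)+1) - 0) ^ 2 + 0)
          have h1 : ‖F^[k+1] U₀ - W 0‖ ≤ ((k:ℝ)+1) * C := by
            rw [hW0]
            have := htel (k+1)
            push_cast at this ⊢
            linarith
          have h2 : Real.sqrt ((((k:ℝ)+1) - 0) ^ 2 + 0) = (k:ℝ)+1 := by
            rw [sub_zero, add_zero, Real.sqrt_sq (by positivity)]
          rw [h2]
          linarith [h1]
        · -- the bound
          intro s hs hBle
          have hBle' : C * Real.sqrt ((((k:ℝ)+1) - s) ^ 2 + s) ≤ ‖F^[k+1] U₀ - W s‖ := hBle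
          show ‖F^[k+1] U₀ - F (W s)‖ - ‖F^[k+1] U₀ - W s‖
            ≤ C * ((s - ((k:ℝ)+1) + 1/2) / Real.sqrt ((((k:ℝ)+1) - s) ^ 2 + s))
          have hs' : s ∈ Set.Icc (0:ℝ) (m:ℝ) := Set.Ico_subset_Icc_self hs
          have h1 : ‖F^[k+1] U₀ - F (W s)‖ ≤ ‖F^[k] U₀ - W s‖ := by
            rw [Function.iterate_succ_apply']
            exact hFne _ _
          have h2 := ih s hs'
          have h3 : Real.sqrt (((k:ℝ) - s) ^ 2 + s) ≤
              Real.sqrt ((((k:ℝ)+1) - s) ^ 2 + s)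
              + (s - ((k:ℝ)+1) + 1/2) / Real.sqrt ((((k:ℝ)+1) - s) ^ 2 + s) := by
            have := keyineq (a := (k:ℝ)+1) ha1 hs.1
            convert this using 3 <;> ring
          have h4 : C * Real.sqrt (((k:ℝ) - s) ^ 2 + s) ≤
              C * Real.sqrt ((((k:ℝ)+1) - s) ^ 2 + s)
              + C * ((s - ((k:ℝ)+1) + 1/2) / Real.sqrt ((((k:ℝ)+1) - s) ^ 2 + s)) := by
            calc C * Real.sqrt (((k:ℝ) - s) ^ 2 + s)
                ≤ C * (Real.sqrt ((((k:ℝ)+1) - s) ^ 2 + s)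
                  + (s - ((k:ℝ)+1) + 1/2) / Real.sqrt ((((k:ℝ)+1) - s) ^ 2 + s)) :=
                  mul_le_mul_of_nonneg_left h3 hC0
              _ = _ := by ring
          linarith
    -- conclude
    have hfin := key m m (by constructor <;> [exact hm0.le; exact le_refl _])
    have hWm : W m = U t := by
      show U (l * m) = U t
      congr 1
      rw [hl]
      field_simp
    have heval : C * Real.sqrt (((m:ℝ) - m) ^ 2 + m) = ‖U₀ - J U₀‖ * t / Real.sqrt m := by
      rw [sub_self, zero_pow (by norm_num), zero_add, hCdef, hl]
      have hsm : Real.sqrt (m:ℝ) * Real.sqrt (m:ℝ) = (m:ℝ) := Real.mul_self_sqrt hm0.le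
      have hsmpos : (0:ℝ) < Real.sqrt m := Real.sqrt_pos.mpr hm0
      apply mul_right_cancel₀ hsmpos.ne'
      rw [div_mul_cancel₀ _ hsmpos.ne']
      calc t / ↑m * ‖U₀ - J U₀‖ * Real.sqrt ↑m * Real.sqrt ↑m
          = t / ↑m * ‖U₀ - J U₀‖ * (Real.sqrt ↑m * Real.sqrt ↑m) := by ring
        _ = t / ↑m * ‖U₀ - J U₀‖ * ↑m := by rw [hsm]
        _ = ‖U₀ - J U₀‖ * t := by field_simp
    rw [hWm] at hfin
    rw [← heval]
    exact hfin
  refine ⟨part1, ?_⟩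
  -- convergence
  rw [tendsto_iff_norm_sub_tendsto_zero]
  have hsqrt : Tendsto (fun m : ℕ => Real.sqrt m) atTop atTop := by
    refine tendsto_atTop_atTop.mpr fun b => ⟨⌈b^2⌉₊, fun m hm => ?_⟩
    have h1 : (b^2 : ℝ) ≤ m := le_trans (Nat.le_ceil _) (by exact_mod_cast hm)
    rcases le_or_gt b 0 with hb | hb
    · exact hb.trans (Real.sqrt_nonneg _)
    · exact (Real.le_sqrt hb.le (by positivity)).2 h1
  have hlim : Tendsto (fun m : ℕ => ‖U₀ - J U₀‖ * t / Real.sqrt m) atTop (nhds 0) :=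
    Tendsto.div_atTop tendsto_const_nhds hsqrt
  refine squeeze_zero' ?_ ?_ hlim
  · exact Eventually.of_forall fun m => norm_nonneg _
  · have h1 : ∀ᶠ m : ℕ in atTop, 1 ≤ m := eventually_ge_atTop 1
    have h2 : ∀ᶠ m : ℕ in atTop, t ≤ (m : ℝ) :=
      tendsto_natCast_atTop_atTop.eventually_ge_atTop t
    filter_upwards [h1, h2] with m hm hmt
    exact part1 m hm hmt
end

section
/- (Kobayashi-like inequality for Euler schemes) Let X be a real Banach space, J : X → X nonexpansive, and A = I − J. Let x_0, x̂_0 ∈ X and let (λ_n)_{n≥1}, (λ̂_n)_{n≥1} be sequences in (0,1]. Define the Euler schemes x_n = x_{n−1} − λ_n A(x_{n−1}) and x̂_n = x̂_{n−1} − λ̂_n A(x̂_{n−1}), and set σ_k = Σ_{i=1}^k λ_i, τ_k = Σ_{i=1}^k λ_i², σ̂_l = Σ_{i=1}^l λ̂_i, τ̂_l = Σ_{i=1}^l λ̂_i². Then for every z ∈ X and every k, l ∈ ℕ, ‖x_k − x̂_l‖ ≤ ‖x_0 − z‖ + ‖x̂_0 − z‖ + ‖z − J(z)‖ · √((σ_k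 − σ̂_l)² + τ_k + τ̂_l). -/
set_option maxHeartbeats 1000000

private lemma le_sqrt_sq_add {a b : ℝ} (ha : 0 ≤ a) (hb : 0 ≤ b) :
    a ≤ Real.sqrt (a ^ 2 + b) := by
  have h := Real.sqrt_le_sqrt (show a ^ 2 ≤ a ^ 2 + b by linarith)
  rwa [Real.sqrt_sq ha] at h

private lemma sq_convex3 {w1 w2 w3 s1 s2 s3 : ℝ} (h1 : 0 ≤ w1) (h2 : 0 ≤ w2) (h3 : 0 ≤ w3)
    (hs : w1 + w2 + w3 = 1) :
    (w1 * s1 + w2 * s2 + w3 * s3) ^ 2 ≤ w1 * s1 ^ 2 + w2 * s2 ^ 2 + w3 * s3 ^ 2 := by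
  have key : w1 * s1 ^ 2 + w2 * s2 ^ 2 + w3 * s3 ^ 2 - (w1 * s1 + w2 * s2 + w3 * s3) ^ 2 =
      w1 * w2 * (s1 - s2) ^ 2 + w1 * w3 * (s1 - s3) ^ 2 + w2 * w3 * (s2 - s3) ^ 2 := by
    linear_combination (-(w1 * s1 ^ 2 + w2 * s2 ^ 2 + w3 * s3 ^ 2)) * hs
  nlinarith [mul_nonneg (mul_nonneg h1 h2) (sq_nonneg (s1 - s2)),
    mul_nonneg (mul_nonneg h1 h3) (sq_nonneg (s1 - s3)),
    mul_nonneg (mul_nonneg h2 h3) (sq_nonneg (s2 - s3))]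

private lemma jensen3 {w1 w2 w3 g1 g2 g3 : ℝ} (h1 : 0 ≤ w1) (h2 : 0 ≤ w2) (h3 : 0 ≤ w3)
    (hs : w1 + w2 + w3 = 1) (hg1 : 0 ≤ g1) (hg2 : 0 ≤ g2) (hg3 : 0 ≤ g3) :
    w1 * Real.sqrt g1 + w2 * Real.sqrt g2 + w3 * Real.sqrt g3 ≤
      Real.sqrt (w1 * g1 + w2 * g2 + w3 * g3) := by
  have s1 := Real.sq_sqrt hg1
  have s2 := Real.sq_sqrt hg2
  have s3 := Real.sq_sqrt hg3
  have hL : 0 ≤ w1 * Real.sqrt g1 + w2 * Real.sqrt g2 + w3 * Real.sqrt g3 := by positivity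
  rw [← Real.sqrt_sq hL]
  apply Real.sqrt_le_sqrt
  calc (w1 * Real.sqrt g1 + w2 * Real.sqrt g2 + w3 * Real.sqrt g3) ^ 2
      ≤ w1 * Real.sqrt g1 ^ 2 + w2 * Real.sqrt g2 ^ 2 + w3 * Real.sqrt g3 ^ 2 :=
        sq_convex3 h1 h2 h3 hs
    _ = w1 * g1 + w2 * g2 + w3 * g3 := by rw [s1, s2, s3]

private lemma kob_step {X : Type*} [NormedAddCommGroup X] [NormedSpace ℝ X]
    {u ju v jv u' v' : X} {α β p q P Q B N : ℝ}
    (hα0 : 0 < α) (hα1 : α ≤ 1) (hβ0 : 0 < β) (hβ1 : β ≤ 1)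
    (hP : 0 ≤ P) (hQ : 0 ≤ Q) (hN : 0 ≤ N)
    (hu' : u' = u - α • (u - ju)) (hv' : v' = v - β • (v - jv))
    (hJn : ‖ju - jv‖ ≤ ‖u - v‖)
    (IH1 : ‖u - v'‖ ≤ B + N * Real.sqrt ((p - (q + β)) ^ 2 + P + (Q + β ^ 2)))
    (IH2 : ‖u' - v‖ ≤ B + N * Real.sqrt ((p + α - q) ^ 2 + (P + α ^ 2) + Q))
    (IH3 : ‖u - v‖ ≤ B + N * Real.sqrt ((p - q) ^ 2 + P + Q)) :
    ‖u' - v'‖ ≤ B + N * Real.sqrt ((p + α - (q + β)) ^ 2 + (P + α ^ 2) + (Q + β ^ 2)) := by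
  by_cases hd : α * (1 - β) + β * (1 - α) = 0
  · -- degenerate case: α = β = 1
    have hβ2 : β = 1 := by nlinarith
    have hα2 : α = 1 := by nlinarith
    subst hα2; subst hβ2
    have e : u' - v' = ju - jv := by rw [hu', hv']; module
    calc ‖u' - v'‖ = ‖ju - jv‖ := by rw [e]
      _ ≤ ‖u - v‖ := hJn
      _ ≤ B + N * Real.sqrt ((p - q) ^ 2 + P + Q) := IH3
      _ ≤ B + N * Real.sqrt ((p + 1 - (q + 1)) ^ 2 + (P + 1 ^ 2) + (Q + 1 ^ 2)) := by
          have harg : (p - q) ^ 2 + P + Q ≤ (p + 1 - (q + 1)) ^ 2 + (P + 1 ^ 2) + (Q + 1 ^ 2) := by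
            nlinarith [sq_nonneg (p - q)]
          have := Real.sqrt_le_sqrt harg
          nlinarith [this]
  · have hd0 : 0 < α * (1 - β) + β * (1 - α) := by
      have h0 : 0 ≤ α * (1 - β) + β * (1 - α) := by nlinarith
      exact h0.lt_of_ne (Ne.symm hd)
    set θ := β * (1 - α) / (α * (1 - β) + β * (1 - α)) with hθ
    have hθ0 : 0 ≤ θ := div_nonneg (by nlinarith) hd0.le
    have hθ1 : θ ≤ 1 := by rw [hθ, div_le_one hd0]; nlinarith
    have c1 : 0 ≤ θ * (1 - α) := mul_nonneg hθ0 (by linarith)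
    have c2 : 0 ≤ (1 - θ) * (1 - β) := mul_nonneg (by linarith) (by linarith)
    have cw : 0 ≤ θ * (α * (1 - β)) := mul_nonneg hθ0 (by nlinarith)
    have cw2 : 0 ≤ θ * (α * (1 - β)) + α * β := by nlinarith
    have hid : u' - v' = (θ * (1 - α)) • (u - v') + ((1 - θ) * (1 - β)) • (u' - v) +
        (θ * (α * (1 - β))) • (u - v) + (θ * (α * (1 - β)) + α * β) • (ju - jv) := by
      rw [hu', hv']
      match_scalars <;> (rw [hθ]; rw [eq_comm, ← sub_eq_zero]; field_simp; ring)
    have hnorm : ‖u' - v'‖ ≤ (θ * (1 - α)) * ‖u - v'‖ + ((1 - θ) * (1 - β)) * ‖u' - v‖ +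
        (θ * (α * (1 - β))) * ‖u - v‖ + (θ * (α * (1 - β)) + α * β) * ‖u - v‖ := by
      rw [hid]
      have t1 : ‖(θ * (1 - α)) • (u - v') + ((1 - θ) * (1 - β)) • (u' - v) +
          (θ * (α * (1 - β))) • (u - v) + (θ * (α * (1 - β)) + α * β) • (ju - jv)‖ ≤
          ‖(θ * (1 - α)) • (u - v')‖ + ‖((1 - θ) * (1 - β)) • (u' - v)‖ +
          ‖(θ * (α * (1 - β))) • (u - v)‖ + ‖(θ * (α * (1 - β)) + α * β) • (ju - jv)‖ := by
        calc ‖_ + _ + _ + _‖ ≤ ‖(θ * (1 - α)) • (u - v') + ((1 - θ) * (1 - β)) • (u' - v) +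
              (θ * (α * (1 - β))) • (u - v)‖ + ‖(θ * (α * (1 - β)) + α * β) • (ju - jv)‖ :=
              norm_add_le _ _
          _ ≤ _ := by
              gcongr
              calc ‖_ + _ + _‖ ≤ ‖(θ * (1 - α)) • (u - v') + ((1 - θ) * (1 - β)) • (u' - v)‖ +
                    ‖(θ * (α * (1 - β))) • (u - v)‖ := norm_add_le _ _
                _ ≤ _ := by gcongr; exact norm_add_le _ _
      refine t1.trans ?_
      rw [norm_smul, norm_smul, norm_smul, norm_smul, Real.norm_eq_abs, Real.norm_eq_abs,
        Real.norm_eq_abs, Real.norm_eq_abs, abs_of_nonneg c1, abs_of_nonneg c2,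
        abs_of_nonneg cw, abs_of_nonneg cw2]
      have := mul_le_mul_of_nonneg_left hJn cw2
      linarith
    have hsum : (θ * (1 - α)) + ((1 - θ) * (1 - β)) +
        (θ * (α * (1 - β)) + (θ * (α * (1 - β)) + α * β)) = 1 := by
      rw [hθ]; field_simp; ring
    have hg1 : (0:ℝ) ≤ (p - (q + β)) ^ 2 + P + (Q + β ^ 2) := by positivity
    have hg2 : (0:ℝ) ≤ (p + α - q) ^ 2 + (P + α ^ 2) + Q := by positivity
    have hg3 : (0:ℝ) ≤ (p - q) ^ 2 + P + Q := by positivity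
    have c3 : 0 ≤ θ * (α * (1 - β)) + (θ * (α * (1 - β)) + α * β) := by nlinarith
    have hjen := jensen3 c1 c2 c3 hsum hg1 hg2 hg3
    have heq : (θ * (1 - α)) * ((p - (q + β)) ^ 2 + P + (Q + β ^ 2)) +
        ((1 - θ) * (1 - β)) * ((p + α - q) ^ 2 + (P + α ^ 2) + Q) +
        (θ * (α * (1 - β)) + (θ * (α * (1 - β)) + α * β)) * ((p - q) ^ 2 + P + Q) =
        ((p + α - (q + β)) ^ 2 + (P + α ^ 2) + (Q + β ^ 2)) -
        2 * (α * β) * (θ * (α * (1 - β)) + (θ * (α * (1 - β)) + α * β)) := by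
      rw [hθ]; field_simp; ring
    have harg : (θ * (1 - α)) * ((p - (q + β)) ^ 2 + P + (Q + β ^ 2)) +
        ((1 - θ) * (1 - β)) * ((p + α - q) ^ 2 + (P + α ^ 2) + Q) +
        (θ * (α * (1 - β)) + (θ * (α * (1 - β)) + α * β)) * ((p - q) ^ 2 + P + Q) ≤
        (p + α - (q + β)) ^ 2 + (P + α ^ 2) + (Q + β ^ 2) := by
      rw [heq]
      nlinarith [mul_nonneg (mul_nonneg hα0.le hβ0.le) c3]
    have hfin := (hjen.trans (Real.sqrt_le_sqrt harg))
    calc ‖u' - v'‖ ≤ (θ * (1 - α)) * ‖u - v'‖ + ((1 - θ) * (1 - β)) * ‖u' - v‖ +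
          (θ * (α * (1 - β))) * ‖u - v‖ + (θ * (α * (1 - β)) + α * β) * ‖u - v‖ := hnorm
      _ ≤ (θ * (1 - α)) * (B + N * Real.sqrt ((p - (q + β)) ^ 2 + P + (Q + β ^ 2))) +
          ((1 - θ) * (1 - β)) * (B + N * Real.sqrt ((p + α - q) ^ 2 + (P + α ^ 2) + Q)) +
          (θ * (α * (1 - β))) * (B + N * Real.sqrt ((p - q) ^ 2 + P + Q)) +
          (θ * (α * (1 - β)) + α * β) * (B + N * Real.sqrt ((p - q) ^ 2 + P + Q)) := by
          have m1 := mul_le_mul_of_nonneg_left IH1 c1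
          have m2 := mul_le_mul_of_nonneg_left IH2 c2
          have m3 := mul_le_mul_of_nonneg_left IH3 cw
          have m4 := mul_le_mul_of_nonneg_left IH3 cw2
          linarith
      _ = B + N * ((θ * (1 - α)) * Real.sqrt ((p - (q + β)) ^ 2 + P + (Q + β ^ 2)) +
          ((1 - θ) * (1 - β)) * Real.sqrt ((p + α - q) ^ 2 + (P + α ^ 2) + Q) +
          (θ * (α * (1 - β)) + (θ * (α * (1 - β)) + α * β)) * Real.sqrt ((p - q) ^ 2 + P + Q)) := by
          linear_combination B * hsum
      _ ≤ B + N * Real.sqrt ((p + α - (q + β)) ^ 2 + (P + α ^ 2) + (Q + β ^ 2)) := by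
          have := mul_le_mul_of_nonneg_left hfin hN
          linarith

private lemma single_scheme_dist {X : Type*} [NormedAddCommGroup X] [NormedSpace ℝ X]
    (J : X → X) (hJ : ∀ x y : X, ‖J x - J y‖ ≤ ‖x - y‖)
    (lam : ℕ → ℝ) (hlam : ∀ n : ℕ, 1 ≤ n → lam n ∈ Set.Ioc (0 : ℝ) 1)
    (x : ℕ → X)
    (hx : ∀ n : ℕ, 1 ≤ n → x n = x (n - 1) - lam n • (x (n - 1) - J (x (n - 1))))
    (z : X) :
    ∀ m, ‖x m - z‖ ≤ ‖x 0 - z‖ + (∑ i ∈ Finset.Icc 1 m, lam i) * ‖z - J z‖ := by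
  intro m
  induction m with
  | zero => simp [Finset.Icc_eq_empty (by omega : ¬(1:ℕ) ≤ 0)]
  | succ n ihn =>
    obtain ⟨hβ0, hβ1⟩ := hlam (n+1) (by omega)
    have h := hx (n+1) (by omega)
    simp only [Nat.add_sub_cancel] at h
    have e : x (n+1) - z = (1 - lam (n+1)) • (x n - z) + lam (n+1) • (J (x n) - J z) +
        lam (n+1) • (J z - z) := by
      rw [h]; module
    have hrec : (∑ i ∈ Finset.Icc 1 (n+1), lam i) = (∑ i ∈ Finset.Icc 1 n, lam i) + lam (n+1) :=
      Finset.sum_Icc_succ_top (by omega) _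
    rw [hrec]
    have hb1 : ‖(1 - lam (n+1)) • (x n - z)‖ = (1 - lam (n+1)) * ‖x n - z‖ := by
      rw [norm_smul, Real.norm_eq_abs, abs_of_nonneg (by linarith)]
    have hb2 : ‖lam (n+1) • (J (x n) - J z)‖ ≤ lam (n+1) * ‖x n - z‖ := by
      rw [norm_smul, Real.norm_eq_abs, abs_of_nonneg hβ0.le]
      exact mul_le_mul_of_nonneg_left (hJ _ _) hβ0.le
    have hb3 : ‖lam (n+1) • (J z - z)‖ = lam (n+1) * ‖z - J z‖ := by
      rw [norm_smul, Real.norm_eq_abs, abs_of_nonneg hβ0.le, norm_sub_rev]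
    calc ‖x (n+1) - z‖ ≤ ‖(1 - lam (n+1)) • (x n - z) + lam (n+1) • (J (x n) - J z)‖ +
          ‖lam (n+1) • (J z - z)‖ := by rw [e]; exact norm_add_le _ _
      _ ≤ ‖(1 - lam (n+1)) • (x n - z)‖ + ‖lam (n+1) • (J (x n) - J z)‖ +
          ‖lam (n+1) • (J z - z)‖ := by gcongr; exact norm_add_le _ _
      _ ≤ (1 - lam (n+1)) * ‖x n - z‖ + lam (n+1) * ‖x n - z‖ + lam (n+1) * ‖z - J z‖ := by
          rw [hb1, hb3]; linarith
      _ = ‖x n - z‖ + lam (n+1) * ‖z - J z‖ := by ring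
      _ ≤ ‖x 0 - z‖ + ((∑ i ∈ Finset.Icc 1 n, lam i) + lam (n+1)) * ‖z - J z‖ := by
          have hN : (0:ℝ) ≤ ‖z - J z‖ := norm_nonneg _
          nlinarith

/-- Kobayashi-like inequality for Euler schemes: for a nonexpansive `J`
and `A = I - J`, any two Euler schemes `x_n = x_{n-1} - λ_n A(x_{n-1})` and
`x̂_n = x̂_{n-1} - λ̂_n A(x̂_{n-1})` with steps in `(0,1]` satisfy, for every `z`,
`‖x_k - x̂_l‖ ≤ ‖x₀ - z‖ + ‖x̂₀ - z‖ + ‖z - J z‖ √((σ_k - σ̂_l)² + τ_k + τ̂_l)`. -/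
theorem kobayashi_euler_inequality
    {X : Type*} [NormedAddCommGroup X] [NormedSpace ℝ X] [CompleteSpace X]
    (J : X → X) (hJ : ∀ x y : X, ‖J x - J y‖ ≤ ‖x - y‖)
    (lam lamh : ℕ → ℝ)
    (hlam : ∀ n : ℕ, 1 ≤ n → lam n ∈ Set.Ioc (0 : ℝ) 1)
    (hlamh : ∀ n : ℕ, 1 ≤ n → lamh n ∈ Set.Ioc (0 : ℝ) 1)
    (x xh : ℕ → X)
    (hx : ∀ n : ℕ, 1 ≤ n → x n = x (n - 1) - lam n • (x (n - 1) - J (x (n - 1))))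
    (hxh : ∀ n : ℕ, 1 ≤ n → xh n = xh (n - 1) - lamh n • (xh (n - 1) - J (xh (n - 1)))) :
    ∀ (z : X) (k l : ℕ),
      ‖x k - xh l‖ ≤ ‖x 0 - z‖ + ‖xh 0 - z‖ + ‖z - J z‖ *
        Real.sqrt (((∑ i ∈ Finset.Icc 1 k, lam i) - ∑ i ∈ Finset.Icc 1 l, lamh i) ^ 2
          + (∑ i ∈ Finset.Icc 1 k, (lam i) ^ 2) + ∑ i ∈ Finset.Icc 1 l, (lamh i) ^ 2) := by
  intro z k l
  have hN : (0:ℝ) ≤ ‖z - J z‖ := norm_nonneg _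
  have hS : ∀ m, (0:ℝ) ≤ ∑ i ∈ Finset.Icc 1 m, lam i :=
    fun m => Finset.sum_nonneg fun i hi => (hlam i (Finset.mem_Icc.mp hi).1).1.le
  have hSh : ∀ m, (0:ℝ) ≤ ∑ i ∈ Finset.Icc 1 m, lamh i :=
    fun m => Finset.sum_nonneg fun i hi => (hlamh i (Finset.mem_Icc.mp hi).1).1.le
  have hT : ∀ m, (0:ℝ) ≤ ∑ i ∈ Finset.Icc 1 m, (lam i) ^ 2 :=
    fun m => Finset.sum_nonneg fun i _ => sq_nonneg _
  have hTh : ∀ m, (0:ℝ) ≤ ∑ i ∈ Finset.Icc 1 m, (lamh i) ^ 2 :=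
    fun m => Finset.sum_nonneg fun i _ => sq_nonneg _
  -- distance of a single scheme to z
  have hxz : ∀ m, ‖x m - z‖ ≤ ‖x 0 - z‖ + (∑ i ∈ Finset.Icc 1 m, lam i) * ‖z - J z‖ :=
    single_scheme_dist J hJ lam hlam x hx z
  have hxhz : ∀ m, ‖xh m - z‖ ≤ ‖xh 0 - z‖ + (∑ i ∈ Finset.Icc 1 m, lamh i) * ‖z - J z‖ :=
    single_scheme_dist J hJ lamh hlamh xh hxh z
  suffices H : ∀ n k l, k + l ≤ n →
      ‖x k - xh l‖ ≤ ‖x 0 - z‖ + ‖xh 0 - z‖ + ‖z - J z‖ *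
        Real.sqrt (((∑ i ∈ Finset.Icc 1 k, lam i) - ∑ i ∈ Finset.Icc 1 l, lamh i) ^ 2
          + (∑ i ∈ Finset.Icc 1 k, (lam i) ^ 2) + ∑ i ∈ Finset.Icc 1 l, (lamh i) ^ 2) by
    exact H (k + l) k l le_rfl
  intro n
  induction n with
  | zero =>
    intro k l hkl
    have hk : k = 0 := by omega
    have hl : l = 0 := by omega
    subst hk; subst hl
    have h1 : ‖x 0 - xh 0‖ ≤ ‖x 0 - z‖ + ‖xh 0 - z‖ := by
      have e : x 0 - xh 0 = (x 0 - z) - (xh 0 - z) := by abel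
      rw [e]; exact norm_sub_le _ _
    have h2 : (0:ℝ) ≤ ‖z - J z‖ *
        Real.sqrt (((∑ i ∈ Finset.Icc 1 0, lam i) - ∑ i ∈ Finset.Icc 1 0, lamh i) ^ 2
          + (∑ i ∈ Finset.Icc 1 0, (lam i) ^ 2) + ∑ i ∈ Finset.Icc 1 0, (lamh i) ^ 2) :=
      mul_nonneg hN (Real.sqrt_nonneg _)
    linarith
  | succ n ihn =>
    intro k l hkl
    obtain _ | k := k
    · -- k = 0
      rw [Finset.Icc_eq_empty (by omega : ¬(1:ℕ) ≤ 0), Finset.sum_empty, Finset.sum_empty]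
      have h1 : ‖x 0 - xh l‖ ≤ ‖x 0 - z‖ + ‖xh l - z‖ := by
        have e : x 0 - xh l = (x 0 - z) - (xh l - z) := by abel
        rw [e]; exact norm_sub_le _ _
      have h2 := hxhz l
      have h3 : (∑ i ∈ Finset.Icc 1 l, lamh i) ≤
          Real.sqrt ((0 - ∑ i ∈ Finset.Icc 1 l, lamh i) ^ 2 + 0 +
            ∑ i ∈ Finset.Icc 1 l, (lamh i) ^ 2) := by
        have e : (0 - ∑ i ∈ Finset.Icc 1 l, lamh i) ^ 2 + 0 +
            ∑ i ∈ Finset.Icc 1 l, (lamh i) ^ 2 =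
            (∑ i ∈ Finset.Icc 1 l, lamh i) ^ 2 + ∑ i ∈ Finset.Icc 1 l, (lamh i) ^ 2 := by
          ring
        rw [e]
        exact le_sqrt_sq_add (hSh l) (hTh l)
      nlinarith [mul_le_mul_of_nonneg_left h3 hN]
    · obtain _ | l := l
      · -- l = 0, k = k+1
        rw [Finset.Icc_eq_empty (by omega : ¬(1:ℕ) ≤ 0), Finset.sum_empty, Finset.sum_empty]
        have h1 : ‖x (k+1) - xh 0‖ ≤ ‖x (k+1) - z‖ + ‖xh 0 - z‖ := by
          have e : x (k+1) - xh 0 = (x (k+1) - z) - (xh 0 - z) := by abel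
          rw [e]; exact norm_sub_le _ _
        have h2 := hxz (k+1)
        have h3 : (∑ i ∈ Finset.Icc 1 (k+1), lam i) ≤
            Real.sqrt (((∑ i ∈ Finset.Icc 1 (k+1), lam i) - 0) ^ 2 +
              (∑ i ∈ Finset.Icc 1 (k+1), (lam i) ^ 2) + 0) := by
          have e : ((∑ i ∈ Finset.Icc 1 (k+1), lam i) - 0) ^ 2 +
              (∑ i ∈ Finset.Icc 1 (k+1), (lam i) ^ 2) + 0 =
              (∑ i ∈ Finset.Icc 1 (k+1), lam i) ^ 2 +
              ∑ i ∈ Finset.Icc 1 (k+1), (lam i) ^ 2 := by ring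
          rw [e]
          exact le_sqrt_sq_add (hS (k+1)) (hT (k+1))
        nlinarith [mul_le_mul_of_nonneg_left h3 hN]
      · -- main inductive step: k+1, l+1
        obtain ⟨hα0, hα1⟩ := hlam (k+1) (by omega)
        obtain ⟨hβ0, hβ1⟩ := hlamh (l+1) (by omega)
        have hu' : x (k+1) = x k - lam (k+1) • (x k - J (x k)) := by
          simpa using hx (k+1) (by omega)
        have hv' : xh (l+1) = xh l - lamh (l+1) • (xh l - J (xh l)) := by
          simpa using hxh (l+1) (by omega)
        have hSrec : (∑ i ∈ Finset.Icc 1 (k+1), lam i) =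
            (∑ i ∈ Finset.Icc 1 k, lam i) + lam (k+1) :=
          Finset.sum_Icc_succ_top (by omega) _
        have hTrec : (∑ i ∈ Finset.Icc 1 (k+1), (lam i) ^ 2) =
            (∑ i ∈ Finset.Icc 1 k, (lam i) ^ 2) + (lam (k+1)) ^ 2 :=
          Finset.sum_Icc_succ_top (by omega) _
        have hShrec : (∑ i ∈ Finset.Icc 1 (l+1), lamh i) =
            (∑ i ∈ Finset.Icc 1 l, lamh i) + lamh (l+1) :=
          Finset.sum_Icc_succ_top (by omega) _
        have hThrec : (∑ i ∈ Finset.Icc 1 (l+1), (lamh i) ^ 2) =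
            (∑ i ∈ Finset.Icc 1 l, (lamh i) ^ 2) + (lamh (l+1)) ^ 2 :=
          Finset.sum_Icc_succ_top (by omega) _
        rw [hSrec, hTrec, hShrec, hThrec]
        have IH1 := ihn k (l+1) (by omega)
        rw [hShrec, hThrec] at IH1
        have IH2 := ihn (k+1) l (by omega)
        rw [hSrec, hTrec] at IH2
        have IH3 := ihn k l (by omega)
        exact kob_step hα0 hα1 hβ0 hβ1 (hT k) (hTh l) hN hu' hv' (hJ _ _) IH1 IH2 IH3
end

section
/- Let X be a real Banach space, J : X → X nonexpansive, A = I − J, and U : [0,∞) → X the differentiable solution of U'(t) = −A(U(t)) with U(0) = U_0. Fix t > 0, n ≥ 1, and steps λ_1, …, λ_n ∈ (0,1] with σ_n = Σ_{i=1}^n λ_i = t. Let x_0 = U_0 and x_k = x_{k−1} − λ_k A(x_{k−1}) for 1 ≤ k ≤ n, and let x̃ : [0,t] → X be the piecewise-linear interpolation with x̃(σ_k) = x_k for 0 ≤ k ≤ n (σ_0 = 0), i.e. x̃(t') = x_{k−1} + ((t' − σ_{k−1})/λ_k)(x_k − x_{k−1}) for t' ∈ [σ_{k−1}, σ_k]. Then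 for every t' ∈ [0,t], ‖x̃(t') − U(t')‖ ≤ ‖U_0 − J(U_0)‖ · (1 + (1 + √2) t) · √(max_{1 ≤ i ≤ n} λ_i). -/
open Finset Set

section EulerAux

variable {X : Type*} [NormedAddCommGroup X] [NormedSpace ℝ X]

lemma sqrtAddLe (a b : ℝ) (ha : 0 ≤ a) (hb : 0 ≤ b) :
    Real.sqrt (a + b) ≤ Real.sqrt a + Real.sqrt b := by
  have h : a + b ≤ (Real.sqrt a + Real.sqrt b) ^ 2 := by
    nlinarith [Real.sq_sqrt ha, Real.sq_sqrt hb, Real.sqrt_nonneg a, Real.sqrt_nonneg b,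
      mul_nonneg (Real.sqrt_nonneg a) (Real.sqrt_nonneg b)]
  calc Real.sqrt (a + b) ≤ Real.sqrt ((Real.sqrt a + Real.sqrt b) ^ 2) := Real.sqrt_le_sqrt h
    _ = Real.sqrt a + Real.sqrt b := Real.sqrt_sq (by positivity)

lemma leSqrtSelf (a b : ℝ) (ha : 0 ≤ a) (hb : 0 ≤ b) :
    a ≤ Real.sqrt (a ^ 2 + b) := by
  calc a = Real.sqrt (a ^ 2) := (Real.sqrt_sq ha).symm
    _ ≤ _ := Real.sqrt_le_sqrt (by linarith)

lemma jensen3_s9 (M w1 w2 w3 F1 F2 F3 F : ℝ) (hM : 0 ≤ M)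
    (hw1 : 0 ≤ w1) (hw2 : 0 ≤ w2) (hw3 : 0 ≤ w3)
    (hF1 : 0 ≤ F1) (hF2 : 0 ≤ F2) (hF3 : 0 ≤ F3) (hF : 0 ≤ F)
    (hsum : w1 * F1 + w2 * F2 + w3 * F3 ≤ (w1 + w2 + w3) * F) :
    w1 * (M * Real.sqrt F1) + w2 * (M * Real.sqrt F2) + w3 * (M * Real.sqrt F3)
      ≤ (w1 + w2 + w3) * (M * Real.sqrt F) := by
  set s1 := Real.sqrt F1 with hs1
  set s2 := Real.sqrt F2 with hs2
  set s3 := Real.sqrt F3 with hs3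
  have e1 : s1 ^ 2 = F1 := Real.sq_sqrt hF1
  have e2 : s2 ^ 2 = F2 := Real.sq_sqrt hF2
  have e3 : s3 ^ 2 = F3 := Real.sq_sqrt hF3
  have hW : 0 ≤ w1 + w2 + w3 := by linarith
  have hns1 : 0 ≤ s1 := Real.sqrt_nonneg _
  have hns2 : 0 ≤ s2 := Real.sqrt_nonneg _
  have hns3 : 0 ≤ s3 := Real.sqrt_nonneg _
  have key : w1 * s1 + w2 * s2 + w3 * s3 ≤ (w1 + w2 + w3) * Real.sqrt F := by
    have hL : 0 ≤ w1 * s1 + w2 * s2 + w3 * s3 := by positivity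
    have c : (w1 * s1 + w2 * s2 + w3 * s3) ^ 2
        ≤ (w1 + w2 + w3) * (w1 * F1 + w2 * F2 + w3 * F3) := by
      rw [← e1, ← e2, ← e3]
      nlinarith [mul_nonneg (mul_nonneg hw1 hw2) (sq_nonneg (s1 - s2)),
        mul_nonneg (mul_nonneg hw1 hw3) (sq_nonneg (s1 - s3)),
        mul_nonneg (mul_nonneg hw2 hw3) (sq_nonneg (s2 - s3))]
    have c2 : (w1 * s1 + w2 * s2 + w3 * s3) ^ 2 ≤ ((w1 + w2 + w3) * Real.sqrt F) ^ 2 := by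
      have h4 := mul_le_mul_of_nonneg_left hsum hW
      have hFs : Real.sqrt F ^ 2 = F := Real.sq_sqrt hF
      have h5 : ((w1 + w2 + w3) * Real.sqrt F) ^ 2 = (w1 + w2 + w3) * ((w1 + w2 + w3) * F) := by
        rw [mul_pow, hFs]; ring
      linarith
    calc w1 * s1 + w2 * s2 + w3 * s3 = Real.sqrt ((w1 * s1 + w2 * s2 + w3 * s3) ^ 2) :=
          (Real.sqrt_sq hL).symm
      _ ≤ Real.sqrt (((w1 + w2 + w3) * Real.sqrt F) ^ 2) := Real.sqrt_le_sqrt c2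
      _ = (w1 + w2 + w3) * Real.sqrt F := Real.sqrt_sq (by positivity)
  have := mul_le_mul_of_nonneg_left key hM
  linear_combination this

lemma step_nonexp (J : X → X) (hJ : ∀ a b : X, ‖J a - J b‖ ≤ ‖a - b‖)
    {lam : ℝ} (h0 : 0 ≤ lam) (h1 : lam ≤ 1) (x : X) :
    ‖(x - lam • (x - J x)) - J (x - lam • (x - J x))‖ ≤ ‖x - J x‖ := by
  set x' := x - lam • (x - J x) with hx'
  have key : x' - J x' = (1 - lam) • (x - J x) + (J x - J x') := by
    rw [hx']; module
  have hxx' : x - x' = lam • (x - J x) := by rw [hx']; module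
  have hd : ‖x - x'‖ = lam * ‖x - J x‖ := by
    rw [hxx', norm_smul, Real.norm_eq_abs, abs_of_nonneg h0]
  calc ‖x' - J x'‖ ≤ ‖(1 - lam) • (x - J x)‖ + ‖J x - J x'‖ := by
        rw [key]; exact norm_add_le _ _
    _ ≤ (1 - lam) * ‖x - J x‖ + ‖x - x'‖ := by
        rw [norm_smul, Real.norm_eq_abs, abs_of_nonneg (by linarith)]
        exact add_le_add_right (hJ x x') _
    _ = ‖x - J x‖ := by rw [hd]; ring

/-- explicit Euler scheme with uniform step `h`. -/
def eulerSeq (J : X → X) (h : ℝ) (z : X) : ℕ → X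
  | 0 => z
  | (j + 1) => eulerSeq J h z j - h • (eulerSeq J h z j - J (eulerSeq J h z j))

lemma eulerSeq_A_le (J : X → X) (hJ : ∀ a b : X, ‖J a - J b‖ ≤ ‖a - b‖)
    {h : ℝ} (h0 : 0 ≤ h) (h1 : h ≤ 1) (z : X) :
    ∀ j : ℕ, ‖eulerSeq J h z j - J (eulerSeq J h z j)‖ ≤ ‖z - J z‖ := by
  intro j
  induction j with
  | zero => exact le_refl _
  | succ j ih => exact le_trans (step_nonexp J hJ h0 h1 (eulerSeq J h z j)) ih

lemma eulerSeq_dist_le (J : X → X) (hJ : ∀ a b : X, ‖J a - J b‖ ≤ ‖a - b‖)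
    {h : ℝ} (h0 : 0 ≤ h) (h1 : h ≤ 1) (z : X) :
    ∀ j : ℕ, ‖eulerSeq J h z j - z‖ ≤ (j * h) * ‖z - J z‖ := by
  intro j
  induction j with
  | zero => simp [eulerSeq]
  | succ j ih =>
      have hA := eulerSeq_A_le J hJ h0 h1 z j
      have hid : eulerSeq J h z (j + 1) - z
          = (eulerSeq J h z j - z) - h • (eulerSeq J h z j - J (eulerSeq J h z j)) := by
        show (eulerSeq J h z j - h • (eulerSeq J h z j - J (eulerSeq J h z j))) - z = _
        module
      calc ‖eulerSeq J h z (j + 1) - z‖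
          ≤ ‖eulerSeq J h z j - z‖ + ‖h • (eulerSeq J h z j - J (eulerSeq J h z j))‖ := by
            rw [hid]; exact norm_sub_le _ _
        _ ≤ (j * h) * ‖z - J z‖ + h * ‖z - J z‖ := by
            rw [norm_smul, Real.norm_eq_abs, abs_of_nonneg h0]
            exact add_le_add ih (mul_le_mul_of_nonneg_left hA h0)
        _ = ((j + 1 : ℕ) * h) * ‖z - J z‖ := by push_cast; ring

lemma chain_A_le (J : X → X) (hJ : ∀ a b : X, ‖J a - J b‖ ≤ ‖a - b‖) (n : ℕ) (lam : ℕ → ℝ)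
    (hlam : ∀ i ∈ Finset.Icc 1 n, lam i ∈ Set.Ioc (0 : ℝ) 1) (x : ℕ → X)
    (hx : ∀ k ∈ Finset.Icc 1 n, x k = x (k - 1) - lam k • (x (k - 1) - J (x (k - 1)))) :
    ∀ k, k ≤ n → ‖x k - J (x k)‖ ≤ ‖x 0 - J (x 0)‖ := by
  intro k
  induction k with
  | zero => exact fun _ => le_refl _
  | succ k ih =>
      intro hk1
      have hk : k ≤ n := le_trans (Nat.le_succ k) hk1
      have hmem : k + 1 ∈ Finset.Icc 1 n := Finset.mem_Icc.mpr ⟨Nat.succ_le_succ (Nat.zero_le _), hk1⟩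
      have hstep : x (k + 1) = x k - lam (k + 1) • (x k - J (x k)) := by
        simpa using hx (k + 1) hmem
      rw [hstep]
      exact le_trans (step_nonexp J hJ (hlam _ hmem).1.le (hlam _ hmem).2 (x k)) (ih hk)

lemma chain_dist_le (J : X → X) (hJ : ∀ a b : X, ‖J a - J b‖ ≤ ‖a - b‖) (n : ℕ) (lam : ℕ → ℝ)
    (hlam : ∀ i ∈ Finset.Icc 1 n, lam i ∈ Set.Ioc (0 : ℝ) 1) (x : ℕ → X)
    (hx : ∀ k ∈ Finset.Icc 1 n, x k = x (k - 1) - lam k • (x (k - 1) - J (x (k - 1)))) :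
    ∀ k, k ≤ n → ‖x k - x 0‖ ≤ (∑ i ∈ Finset.Icc 1 k, lam i) * ‖x 0 - J (x 0)‖ := by
  intro k
  induction k with
  | zero => simp
  | succ k ih =>
      intro hk1
      have hk : k ≤ n := le_trans (Nat.le_succ k) hk1
      have hmem : k + 1 ∈ Finset.Icc 1 n := Finset.mem_Icc.mpr ⟨Nat.succ_le_succ (Nat.zero_le _), hk1⟩
      have hstep : x (k + 1) = x k - lam (k + 1) • (x k - J (x k)) := by
        simpa using hx (k + 1) hmem
      have hA := chain_A_le J hJ n lam hlam x hx k hk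
      have hsum : (∑ i ∈ Finset.Icc 1 (k + 1), lam i)
          = (∑ i ∈ Finset.Icc 1 k, lam i) + lam (k + 1) :=
        Finset.sum_Icc_succ_top (Nat.succ_le_succ (Nat.zero_le _)) _
      have hid : x (k + 1) - x 0 = (x k - x 0) - lam (k + 1) • (x k - J (x k)) := by
        rw [hstep]; module
      calc ‖x (k + 1) - x 0‖ ≤ ‖x k - x 0‖ + ‖lam (k + 1) • (x k - J (x k))‖ := by
            rw [hid]; exact norm_sub_le _ _
        _ ≤ (∑ i ∈ Finset.Icc 1 k, lam i) * ‖x 0 - J (x 0)‖ + lam (k + 1) * ‖x 0 - J (x 0)‖ := by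
            rw [norm_smul, Real.norm_eq_abs, abs_of_nonneg (hlam _ hmem).1.le]
            exact add_le_add (ih hk) (mul_le_mul_of_nonneg_left hA (hlam _ hmem).1.le)
        _ = (∑ i ∈ Finset.Icc 1 (k + 1), lam i) * ‖x 0 - J (x 0)‖ := by rw [hsum]; ring


set_option maxHeartbeats 2000000 in
lemma key_discrete (J : X → X) (hJ : ∀ a b : X, ‖J a - J b‖ ≤ ‖a - b‖) (z : X) (n : ℕ)
    (lam : ℕ → ℝ) (hlam : ∀ i ∈ Finset.Icc 1 n, lam i ∈ Set.Ioc (0 : ℝ) 1)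
    (x : ℕ → X) (hx0 : x 0 = z)
    (hx : ∀ k ∈ Finset.Icc 1 n, x k = x (k - 1) - lam k • (x (k - 1) - J (x (k - 1))))
    (h : ℝ) (hh0 : 0 < h) (hh1 : h ≤ 1) :
    ∀ k, k ≤ n → ∀ j : ℕ,
      ‖x k - eulerSeq J h z j‖ ≤ ‖z - J z‖ *
        Real.sqrt ((∑ i ∈ Finset.Icc 1 k, lam i - j * h) ^ 2
          + (∑ i ∈ Finset.Icc 1 k, (lam i) ^ 2) + j * h ^ 2) := by
  intro k
  induction k with
  | zero =>
      intro _ j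
      have hd := eulerSeq_dist_le J hJ hh0.le hh1 z j
      have hjh : (0 : ℝ) ≤ j * h := by positivity
      have hb : ‖x 0 - eulerSeq J h z j‖ ≤ (j * h) * ‖z - J z‖ := by
        rw [hx0, ← norm_neg]
        simpa using hd
      simp only [Finset.Icc_self, Finset.Icc_eq_empty_of_lt (Nat.zero_lt_one),
        Finset.sum_empty]
      calc ‖x 0 - eulerSeq J h z j‖ ≤ (j * h) * ‖z - J z‖ := hb
        _ ≤ ‖z - J z‖ * Real.sqrt ((0 - j * h) ^ 2 + 0 + j * h ^ 2) := by
            rw [mul_comm]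
            apply mul_le_mul_of_nonneg_left _ (norm_nonneg _)
            have : (0 - (j : ℝ) * h) ^ 2 + 0 + j * h ^ 2 = (j * h) ^ 2 + j * h ^ 2 := by ring
            rw [this]
            exact leSqrtSelf _ _ hjh (by positivity)
  | succ k ihk =>
      intro hk1
      have hk : k ≤ n := le_trans (Nat.le_succ k) hk1
      have hmem : k + 1 ∈ Finset.Icc 1 n :=
        Finset.mem_Icc.mpr ⟨Nat.succ_le_succ (Nat.zero_le _), hk1⟩
      obtain ⟨hl0, hl1⟩ := hlam _ hmem
      have hxk1 : x (k + 1) = x k - lam (k + 1) • (x k - J (x k)) := by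
        simpa using hx (k + 1) hmem
      have hS : (∑ i ∈ Finset.Icc 1 (k + 1), lam i)
          = (∑ i ∈ Finset.Icc 1 k, lam i) + lam (k + 1) :=
        Finset.sum_Icc_succ_top (Nat.succ_le_succ (Nat.zero_le _)) _
      have hT : (∑ i ∈ Finset.Icc 1 (k + 1), (lam i) ^ 2)
          = (∑ i ∈ Finset.Icc 1 k, (lam i) ^ 2) + (lam (k + 1)) ^ 2 :=
        Finset.sum_Icc_succ_top (Nat.succ_le_succ (Nat.zero_le _)) _
      set S := ∑ i ∈ Finset.Icc 1 k, lam i with hSdef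
      set T := ∑ i ∈ Finset.Icc 1 k, (lam i) ^ 2 with hTdef
      have hS0 : 0 ≤ S := Finset.sum_nonneg fun i hi =>
        (hlam i (Finset.mem_Icc.mpr ⟨(Finset.mem_Icc.mp hi).1,
          le_trans (Finset.mem_Icc.mp hi).2 hk⟩)).1.le
      have hT0 : 0 ≤ T := Finset.sum_nonneg fun i _ => sq_nonneg _
      set l := lam (k + 1) with hldef
      -- inner induction on j
      intro j
      induction j with
      | zero =>
          have hd := chain_dist_le J hJ n lam hlam x hx (k + 1) hk1
          rw [hx0] at hd
          simp only [eulerSeq, Nat.cast_zero, zero_mul, hS, hT]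
          calc ‖x (k + 1) - z‖ ≤ (S + l) * ‖z - J z‖ := by rw [← hS]; exact hd
            _ ≤ ‖z - J z‖ * Real.sqrt ((S + l - 0) ^ 2 + (T + l ^ 2) + 0) := by
                rw [mul_comm]
                apply mul_le_mul_of_nonneg_left _ (norm_nonneg _)
                have e : (S + l - 0) ^ 2 + (T + l ^ 2) + 0
                    = (S + l) ^ 2 + (T + l ^ 2) := by ring
                rw [e]
                exact leSqrtSelf _ _ (by linarith) (by positivity)
      | succ j ihj =>
          set y := eulerSeq J h z j with hydef
          have hyj1 : eulerSeq J h z (j + 1) = y - h • (y - J y) := rfl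
          set M := ‖z - J z‖ with hMdef
          have hM0 : 0 ≤ M := norm_nonneg _
          -- the three previous-level bounds
          have B1 := ihk hk (j + 1)
          have B2 := ihj
          have B3 : ‖x k - y‖ ≤ M * Real.sqrt ((S - j * h) ^ 2 + T + j * h ^ 2) := ihk hk j
          -- weights
          set w1 := (1 - l) * h with hw1def
          set w2 := (1 - h) * l with hw2def
          set w3 := l * h with hw3def
          have hw1 : 0 ≤ w1 := by rw [hw1def]; nlinarith
          have hw2 : 0 ≤ w2 := by rw [hw2def]; nlinarith
          have hw3 : 0 ≤ w3 := by rw [hw3def]; positivity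
          have hD : 0 < w1 + w2 + w3 := by
            rw [hw1def, hw2def, hw3def]; nlinarith
          -- the convexity identity
          have hiden : (w1 + w2 + w3) • (x (k + 1) - eulerSeq J h z (j + 1))
              = w1 • (x k - eulerSeq J h z (j + 1)) + w2 • (x (k + 1) - y)
                + w3 • (J (x k) - J y) := by
            rw [hyj1, hxk1, hw1def, hw2def, hw3def, hldef]
            module
          -- F values
          set F1 := (S - (j + 1 : ℕ) * h) ^ 2 + T + (j + 1 : ℕ) * h ^ 2 with hF1def
          set F2 := (S + l - j * h) ^ 2 + (T + l ^ 2) + j * h ^ 2 with hF2def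
          set F3 := (S - j * h) ^ 2 + T + j * h ^ 2 with hF3def
          set F := (S + l - (j + 1 : ℕ) * h) ^ 2 + (T + l ^ 2) + (j + 1 : ℕ) * h ^ 2 with hFdef
          have hF1 : 0 ≤ F1 := by rw [hF1def]; positivity
          have hF2 : 0 ≤ F2 := by rw [hF2def]; positivity
          have hF3 : 0 ≤ F3 := by rw [hF3def]; positivity
          have hF : 0 ≤ F := by rw [hFdef]; positivity
          have hsum : w1 * F1 + w2 * F2 + w3 * F3 ≤ (w1 + w2 + w3) * F := by
            rw [hw1def, hw2def, hw3def, hF1def, hF2def, hF3def, hFdef]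
            push_cast
            nlinarith [sq_nonneg (l * h), mul_pos hl0 hh0]
          -- assemble
          have hnorm : (w1 + w2 + w3) * ‖x (k + 1) - eulerSeq J h z (j + 1)‖
              ≤ w1 * (M * Real.sqrt F1) + w2 * (M * Real.sqrt F2) + w3 * (M * Real.sqrt F3) := by
            have e : (w1 + w2 + w3) * ‖x (k + 1) - eulerSeq J h z (j + 1)‖
                = ‖(w1 + w2 + w3) • (x (k + 1) - eulerSeq J h z (j + 1))‖ := by
              rw [norm_smul, Real.norm_eq_abs, abs_of_pos hD]
            rw [e, hiden]
            have hJ3 : ‖J (x k) - J y‖ ≤ ‖x k - y‖ := hJ _ _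
            calc ‖w1 • (x k - eulerSeq J h z (j + 1)) + w2 • (x (k + 1) - y)
                  + w3 • (J (x k) - J y)‖
                ≤ ‖w1 • (x k - eulerSeq J h z (j + 1))‖ + ‖w2 • (x (k + 1) - y)‖
                  + ‖w3 • (J (x k) - J y)‖ := norm_add₃_le
              _ = w1 * ‖x k - eulerSeq J h z (j + 1)‖ + w2 * ‖x (k + 1) - y‖
                  + w3 * ‖J (x k) - J y‖ := by
                    rw [norm_smul, norm_smul, norm_smul, Real.norm_eq_abs, Real.norm_eq_abs,
                      Real.norm_eq_abs, abs_of_nonneg hw1, abs_of_nonneg hw2, abs_of_nonneg hw3]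
              _ ≤ w1 * (M * Real.sqrt F1) + w2 * (M * Real.sqrt F2)
                  + w3 * (M * Real.sqrt F3) := by
                    apply add_le_add (add_le_add _ _) _
                    · exact mul_le_mul_of_nonneg_left (by rw [hF1def]; exact B1) hw1
                    · exact mul_le_mul_of_nonneg_left (by rw [hF2def, ← hS, ← hT]; exact B2) hw2
                    · exact mul_le_mul_of_nonneg_left
                        (le_trans hJ3 (by rw [hF3def]; exact B3)) hw3
          have hjen := jensen3_s9 M w1 w2 w3 F1 F2 F3 F hM0 hw1 hw2 hw3 hF1 hF2 hF3 hF hsum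
          have hfin : (w1 + w2 + w3) * ‖x (k + 1) - eulerSeq J h z (j + 1)‖
              ≤ (w1 + w2 + w3) * (M * Real.sqrt F) := le_trans hnorm hjen
          have := (mul_le_mul_iff_right₀ hD).mp hfin
          rw [hS, hT]
          convert this using 3


lemma sol_deriv_norm_le (J : X → X) (hJ : ∀ a b : X, ‖J a - J b‖ ≤ ‖a - b‖)
    (U : ℝ → X) (hU : ∀ s ≥ (0 : ℝ), HasDerivAt U (J (U s) - U s) s)
    (T : ℝ) (hT : 0 ≤ T) :
    ∀ s ∈ Icc (0 : ℝ) T, ‖J (U s) - U s‖ ≤ ‖U 0 - J (U 0)‖ * Real.exp (2 * T) := by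
  set M := ‖U 0 - J (U 0)‖ with hM
  have hM0 : 0 ≤ M := norm_nonneg _
  have hdec : ∀ s, 0 ≤ s → ‖J (U s) - U s‖ ≤ 2 * ‖U s - U 0‖ + M := by
    intro s hs
    have hidd : J (U s) - U s
        = (J (U s) - J (U 0)) - (U s - U 0) - (U 0 - J (U 0)) := by abel
    calc ‖J (U s) - U s‖
        ≤ ‖(J (U s) - J (U 0)) - (U s - U 0)‖ + ‖U 0 - J (U 0)‖ := by
          rw [hidd]; exact norm_sub_le _ _
      _ ≤ (‖J (U s) - J (U 0)‖ + ‖U s - U 0‖) + M := by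
          exact add_le_add_left (norm_sub_le _ _) _
      _ ≤ 2 * ‖U s - U 0‖ + M := by
          have := hJ (U s) (U 0); linarith
  have hcont : ContinuousOn (fun s => U s - U 0) (Icc (0 : ℝ) T) := fun s hs =>
    (((hU s hs.1).sub_const (U 0)).continuousAt).continuousWithinAt
  have hderiv : ∀ s ∈ Ico (0 : ℝ) T,
      HasDerivWithinAt (fun s => U s - U 0) (J (U s) - U s) (Ici s) s := fun s hs =>
    ((hU s hs.1).sub_const (U 0)).hasDerivWithinAt
  have hgron := norm_le_gronwallBound_of_norm_deriv_right_le (δ := 0) (K := 2) (ε := M)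
    hcont hderiv (by simp) (fun s hs => hdec s hs.1)
  intro s hs
  have h1 : ‖U s - U 0‖ ≤ M / 2 * (Real.exp (2 * s) - 1) := by
    have h := hgron s hs
    rw [gronwallBound_of_K_ne_0 two_ne_zero] at h
    simpa using h
  have h2 : Real.exp (2 * s) ≤ Real.exp (2 * T) :=
    Real.exp_le_exp.mpr (by linarith [hs.2])
  have h3 := hdec s hs.1
  nlinarith [Real.exp_pos (2 * s)]

lemma sol_lip (J : X → X) (hJ : ∀ a b : X, ‖J a - J b‖ ≤ ‖a - b‖)
    (U : ℝ → X) (hU : ∀ s ≥ (0 : ℝ), HasDerivAt U (J (U s) - U s) s)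
    (T : ℝ) (hT : 0 ≤ T) :
    ∀ a b : ℝ, 0 ≤ a → a ≤ b → b ≤ T →
      ‖U b - U a‖ ≤ (‖U 0 - J (U 0)‖ * Real.exp (2 * T)) * (b - a) := by
  intro a b ha hab hbT
  have hd : ∀ u ∈ Icc a b, HasDerivWithinAt U (J (U u) - U u) (Icc a b) u := fun u hu =>
    (hU u (le_trans ha hu.1)).hasDerivWithinAt
  have hbd : ∀ u ∈ Ico a b, ‖J (U u) - U u‖ ≤ ‖U 0 - J (U 0)‖ * Real.exp (2 * T) := fun u hu =>
    sol_deriv_norm_le J hJ U hU T hT u ⟨le_trans ha hu.1, le_trans hu.2.le hbT⟩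
  exact norm_image_sub_le_of_norm_deriv_le_segment' hd hbd b ⟨hab, le_refl b⟩

lemma local_err (J : X → X) (hJ : ∀ a b : X, ‖J a - J b‖ ≤ ‖a - b‖)
    (U : ℝ → X) (hU : ∀ s ≥ (0 : ℝ), HasDerivAt U (J (U s) - U s) s)
    (T : ℝ) (hT : 0 ≤ T) (s₀ h : ℝ) (hs₀ : 0 ≤ s₀) (hh : 0 ≤ h) (hsT : s₀ + h ≤ T) :
    ‖U (s₀ + h) - U s₀ - h • (J (U s₀) - U s₀)‖
      ≤ (2 * (‖U 0 - J (U 0)‖ * Real.exp (2 * T))) * h ^ 2 := by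
  set MT := ‖U 0 - J (U 0)‖ * Real.exp (2 * T) with hMT
  have hMT0 : 0 ≤ MT := by positivity
  set w := J (U s₀) - U s₀ with hw
  have hd : ∀ u ∈ Icc s₀ (s₀ + h),
      HasDerivWithinAt (fun u => U u - u • w) ((J (U u) - U u) - w) (Icc s₀ (s₀ + h)) u := by
    intro u hu
    have h1 : HasDerivAt (fun u : ℝ => u • w) w u := by
      simpa using (hasDerivAt_id u).smul_const w
    exact ((hU u (le_trans hs₀ hu.1)).sub h1).hasDerivWithinAt
  have hbd : ∀ u ∈ Ico s₀ (s₀ + h), ‖(J (U u) - U u) - w‖ ≤ 2 * MT * h := by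
    intro u hu
    have hidd : (J (U u) - U u) - w = (J (U u) - J (U s₀)) - (U u - U s₀) := by
      rw [hw]; abel
    have hlip : ‖U u - U s₀‖ ≤ MT * (u - s₀) := by
      rw [hMT]; exact sol_lip J hJ U hU T hT s₀ u hs₀ hu.1 (by linarith [hu.2.le])
    calc ‖(J (U u) - U u) - w‖ ≤ ‖J (U u) - J (U s₀)‖ + ‖U u - U s₀‖ := by
          rw [hidd]; exact norm_sub_le _ _
      _ ≤ 2 * ‖U u - U s₀‖ := by have := hJ (U u) (U s₀); linarith
      _ ≤ 2 * (MT * (u - s₀)) := by linarith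
      _ ≤ 2 * MT * h := by nlinarith [hu.1, hu.2.le]
  have := norm_image_sub_le_of_norm_deriv_le_segment' hd hbd (s₀ + h)
    ⟨by linarith, le_refl _⟩
  have hrw : (fun u => U u - u • w) (s₀ + h) - (fun u => U u - u • w) s₀
      = U (s₀ + h) - U s₀ - h • w := by
    simp only
    rw [add_smul]
    abel
  rw [hrw] at this
  calc ‖U (s₀ + h) - U s₀ - h • w‖ ≤ 2 * MT * h * (s₀ + h - s₀) := this
    _ = 2 * MT * h ^ 2 := by ring
    _ = (2 * MT) * h ^ 2 := by ring

lemma euler_global (J : X → X) (hJ : ∀ a b : X, ‖J a - J b‖ ≤ ‖a - b‖)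
    (U : ℝ → X) (hU : ∀ s ≥ (0 : ℝ), HasDerivAt U (J (U s) - U s) s)
    (T : ℝ) (hT : 0 ≤ T) (h : ℝ) (hh0 : 0 < h) (hh1 : h ≤ 1) :
    ∀ m : ℕ, (m : ℝ) * h ≤ T →
      ‖eulerSeq J h (U 0) m - U (m * h)‖
        ≤ (m : ℝ) * ((2 * (‖U 0 - J (U 0)‖ * Real.exp (2 * T))) * h ^ 2) := by
  set MT := ‖U 0 - J (U 0)‖ * Real.exp (2 * T) with hMT
  have hMT0 : 0 ≤ MT := by positivity
  intro m
  induction m with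
  | zero => intro _; simp [eulerSeq]
  | succ m ih =>
      intro hm1
      have hcast : ((m + 1 : ℕ) : ℝ) * h = (m : ℝ) * h + h := by push_cast; ring
      have hm : (m : ℝ) * h ≤ T := by
        rw [hcast] at hm1; linarith
      have hmh0 : 0 ≤ (m : ℝ) * h := by positivity
      have ihm := ih hm
      set y := eulerSeq J h (U 0) m with hy
      have hyA := eulerSeq_A_le J hJ hh0.le hh1 (U 0) m
      have hloc := local_err J hJ U hU T hT ((m : ℝ) * h) h hmh0 hh0.le (by rw [hcast] at hm1; linarith)
      set R := U ((m : ℝ) * h + h) - U ((m : ℝ) * h) - h • (J (U ((m : ℝ) * h)) - U ((m : ℝ) * h)) with hR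
      have hid : eulerSeq J h (U 0) (m + 1) - U (((m + 1 : ℕ) : ℝ) * h)
          = (1 - h) • (y - U ((m : ℝ) * h)) + h • (J y - J (U ((m : ℝ) * h))) - R := by
        rw [hcast]
        show y - h • (y - J y) - U ((m : ℝ) * h + h) = _
        rw [hR]
        module
      have hJy : ‖J y - J (U ((m : ℝ) * h))‖ ≤ ‖y - U ((m : ℝ) * h)‖ := hJ _ _
      calc ‖eulerSeq J h (U 0) (m + 1) - U (((m + 1 : ℕ) : ℝ) * h)‖
          ≤ ‖(1 - h) • (y - U ((m : ℝ) * h))‖ + ‖h • (J y - J (U ((m : ℝ) * h)))‖ + ‖R‖ := by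
            rw [hid]
            exact le_trans (norm_sub_le _ _) (by gcongr; exact norm_add_le _ _)
        _ ≤ (1 - h) * ‖y - U ((m : ℝ) * h)‖ + h * ‖y - U ((m : ℝ) * h)‖ + 2 * MT * h ^ 2 := by
            rw [norm_smul, norm_smul, Real.norm_eq_abs, Real.norm_eq_abs,
              abs_of_nonneg (by linarith : (0:ℝ) ≤ 1 - h), abs_of_nonneg hh0.le]
            have h2 : ‖R‖ ≤ 2 * MT * h ^ 2 := by
              rw [hR]; calc _ ≤ (2 * MT) * h ^ 2 := hloc
                _ = 2 * MT * h ^ 2 := by ring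
            gcongr
        _ = ‖y - U ((m : ℝ) * h)‖ + 2 * MT * h ^ 2 := by ring
        _ ≤ (m : ℝ) * (2 * MT * h ^ 2) + 2 * MT * h ^ 2 := by
            have : (2 * MT) * h ^ 2 = 2 * MT * h ^ 2 := by ring
            nlinarith [ihm]
        _ = ((m + 1 : ℕ) : ℝ) * ((2 * MT) * h ^ 2) := by push_cast; ring

lemma grid_estimate (J : X → X) (hJ : ∀ a b : X, ‖J a - J b‖ ≤ ‖a - b‖)
    (U₀ : X) (U : ℝ → X)
    (hU : ∀ s ≥ (0 : ℝ), HasDerivAt U (J (U s) - U s) s) (hU0 : U 0 = U₀)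
    (t : ℝ) (ht : 0 < t) (n : ℕ) (lam : ℕ → ℝ)
    (hlam : ∀ i ∈ Finset.Icc 1 n, lam i ∈ Set.Ioc (0 : ℝ) 1)
    (x : ℕ → X) (hx0 : x 0 = U₀)
    (hx : ∀ k ∈ Finset.Icc 1 n, x k = x (k - 1) - lam k • (x (k - 1) - J (x (k - 1)))) :
    ∀ k, k ≤ n → ∀ s ∈ Icc (0 : ℝ) t,
      ‖x k - U s‖ ≤ ‖U₀ - J U₀‖ *
        Real.sqrt ((∑ i ∈ Finset.Icc 1 k, lam i - s) ^ 2
          + ∑ i ∈ Finset.Icc 1 k, (lam i) ^ 2) := by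
  intro k hk s hs
  set M := ‖U₀ - J U₀‖ with hM
  have hM0 : 0 ≤ M := norm_nonneg _
  set S := ∑ i ∈ Finset.Icc 1 k, lam i with hSdef
  set T := ∑ i ∈ Finset.Icc 1 k, (lam i) ^ 2 with hTdef
  have hS0 : 0 ≤ S := Finset.sum_nonneg fun i hi =>
    (hlam i (Finset.mem_Icc.mpr ⟨(Finset.mem_Icc.mp hi).1,
      le_trans (Finset.mem_Icc.mp hi).2 hk⟩)).1.le
  have hT0 : 0 ≤ T := Finset.sum_nonneg fun i _ => sq_nonneg _
  rcases eq_or_lt_of_le hs.1 with h0 | h0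
  · -- s = 0
    have hd := chain_dist_le J hJ n lam hlam x hx k hk
    rw [hx0] at hd
    rw [← h0, hU0]
    calc ‖x k - U₀‖ ≤ S * M := hd
      _ ≤ M * Real.sqrt ((S - 0) ^ 2 + T) := by
          rw [mul_comm]
          apply mul_le_mul_of_nonneg_left _ hM0
          rw [sub_zero]
          exact leSqrtSelf _ _ hS0 hT0
  · -- s > 0
    set C := 2 * (M * Real.exp (2 * t)) with hC
    have hC0 : 0 ≤ C := by positivity
    have key : ∀ m : ℕ, 1 ≤ m → s ≤ (m : ℝ) →
        ‖x k - U s‖ ≤ M * Real.sqrt ((S - s) ^ 2 + T)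
          + (M * Real.sqrt (s * (s / m)) + C * s * (s / m)) := by
      intro m hm1 hmge
      have hmpos : (0 : ℝ) < m := by exact_mod_cast Nat.pos_of_ne_zero (by omega)
      set h := s / m with hh
      have hh0 : 0 < h := div_pos h0 hmpos
      have hh1 : h ≤ 1 := by rw [hh]; exact div_le_one_of_le₀ hmge hmpos.le
      have hmh : (m : ℝ) * h = s := by rw [hh]; field_simp
      have hdisc := key_discrete J hJ U₀ n lam hlam x hx0 hx h hh0 hh1 k hk m
      rw [← hSdef, ← hTdef, hmh] at hdisc
      have hmh2 : (m : ℝ) * h ^ 2 = s * h := by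
        rw [← hmh]; ring
      rw [hmh2] at hdisc
      have hglob := euler_global J hJ U hU t ht.le h hh0 hh1 m (by rw [hmh]; exact hs.2)
      rw [hU0, hmh] at hglob
      have hsplit : Real.sqrt ((S - s) ^ 2 + T + s * h)
          ≤ Real.sqrt ((S - s) ^ 2 + T) + Real.sqrt (s * h) := by
        have := sqrtAddLe ((S - s) ^ 2 + T) (s * h) (by positivity) (by positivity)
        linarith
      have hCh : (m : ℝ) * (2 * (‖U₀ - J U₀‖ * Real.exp (2 * t)) * h ^ 2)
          = C * s * h := by
        rw [hC, hM]
        calc (m : ℝ) * (2 * (‖U₀ - J U₀‖ * Real.exp (2 * t)) * h ^ 2)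
            = 2 * (‖U₀ - J U₀‖ * Real.exp (2 * t)) * (((m : ℝ) * h) * h) := by ring
          _ = 2 * (‖U₀ - J U₀‖ * Real.exp (2 * t)) * s * h := by rw [hmh]; ring
          _ = 2 * (‖U₀ - J U₀‖ * Real.exp (2 * t)) * s * h := by ring
      calc ‖x k - U s‖ ≤ ‖x k - eulerSeq J h U₀ m‖ + ‖eulerSeq J h U₀ m - U s‖ := by
            have : x k - U s = (x k - eulerSeq J h U₀ m) + (eulerSeq J h U₀ m - U s) := by abel
            rw [this]; exact norm_add_le _ _
        _ ≤ M * Real.sqrt ((S - s) ^ 2 + T + s * h) + C * s * h := by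
            apply add_le_add hdisc
            calc ‖eulerSeq J h U₀ m - U s‖
                ≤ (m : ℝ) * (2 * (‖U₀ - J U₀‖ * Real.exp (2 * t)) * h ^ 2) := by
                  exact le_trans hglob (le_of_eq (by ring))
              _ = C * s * h := hCh
        _ ≤ M * Real.sqrt ((S - s) ^ 2 + T) + (M * Real.sqrt (s * h) + C * s * h) := by
            have := mul_le_mul_of_nonneg_left hsplit hM0
            linarith
    -- now take the limit m → ∞
    have h1 : Filter.Tendsto (fun m : ℕ => s / (m : ℝ)) Filter.atTop (nhds 0) :=
      tendsto_const_div_atTop_nhds_zero_nat s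
    have h2 : Filter.Tendsto (fun m : ℕ => s * (s / (m : ℝ))) Filter.atTop (nhds 0) := by
      simpa using h1.const_mul s
    have h3 : Filter.Tendsto (fun m : ℕ => M * Real.sqrt (s * (s / (m : ℝ))))
        Filter.atTop (nhds 0) := by
      have := (h2.sqrt).const_mul M
      simpa using this
    have h4 : Filter.Tendsto (fun m : ℕ => C * s * (s / (m : ℝ))) Filter.atTop (nhds 0) := by
      simpa using h1.const_mul (C * s)
    have h5 : Filter.Tendsto
        (fun m : ℕ => M * Real.sqrt ((S - s) ^ 2 + T)
          + (M * Real.sqrt (s * (s / (m : ℝ))) + C * s * (s / (m : ℝ))))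
        Filter.atTop (nhds (M * Real.sqrt ((S - s) ^ 2 + T))) := by
      have := tendsto_const_nhds (x := M * Real.sqrt ((S - s) ^ 2 + T))
        (f := (Filter.atTop : Filter ℕ)) |>.add (h3.add h4)
      simpa using this
    apply ge_of_tendsto h5
    rw [Filter.eventually_atTop]
    refine ⟨max 1 ⌈s⌉₊, fun m hm => ?_⟩
    exact key m (le_trans (le_max_left _ _) hm)
      (le_trans (Nat.le_ceil s) (by exact_mod_cast le_trans (le_max_right _ _) hm))

end EulerAux

set_option maxHeartbeats 1000000 in
/-- comparison of a piecewise-linear interpolation of an Euler scheme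
(with steps `λ_1,…,λ_n ∈ (0,1]` summing to `t` and initial point `U₀`) with the
continuous solution `U` of `U' = J(U) - U`, `U(0) = U₀`:
`‖x̃(t') - U(t')‖ ≤ ‖U₀ - J U₀‖ (1 + (1+√2) t) √(max_i λ_i)` for all `t' ∈ [0,t]`. -/
theorem euler_interpolation_close_to_solution
    {X : Type*} [NormedAddCommGroup X] [NormedSpace ℝ X] [CompleteSpace X]
    (J : X → X) (hJ : ∀ x y : X, ‖J x - J y‖ ≤ ‖x - y‖)
    (U₀ : X) (U : ℝ → X)
    (hU : ∀ s ≥ (0 : ℝ), HasDerivAt U (J (U s) - U s) s)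
    (hU0 : U 0 = U₀)
    (t : ℝ) (ht : 0 < t) (n : ℕ) (hn : 1 ≤ n)
    (lam : ℕ → ℝ)
    (hlam : ∀ i ∈ Finset.Icc 1 n, lam i ∈ Set.Ioc (0 : ℝ) 1)
    (σ : ℕ → ℝ) (hσ : ∀ k : ℕ, σ k = ∑ i ∈ Finset.Icc 1 k, lam i)
    (hσn : σ n = t)
    (x : ℕ → X) (hx0 : x 0 = U₀)
    (hx : ∀ k ∈ Finset.Icc 1 n, x k = x (k - 1) - lam k • (x (k - 1) - J (x (k - 1))))
    (xt : ℝ → X)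
    (hxt : ∀ k ∈ Finset.Icc 1 n, ∀ t' ∈ Set.Icc (σ (k - 1)) (σ k),
      xt t' = x (k - 1) + ((t' - σ (k - 1)) / lam k) • (x k - x (k - 1))) :
    ∀ t' ∈ Set.Icc (0 : ℝ) t,
      ‖xt t' - U t'‖ ≤ ‖U₀ - J U₀‖ * (1 + (1 + Real.sqrt 2) * t) *
        Real.sqrt ((Finset.Icc 1 n).sup' (Finset.nonempty_Icc.mpr hn) lam) := by
  classical
  intro t' ht'
  set M := ‖U₀ - J U₀‖ with hM
  have hM0 : 0 ≤ M := norm_nonneg _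
  set Λ := (Finset.Icc 1 n).sup' (Finset.nonempty_Icc.mpr hn) lam with hΛ
  have h1mem : 1 ∈ Finset.Icc 1 n := Finset.mem_Icc.mpr ⟨le_refl 1, hn⟩
  have hΛ0 : 0 < Λ := lt_of_lt_of_le (hlam 1 h1mem).1 (Finset.le_sup' lam h1mem)
  have hlamle : ∀ i ∈ Finset.Icc 1 n, lam i ≤ Λ := fun i hi => Finset.le_sup' lam hi
  have hσ0 : σ 0 = 0 := by rw [hσ]; simp
  have hσmono : ∀ a b : ℕ, a ≤ b → b ≤ n → σ a ≤ σ b := by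
    intro a b hab hbn
    rw [hσ, hσ]
    apply Finset.sum_le_sum_of_subset_of_nonneg
    · exact Finset.Icc_subset_Icc_right hab
    · intro i hi _
      exact (hlam i (Finset.mem_Icc.mpr ⟨(Finset.mem_Icc.mp hi).1,
        le_trans (Finset.mem_Icc.mp hi).2 hbn⟩)).1.le
  have hσstep : ∀ k, 1 ≤ k → σ k = σ (k - 1) + lam k := by
    intro k hk1
    obtain ⟨k', rfl⟩ : ∃ k', k = k' + 1 := ⟨k - 1, (Nat.succ_pred_eq_of_pos hk1).symm⟩
    rw [hσ, hσ]
    simp only [Nat.add_sub_cancel]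
    exact Finset.sum_Icc_succ_top (Nat.succ_le_succ (Nat.zero_le _)) _
  have hΛt : Λ ≤ t := by
    rw [hΛ]
    apply Finset.sup'_le
    intro i hi
    calc lam i ≤ ∑ j ∈ Finset.Icc 1 n, lam j :=
          Finset.single_le_sum (fun j hj => (hlam j hj).1.le) hi
      _ = t := by rw [← hσ, hσn]
  -- find the interval containing t'
  have hexQ : ∃ j, t' ≤ σ j := ⟨n, by rw [hσn]; exact ht'.2⟩
  set j₀ := Nat.find hexQ with hj₀
  have hj₀spec : t' ≤ σ j₀ := Nat.find_spec hexQ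
  have hj₀n : j₀ ≤ n := Nat.find_le (by rw [hσn]; exact ht'.2)
  have hex : ∃ k, 1 ≤ k ∧ k ≤ n ∧ σ (k - 1) ≤ t' ∧ t' ≤ σ k := by
    rcases Nat.eq_zero_or_pos j₀ with h0 | h0
    · -- t' = 0
      have ht0 : t' ≤ 0 := by rw [← hσ0, ← h0]; exact hj₀spec
      have ht'0 : t' = 0 := le_antisymm ht0 ht'.1
      refine ⟨1, le_refl 1, hn, ?_, ?_⟩
      · simp only [Nat.sub_self]
        rw [hσ0, ht'0]
      · rw [ht'0, hσstep 1 (le_refl 1), hσ0]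
        simpa using (hlam 1 h1mem).1.le
    · refine ⟨j₀, h0, hj₀n, ?_, hj₀spec⟩
      have := Nat.find_min hexQ (m := j₀ - 1) (by omega)
      push_neg at this
      exact this.le
  obtain ⟨k, hk1, hkn, hkl, hkr⟩ := hex
  have hmem : k ∈ Finset.Icc 1 n := Finset.mem_Icc.mpr ⟨hk1, hkn⟩
  obtain ⟨hlk0, hlk1⟩ := hlam k hmem
  have hstep := hσstep k hk1
  set θ := (t' - σ (k - 1)) / lam k with hθ
  have hθ0 : 0 ≤ θ := div_nonneg (by linarith) hlk0.le
  have hθ1 : θ ≤ 1 := div_le_one_of_le₀ (by linarith [hstep]) hlk0.le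
  have hxtval : xt t' = x (k - 1) + θ • (x k - x (k - 1)) :=
    hxt k hmem t' ⟨hkl, hkr⟩
  -- grid bounds
  have hgrid := grid_estimate J hJ U₀ U hU hU0 t ht n lam hlam x hx0 hx
  have ht'mem : t' ∈ Set.Icc (0 : ℝ) t := ht'
  have hg1 : ‖x (k - 1) - U t'‖ ≤ M * Real.sqrt ((σ (k - 1) - t') ^ 2
      + ∑ i ∈ Finset.Icc 1 (k - 1), (lam i) ^ 2) := by
    have := hgrid (k - 1) (le_trans (Nat.sub_le k 1) hkn) t' ht'mem
    rwa [← hσ] at this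
  have hg2 : ‖x k - U t'‖ ≤ M * Real.sqrt ((σ k - t') ^ 2
      + ∑ i ∈ Finset.Icc 1 k, (lam i) ^ 2) := by
    have := hgrid k hkn t' ht'mem
    rwa [← hσ] at this
  -- the common bound B
  set B := Λ ^ 2 + Λ * t with hB
  have hB0 : 0 ≤ B := by positivity
  have hτ : ∀ j, j ≤ n → (∑ i ∈ Finset.Icc 1 j, (lam i) ^ 2) ≤ Λ * t := by
    intro j hjn
    calc (∑ i ∈ Finset.Icc 1 j, (lam i) ^ 2) ≤ ∑ i ∈ Finset.Icc 1 j, Λ * lam i := by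
          apply Finset.sum_le_sum
          intro i hi
          have hin : i ∈ Finset.Icc 1 n := Finset.mem_Icc.mpr
            ⟨(Finset.mem_Icc.mp hi).1, le_trans (Finset.mem_Icc.mp hi).2 hjn⟩
          have := hlamle i hin
          nlinarith [(hlam i hin).1.le]
      _ = Λ * σ j := by rw [hσ, Finset.mul_sum]
      _ ≤ Λ * t := by
          have := hσmono j n hjn (le_refl n)
          rw [hσn] at this
          nlinarith
  have hlamΛ : lam k ≤ Λ := hlamle k hmem
  have hsq1 : (σ (k - 1) - t') ^ 2 ≤ Λ ^ 2 := by nlinarith [hstep, hkl, hkr]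
  have hsq2 : (σ k - t') ^ 2 ≤ Λ ^ 2 := by nlinarith [hstep, hkl, hkr]
  have hF1B : (σ (k - 1) - t') ^ 2 + ∑ i ∈ Finset.Icc 1 (k - 1), (lam i) ^ 2 ≤ B := by
    have := hτ (k - 1) (le_trans (Nat.sub_le k 1) hkn)
    rw [hB]; linarith
  have hF2B : (σ k - t') ^ 2 + ∑ i ∈ Finset.Icc 1 k, (lam i) ^ 2 ≤ B := by
    have := hτ k hkn
    rw [hB]; linarith
  have hg1B : ‖x (k - 1) - U t'‖ ≤ M * Real.sqrt B :=
    le_trans hg1 (mul_le_mul_of_nonneg_left (Real.sqrt_le_sqrt hF1B) hM0)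
  have hg2B : ‖x k - U t'‖ ≤ M * Real.sqrt B :=
    le_trans hg2 (mul_le_mul_of_nonneg_left (Real.sqrt_le_sqrt hF2B) hM0)
  -- interpolation
  have hid : xt t' - U t' = (1 - θ) • (x (k - 1) - U t') + θ • (x k - U t') := by
    rw [hxtval]; module
  have hinterp : ‖xt t' - U t'‖ ≤ M * Real.sqrt B := by
    calc ‖xt t' - U t'‖ ≤ ‖(1 - θ) • (x (k - 1) - U t')‖ + ‖θ • (x k - U t')‖ := by
          rw [hid]; exact norm_add_le _ _
      _ = (1 - θ) * ‖x (k - 1) - U t'‖ + θ * ‖x k - U t'‖ := by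
          rw [norm_smul, norm_smul, Real.norm_eq_abs, Real.norm_eq_abs,
            abs_of_nonneg (by linarith), abs_of_nonneg hθ0]
      _ ≤ (1 - θ) * (M * Real.sqrt B) + θ * (M * Real.sqrt B) := by
          apply add_le_add
          · exact mul_le_mul_of_nonneg_left hg1B (by linarith)
          · exact mul_le_mul_of_nonneg_left hg2B hθ0
      _ = M * Real.sqrt B := by ring
  -- numeric conclusion
  have hBle : Real.sqrt B ≤ Real.sqrt Λ * (t + 1 / 2) := by
    have h1 : B ≤ Λ * (2 * t) := by rw [hB]; nlinarith
    have h2 : Real.sqrt B ≤ Real.sqrt (Λ * (2 * t)) := Real.sqrt_le_sqrt h1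
    have h3 : Real.sqrt (Λ * (2 * t)) = Real.sqrt Λ * Real.sqrt (2 * t) :=
      Real.sqrt_mul hΛ0.le _
    have h4 : Real.sqrt (2 * t) ≤ t + 1 / 2 := by
      calc Real.sqrt (2 * t) ≤ Real.sqrt ((t + 1 / 2) ^ 2) :=
            Real.sqrt_le_sqrt (by nlinarith [sq_nonneg (t - 1 / 2)])
        _ = t + 1 / 2 := Real.sqrt_sq (by linarith)
    calc Real.sqrt B ≤ Real.sqrt Λ * Real.sqrt (2 * t) := by rw [← h3]; exact h2
      _ ≤ Real.sqrt Λ * (t + 1 / 2) :=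
          mul_le_mul_of_nonneg_left h4 (Real.sqrt_nonneg _)
  have hfin : M * Real.sqrt B ≤ M * (1 + (1 + Real.sqrt 2) * t) * Real.sqrt Λ := by
    have hs2 : 0 ≤ Real.sqrt 2 := Real.sqrt_nonneg 2
    have hsl : 0 ≤ Real.sqrt Λ := Real.sqrt_nonneg Λ
    have h5 : Real.sqrt Λ * (t + 1 / 2) ≤ (1 + (1 + Real.sqrt 2) * t) * Real.sqrt Λ := by
      nlinarith [mul_nonneg hsl (mul_nonneg hs2 ht.le), hsl]
    calc M * Real.sqrt B ≤ M * (Real.sqrt Λ * (t + 1 / 2)) :=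
          mul_le_mul_of_nonneg_left hBle hM0
      _ ≤ M * ((1 + (1 + Real.sqrt 2) * t) * Real.sqrt Λ) :=
          mul_le_mul_of_nonneg_left h5 hM0
      _ = M * (1 + (1 + Real.sqrt 2) * t) * Real.sqrt Λ := by ring
  exact le_trans hinterp hfin
end

section
/- Let X be a real Banach space, λ ∈ (0,1], and B : X → X a map that is (1−λ)-Lipschitz: ‖B(x) − B(y)‖ ≤ (1−λ)‖x − y‖ for all x,y. If f : [0,∞) → X is differentiable and satisfies f(t) + f'(t) = B(f(t)) for all t ≥ 0, then for every t ≥ 0, ‖f'(t)‖ ≤ ‖f'(0)‖ · e^{−λ t}. -/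
open Set Filter Real Asymptotics
open scoped Topology

/-- if `B` is `(1-λ)`-Lipschitz for some `λ ∈ (0,1]` and `f` solves
`f(t) + f'(t) = B(f(t))`, i.e. `f'(t) = B(f(t)) - f(t)`, then
`‖f'(t)‖ ≤ ‖f'(0)‖ e^{-λ t}` for all `t ≥ 0`. -/
theorem norm_deriv_decay_of_contraction
    {X : Type*} [NormedAddCommGroup X] [NormedSpace ℝ X] [CompleteSpace X]
    (lam : ℝ) (hlam : lam ∈ Set.Ioc (0 : ℝ) 1)
    (B : X → X) (hB : ∀ x y : X, ‖B x - B y‖ ≤ (1 - lam) * ‖x - y‖)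
    (f : ℝ → X)
    (hf : ∀ t ≥ (0 : ℝ), HasDerivAt f (B (f t) - f t) t) :
    ∀ t ≥ (0 : ℝ), ‖B (f t) - f t‖ ≤ ‖B (f 0) - f 0‖ * Real.exp (-lam * t) := by
  obtain ⟨hlam0, hlam1⟩ := hlam
  set u : ℝ → X := fun s => B (f s) - f s with hu
  set g : ℝ → ℝ := fun s => ‖u s‖ with hg
  intro t ht
  -- continuity of g on [0, t]
  have hfc : ContinuousOn f (Icc 0 t) := fun x hx =>
    ((hf x hx.1).continuousAt).continuousWithinAt
  have hBlip : LipschitzWith (1 - lam).toNNReal B := by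
    apply LipschitzWith.of_dist_le_mul
    intro x y
    rw [dist_eq_norm, dist_eq_norm]
    calc ‖B x - B y‖ ≤ (1 - lam) * ‖x - y‖ := hB x y
      _ = ((1 - lam).toNNReal : ℝ) * ‖x - y‖ := by
          rw [Real.coe_toNNReal _ (by linarith)]
  have hgc : ContinuousOn g (Icc 0 t) :=
    ((hBlip.continuous.comp_continuousOn hfc).sub hfc).norm
  -- main slope estimate
  have key : ∀ x ∈ Ico 0 t, ∀ r, -lam * g x < r →
      ∃ᶠ z in 𝓝[>] x, (z - x)⁻¹ * (g z - g x) < r := by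
    intro x hx r hr
    apply Eventually.frequently
    set c : ℝ := (r - (-lam * g x)) / 3 with hc
    have hcpos : 0 < c := div_pos (by linarith) (by norm_num)
    have hder := (hf x hx.1).isLittleO
    have hev : ∀ᶠ z in 𝓝 x, ‖f z - f x - (z - x) • u x‖ ≤ c * ‖z - x‖ := by
      have := hder.def hcpos
      filter_upwards [this] with z hz
      simpa using hz
    have hev2 : ∀ᶠ z in 𝓝[>] x, z - x ≤ 1 := by
      have : ∀ᶠ z in 𝓝 x, z - x ≤ 1 := by
        have : ∀ᶠ z in 𝓝 x, z < x + 1 := eventually_lt_nhds (by linarith)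
        filter_upwards [this] with z hz; linarith
      exact this.filter_mono nhdsWithin_le_nhds
    filter_upwards [hev.filter_mono nhdsWithin_le_nhds, hev2, self_mem_nhdsWithin]
      with z hz hz1 hzx
    have h : 0 < z - x := sub_pos.2 hzx
    have hnorm : ‖z - x‖ = z - x := by rw [Real.norm_eq_abs, abs_of_pos h]
    rw [hnorm] at hz
    -- estimates
    have e1 : ‖f z - f x‖ ≤ (z - x) * g x + c * (z - x) := by
      calc ‖f z - f x‖ ≤ ‖(z - x) • u x‖ + ‖f z - f x - (z - x) • u x‖ := by
            have := norm_add_le ((z - x) • u x) (f z - f x - (z - x) • u x)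
            simpa [add_sub_cancel] using this
        _ ≤ (z - x) * g x + c * (z - x) := by
            rw [norm_smul, Real.norm_eq_abs, abs_of_pos h]
            exact add_le_add le_rfl hz
    have e2 : ‖u x - (f z - f x)‖ ≤ (1 - (z - x)) * g x + c * (z - x) := by
      calc ‖u x - (f z - f x)‖
          ≤ ‖u x - (z - x) • u x‖ + ‖(z - x) • u x - (f z - f x)‖ := norm_sub_le_norm_sub_add_norm_sub _ _ _
        _ ≤ (1 - (z - x)) * g x + c * (z - x) := by
            apply add_le_add
            · have : u x - (z - x) • u x = (1 - (z - x)) • u x := by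
                module
              rw [this, norm_smul, Real.norm_eq_abs, abs_of_nonneg (by linarith)]
            · rw [← norm_neg]
              simpa [neg_sub] using hz
    have e3 : g z ≤ (1 - lam) * ‖f z - f x‖ + ‖u x - (f z - f x)‖ := by
      calc g z = ‖(B (f z) - B (f x)) + (B (f x) - f z)‖ := by
            show ‖B (f z) - f z‖ = _
            congr 1; abel
        _ ≤ ‖B (f z) - B (f x)‖ + ‖B (f x) - f z‖ := norm_add_le _ _
        _ ≤ (1 - lam) * ‖f z - f x‖ + ‖u x - (f z - f x)‖ := by
            apply add_le_add (hB _ _)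
            have : B (f x) - f z = u x - (f z - f x) := by
              simp only [hu]; abel
            rw [this]
    have hstep : g z - g x ≤ (z - x) * (-lam * g x + 2 * c) := by
      have h1lam : (0:ℝ) ≤ 1 - lam := by linarith
      have := e3.trans (add_le_add (mul_le_mul_of_nonneg_left e1 h1lam) e2)
      have hgx : 0 ≤ g x := norm_nonneg _
      nlinarith [mul_nonneg hgx h.le, mul_nonneg hcpos.le h.le]
    have hle : (z - x)⁻¹ * (g z - g x) ≤ -lam * g x + 2 * c := by
      rw [inv_mul_le_iff₀ h]
      linarith [hstep]
    calc (z - x)⁻¹ * (g z - g x) ≤ -lam * g x + 2 * c := hle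
      _ < -lam * g x + 3 * c := by linarith
      _ = r := by rw [hc]; ring
  have main := le_gronwallBound_of_liminf_deriv_right_le (f' := fun s => -lam * g s)
    (δ := g 0) (K := -lam) (ε := 0) hgc key le_rfl
    (fun x _ => by simp)
  have := main t (right_mem_Icc.2 ht)
  rwa [sub_zero, gronwallBound_ε0] at this
end

section
/- Let X be a real Banach space, J : X → X nonexpansive, λ ∈ (0,1], Φ(λ,x) = λ J(((1−λ)/λ) x), and let v_λ be the unique fixed point of Φ(λ,·). If u : [0,∞) → X is differentiable and satisfies u'(t) = Φ(λ, u(t)) − u(t) for all t ≥ 0, then u(t) → v_λ as t → ∞; indeed ‖u(t) − v_λ‖ ≤ ‖u'(0)‖ e^{−λ t}/λ for all t ≥ 0. -/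
open Filter

/-- for a nonexpansive `J`, `λ ∈ (0,1]`, `Φ(λ,x) = λ J(((1-λ)/λ)x)`
with unique fixed point `v_λ`, any solution `u` of `u'(t) = Φ(λ,u(t)) - u(t)`
converges to `v_λ`, with `‖u(t) - v_λ‖ ≤ ‖u'(0)‖ e^{-λt}/λ`. -/
theorem solution_tendsto_discounted_fixed_point
    {X : Type*} [NormedAddCommGroup X] [NormedSpace ℝ X] [CompleteSpace X]
    (J : X → X) (hJ : ∀ x y : X, ‖J x - J y‖ ≤ ‖x - y‖)
    (lam : ℝ) (hlam : lam ∈ Set.Ioc (0 : ℝ) 1)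
    (vlam : X) (hvlam : lam • J (((1 - lam) / lam) • vlam) = vlam)
    (u : ℝ → X)
    (hu : ∀ t ≥ (0 : ℝ),
      HasDerivAt u (lam • J (((1 - lam) / lam) • u t) - u t) t) :
    Tendsto u atTop (nhds vlam) ∧
    ∀ t ≥ (0 : ℝ),
      ‖u t - vlam‖ ≤ ‖lam • J (((1 - lam) / lam) • u 0) - u 0‖ *
        Real.exp (-lam * t) / lam := by
  obtain ⟨hl0, hl1⟩ := hlam
  set a : ℝ := (1 - lam) / lam with ha
  have ha0 : 0 ≤ a := div_nonneg (by linarith) hl0.le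
  -- Φ is (1-lam)-Lipschitz
  have hlip : ∀ x y : X, ‖lam • J (a • x) - lam • J (a • y)‖ ≤ (1 - lam) * ‖x - y‖ := by
    intro x y
    rw [← smul_sub, norm_smul, Real.norm_eq_abs, abs_of_pos hl0]
    calc lam * ‖J (a • x) - J (a • y)‖
        ≤ lam * ‖a • x - a • y‖ := mul_le_mul_of_nonneg_left (hJ _ _) hl0.le
      _ = lam * (a * ‖x - y‖) := by
          rw [← smul_sub, norm_smul, Real.norm_eq_abs, abs_of_nonneg ha0]
      _ = (1 - lam) * ‖x - y‖ := by rw [ha]; field_simp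
  -- exponential decay for ‖u t - vlam‖
  have key : ∀ t ≥ (0 : ℝ), ‖u t - vlam‖ ≤ ‖u 0 - vlam‖ * Real.exp (-lam * t) := by
    intro T hT
    set f : ℝ → X := fun s => Real.exp s • (u s - vlam) with hf
    have hderiv : ∀ t, 0 ≤ t →
        HasDerivAt f (Real.exp t • (lam • J (a • u t) - vlam)) t := by
      intro t ht0
      have hd := (Real.hasDerivAt_exp t).smul ((hu t ht0).sub_const vlam)
      convert hd using 1
      · funext s; rfl
      rw [← smul_add]
      congr 1
      abel
    have hcont : ContinuousOn f (Set.Icc 0 T) := fun t ht =>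
      ((hderiv t ht.1).continuousAt).continuousWithinAt
    have hbound : ∀ t ∈ Set.Ico (0 : ℝ) T,
        ‖Real.exp t • (lam • J (a • u t) - vlam)‖ ≤ (1 - lam) * ‖f t‖ + 0 := by
      intro t ht
      rw [add_zero, norm_smul, Real.norm_eq_abs, abs_of_pos (Real.exp_pos t)]
      have h1 : ‖lam • J (a • u t) - vlam‖ ≤ (1 - lam) * ‖u t - vlam‖ := by
        nth_rewrite 1 [← hvlam]
        exact hlip _ _
      have h2 : ‖f t‖ = Real.exp t * ‖u t - vlam‖ := by
        rw [hf, norm_smul, Real.norm_eq_abs, abs_of_pos (Real.exp_pos t)]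
      rw [h2]
      calc Real.exp t * ‖lam • J (a • u t) - vlam‖
          ≤ Real.exp t * ((1 - lam) * ‖u t - vlam‖) :=
            mul_le_mul_of_nonneg_left h1 (Real.exp_pos t).le
        _ = (1 - lam) * (Real.exp t * ‖u t - vlam‖) := by ring
    have hf0 : ‖f 0‖ ≤ ‖u 0 - vlam‖ := by
      simp [hf]
    have := norm_le_gronwallBound_of_norm_deriv_right_le hcont
      (fun t ht => (hderiv t ht.1).hasDerivWithinAt) hf0 hbound T
      (Set.mem_Icc.2 ⟨hT, le_refl T⟩)
    rw [gronwallBound_ε0, sub_zero] at this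
    have hfT : ‖f T‖ = Real.exp T * ‖u T - vlam‖ := by
      rw [hf, norm_smul, Real.norm_eq_abs, abs_of_pos (Real.exp_pos T)]
    rw [hfT] at this
    have hexp : ‖u 0 - vlam‖ * Real.exp ((1 - lam) * T)
        = Real.exp T * (‖u 0 - vlam‖ * Real.exp (-lam * T)) := by
      have h : (1 - lam) * T = T + (-lam * T) := by ring
      rw [h, Real.exp_add]; ring
    rw [hexp] at this
    exact le_of_mul_le_mul_left (by linarith [this]) (Real.exp_pos T)
  -- bound ‖u 0 - vlam‖ by ‖u' 0‖ / lam
  have h0 : lam * ‖u 0 - vlam‖ ≤ ‖lam • J (a • u 0) - u 0‖ := by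
    have h1 : ‖u 0 - vlam‖ ≤ ‖u 0 - lam • J (a • u 0)‖ + ‖lam • J (a • u 0) - vlam‖ :=
      norm_sub_le_norm_sub_add_norm_sub _ _ _
    have h2 : ‖lam • J (a • u 0) - vlam‖ ≤ (1 - lam) * ‖u 0 - vlam‖ := by
      nth_rewrite 1 [← hvlam]; exact hlip _ _
    have h3 : ‖u 0 - lam • J (a • u 0)‖ = ‖lam • J (a • u 0) - u 0‖ := norm_sub_rev _ _
    nlinarith
  have hfinal : ∀ t ≥ (0 : ℝ), ‖u t - vlam‖ ≤
      ‖lam • J (a • u 0) - u 0‖ * Real.exp (-lam * t) / lam := by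
    intro t ht
    have := key t ht
    have h2 : ‖u 0 - vlam‖ ≤ ‖lam • J (a • u 0) - u 0‖ / lam := by
      rw [le_div_iff₀ hl0]; nlinarith [h0]
    calc ‖u t - vlam‖ ≤ ‖u 0 - vlam‖ * Real.exp (-lam * t) := this
      _ ≤ (‖lam • J (a • u 0) - u 0‖ / lam) * Real.exp (-lam * t) :=
          mul_le_mul_of_nonneg_right h2 (Real.exp_pos _).le
      _ = ‖lam • J (a • u 0) - u 0‖ * Real.exp (-lam * t) / lam := by ring
  refine ⟨?_, hfinal⟩
  rw [tendsto_iff_norm_sub_tendsto_zero]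
  have hg : Tendsto (fun t : ℝ => ‖u 0 - vlam‖ * Real.exp (-lam * t)) atTop (nhds 0) := by
    have h1 : Tendsto (fun t : ℝ => lam * t) atTop atTop :=
      Tendsto.const_mul_atTop hl0 tendsto_id
    have hb : Tendsto (fun t : ℝ => Real.exp (-lam * t)) atTop (nhds 0) :=
      (Real.tendsto_exp_neg_atTop_nhds_zero.comp h1).congr fun x => by
        simp [Function.comp, neg_mul]
    simpa using hb.const_mul ‖u 0 - vlam‖
  refine squeeze_zero' ?_ ?_ hg
  · exact Eventually.of_forall fun t => norm_nonneg _
  · filter_upwards [eventually_ge_atTop (0 : ℝ)] with t ht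
    exact key t ht
end

section
/- Let X be a real Banach space, J : X → X nonexpansive, Φ(λ,x) = λ J(((1−λ)/λ) x) for λ ∈ (0,1], and λ̄ : [0,∞) → (0,1] continuous with ∫_0^∞ λ̄(t) dt = +∞. If u, v : [0,∞) → X are differentiable and both satisfy w'(t) = Φ(λ̄(t), w(t)) − w(t), then ‖u(t) − v(t)‖ ≤ ‖u(0) − v(0)‖ · e^{−∫_0^t λ̄(s) ds} for all t ≥ 0; in particular ‖u(t) − v(t)‖ → 0 as t → ∞, so the asymptotic behavior of solutions does not depend on the initial value. -/
open Filter intervalIntegral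

/-- for a nonexpansive `J`, `Φ(λ,x) = λ J(((1-λ)/λ)x)`, and a continuous
parametrization `λ̄ : [0,∞) → (0,1]` with `∫_0^∞ λ̄ = ∞`, any two solutions `u, v` of
`w'(t) = Φ(λ̄(t),w(t)) - w(t)` satisfy
`‖u(t) - v(t)‖ ≤ ‖u(0) - v(0)‖ e^{-∫_0^t λ̄}` and `‖u(t) - v(t)‖ → 0`. -/
theorem asymptotic_independence_of_initial_value
    {X : Type*} [NormedAddCommGroup X] [NormedSpace ℝ X] [CompleteSpace X]
    (J : X → X) (hJ : ∀ x y : X, ‖J x - J y‖ ≤ ‖x - y‖)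
    (lamb : ℝ → ℝ)
    (hlamb : ∀ t ≥ (0 : ℝ), lamb t ∈ Set.Ioc (0 : ℝ) 1)
    (hlambc : ContinuousOn lamb (Set.Ici (0 : ℝ)))
    (hdiv : Tendsto (fun t : ℝ => ∫ s in (0 : ℝ)..t, lamb s) atTop atTop)
    (u v : ℝ → X)
    (hu : ∀ t ≥ (0 : ℝ),
      HasDerivAt u (lamb t • J (((1 - lamb t) / lamb t) • u t) - u t) t)
    (hv : ∀ t ≥ (0 : ℝ),
      HasDerivAt v (lamb t • J (((1 - lamb t) / lamb t) • v t) - v t) t) :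
    (∀ t ≥ (0 : ℝ),
      ‖u t - v t‖ ≤ ‖u 0 - v 0‖ * Real.exp (-∫ s in (0 : ℝ)..t, lamb s)) ∧
    Tendsto (fun t : ℝ => ‖u t - v t‖) atTop (nhds 0) := by
  set Λ : ℝ → ℝ := fun t => ∫ s in (0 : ℝ)..t, lamb s with hΛdef
  have hint : ∀ t ≥ (0 : ℝ), IntervalIntegrable lamb MeasureTheory.volume 0 t := by
    intro t ht
    apply ContinuousOn.intervalIntegrable
    apply hlambc.mono
    rw [Set.uIcc_of_le ht]
    exact fun s hs => hs.1
  have hΛderiv : ∀ x ≥ (0 : ℝ), HasDerivWithinAt Λ (lamb x) (Set.Ici x) x := by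
    intro x hx
    exact intervalIntegral.integral_hasDerivWithinAt_right (hint x hx)
      ⟨Set.Ici 0, Filter.mem_of_superset self_mem_nhdsWithin
          (fun s hs => le_trans hx (le_of_lt hs)),
        hlambc.aestronglyMeasurable measurableSet_Ici⟩
      ((hlambc x hx).mono (fun s hs => le_trans hx (le_of_lt hs)))
  have hΛ0 : Λ 0 = 0 := intervalIntegral.integral_same
  set w : ℝ → X := fun t => u t - v t with hwdef
  set y : ℝ → X := fun t => Real.exp t • w t with hydef
  set f' : ℝ → X := fun t => Real.exp t •
    (lamb t • (J (((1 - lamb t) / lamb t) • u t) - J (((1 - lamb t) / lamb t) • v t))) with hf'def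
  have hy : ∀ t ≥ (0 : ℝ), HasDerivAt y (f' t) t := by
    intro t ht
    have hw : HasDerivAt w
        ((lamb t • J (((1 - lamb t) / lamb t) • u t) - u t) -
         (lamb t • J (((1 - lamb t) / lamb t) • v t) - v t)) t := (hu t ht).sub (hv t ht)
    have := (Real.hasDerivAt_exp t).smul hw
    refine HasDerivAt.congr_deriv this ?_
    simp only [hf'def, hwdef, smul_sub, smul_smul]
    module
  have hnorm : ∀ t ≥ (0 : ℝ), ‖f' t‖ ≤ (1 - lamb t) * ‖y t‖ := by
    intro t ht
    obtain ⟨hl0, hl1⟩ := hlamb t ht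
    have ha : (0:ℝ) ≤ (1 - lamb t) / lamb t := div_nonneg (by linarith) hl0.le
    have hJb : ‖J (((1 - lamb t) / lamb t) • u t) - J (((1 - lamb t) / lamb t) • v t)‖ ≤
        (1 - lamb t) / lamb t * ‖w t‖ := by
      calc _ ≤ ‖((1 - lamb t) / lamb t) • u t - ((1 - lamb t) / lamb t) • v t‖ := hJ _ _
        _ = (1 - lamb t) / lamb t * ‖w t‖ := by
            rw [← smul_sub, norm_smul, Real.norm_eq_abs, abs_of_nonneg ha]
    have hyt : ‖y t‖ = Real.exp t * ‖w t‖ := by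
      rw [hydef]; simp [norm_smul, abs_of_pos (Real.exp_pos t)]
    have hfe : ‖f' t‖ = Real.exp t * (lamb t *
        ‖J (((1 - lamb t) / lamb t) • u t) - J (((1 - lamb t) / lamb t) • v t)‖) := by
      rw [hf'def]
      simp [norm_smul, abs_of_pos (Real.exp_pos t), abs_of_pos hl0]
    have h2 : lamb t *
        ‖J (((1 - lamb t) / lamb t) • u t) - J (((1 - lamb t) / lamb t) • v t)‖ ≤
        (1 - lamb t) * ‖w t‖ := by
      have h3 := mul_le_mul_of_nonneg_left hJb hl0.le
      have h4 : lamb t * ((1 - lamb t) / lamb t * ‖w t‖) = (1 - lamb t) * ‖w t‖ := by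
        field_simp
      linarith [h4.le, h4.ge]
    rw [hfe, hyt]
    calc Real.exp t * (lamb t *
        ‖J (((1 - lamb t) / lamb t) • u t) - J (((1 - lamb t) / lamb t) • v t)‖)
        ≤ Real.exp t * ((1 - lamb t) * ‖w t‖) :=
          mul_le_mul_of_nonneg_left h2 (Real.exp_pos t).le
      _ = (1 - lamb t) * (Real.exp t * ‖w t‖) := by ring
  have main : ∀ t ≥ (0 : ℝ), ‖u t - v t‖ ≤ ‖u 0 - v 0‖ * Real.exp (-Λ t) := by
    intro T hT
    have hyT : ∀ ε > (0:ℝ), ‖y T‖ ≤ ‖w 0‖ * Real.exp (T - Λ T) + ε := by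
      intro ε hε
      set ε' : ℝ := ε / Real.exp (2 * T) with hε'def
      have hε' : 0 < ε' := div_pos hε (Real.exp_pos _)
      set B : ℝ → ℝ := fun t => ‖w 0‖ * Real.exp (t - Λ t) + ε' * Real.exp (2 * t) with hBdef
      set B' : ℝ → ℝ := fun t => (1 - lamb t) * (‖w 0‖ * Real.exp (t - Λ t)) +
        ε' * (2 * Real.exp (2 * t)) with hB'def
      have hycont : ContinuousOn y (Set.Icc 0 T) := fun x hx =>
        ((hy x hx.1).continuousAt).continuousWithinAt
      have hΛcont : ContinuousOn Λ (Set.Icc 0 T) := by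
        have h := intervalIntegral.continuousOn_primitive_interval' (hint T hT)
          (by rw [Set.uIcc_of_le hT]; exact Set.left_mem_Icc.2 hT)
        rwa [Set.uIcc_of_le hT] at h
      have hBcont : ContinuousOn B (Set.Icc 0 T) := by
        apply ContinuousOn.add
        · exact continuousOn_const.mul
            (Real.continuous_exp.comp_continuousOn (continuousOn_id.sub hΛcont))
        · exact continuousOn_const.mul (Continuous.continuousOn (by continuity))
      have hB'deriv : ∀ x ∈ Set.Ico (0:ℝ) T, HasDerivWithinAt B (B' x) (Set.Ici x) x := by
        intro x hx
        have h1 : HasDerivWithinAt (fun t => t - Λ t) (1 - lamb x) (Set.Ici x) x :=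
          (hasDerivWithinAt_id x _).sub (hΛderiv x hx.1)
        have h2 : HasDerivWithinAt (fun t => Real.exp (t - Λ t))
            (Real.exp (x - Λ x) * (1 - lamb x)) (Set.Ici x) x := h1.exp
        have h3 : HasDerivWithinAt (fun t => Real.exp (2 * t))
            (Real.exp (2 * x) * 2) (Set.Ici x) x := by
          have h4 : HasDerivWithinAt (fun t : ℝ => 2 * t) 2 (Set.Ici x) x := by
            simpa using (hasDerivWithinAt_id x (Set.Ici x)).const_mul (2:ℝ)
          exact h4.exp
        have := (h2.const_mul (‖w 0‖)).add (h3.const_mul ε')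
        refine HasDerivWithinAt.congr_deriv this ?_
        simp only [hB'def]; ring
      have key := image_norm_le_of_norm_deriv_right_lt_deriv_boundary'
        (f := y) (f' := f') (a := 0) (b := T) hycont
        (fun x hx => (hy x hx.1).hasDerivWithinAt)
        (B := B) (B' := B') ?_ hBcont hB'deriv ?_ (Set.right_mem_Icc.2 hT)
      · have h2 : ε' * Real.exp (2 * T) = ε := by
          rw [hε'def]; field_simp
        rw [hBdef] at key
        simp only at key
        linarith [key]
      · have h0 : y 0 = w 0 := by simp [hydef]
        rw [h0, hBdef]
        simp only [hΛ0, sub_zero, mul_zero, Real.exp_zero, mul_one]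
        linarith [hε'.le]
      · intro x hx hyx
        have h1 := hnorm x hx.1
        rw [hyx] at h1
        obtain ⟨hl0, hl1⟩ := hlamb x hx.1
        have hexp : 0 < ε' * Real.exp (2 * x) := mul_pos hε' (Real.exp_pos _)
        have hb1 : 0 ≤ ‖w 0‖ * Real.exp (x - Λ x) :=
          mul_nonneg (norm_nonneg _) (Real.exp_pos _).le
        calc ‖f' x‖ ≤ (1 - lamb x) * B x := h1
          _ < B' x := by
              rw [hBdef, hB'def]
              simp only
              nlinarith
    have hyT' : ‖y T‖ ≤ ‖w 0‖ * Real.exp (T - Λ T) := le_of_forall_pos_le_add hyT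
    have hyTeq : ‖y T‖ = Real.exp T * ‖w T‖ := by
      rw [hydef]; simp [norm_smul, abs_of_pos (Real.exp_pos T)]
    have hexpT : (0:ℝ) < Real.exp T := Real.exp_pos T
    have e1 : Real.exp (T - Λ T) = Real.exp T * (Real.exp (Λ T))⁻¹ := by
      rw [Real.exp_sub, div_eq_mul_inv]
    rw [hyTeq, e1] at hyT'
    have h6 := mul_le_mul_of_nonneg_left hyT' (inv_nonneg.2 hexpT.le)
    have h7 : ‖w T‖ ≤ ‖w 0‖ * Real.exp (-Λ T) := by
      rw [Real.exp_neg]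
      calc ‖w T‖ = (Real.exp T)⁻¹ * (Real.exp T * ‖w T‖) := by field_simp
        _ ≤ (Real.exp T)⁻¹ * (‖w 0‖ * (Real.exp T * (Real.exp (Λ T))⁻¹)) := h6
        _ = ‖w 0‖ * (Real.exp (Λ T))⁻¹ := by field_simp
    simpa [hwdef] using h7
  refine ⟨main, ?_⟩
  have hup : Tendsto (fun t => ‖u 0 - v 0‖ * Real.exp (-Λ t)) atTop (nhds 0) := by
    have h1 : Tendsto (fun t => -Λ t) atTop atBot := tendsto_neg_atTop_atBot.comp hdiv
    have h2 : Tendsto (fun t => Real.exp (-Λ t)) atTop (nhds 0) :=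
      Real.tendsto_exp_atBot.comp h1
    simpa using h2.const_mul (‖u 0 - v 0‖)
  apply tendsto_of_tendsto_of_tendsto_of_le_of_le' tendsto_const_nhds hup
  · exact Eventually.of_forall (fun t => norm_nonneg _)
  · filter_upwards [eventually_ge_atTop (0:ℝ)] with t ht
    exact main t ht
end

section
/- Let X be a real Banach space, J : X → X nonexpansive, and U : [0,∞) → X the differentiable solution of U'(t) = J(U(t)) − U(t) with U(0) = 0. Let v_n = J^n(0)/n, and for λ ∈ (0,1] let v_λ = λ V_λ where V_λ is the unique fixed point of x ↦ J((1−λ)x). If U'(t) converges to some l ∈ X as t → ∞, then v_n → l as n → ∞ and v_λ → l as λ → 0. -/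
open Filter

private lemma mvt_aux {X : Type*} [NormedAddCommGroup X] [NormedSpace ℝ X]
    (U : ℝ → X) (D : ℝ → X)
    (hU : ∀ t ≥ (0:ℝ), HasDerivAt U (D t) t)
    (w : X) (ε : ℝ) (a b : ℝ) (ha : 0 ≤ a) (hab : a ≤ b)
    (hbound : ∀ t ∈ Set.Icc a b, ‖D t - w‖ ≤ ε) :
    ‖U b - U a - (b - a) • w‖ ≤ ε * (b - a) := by
  have key := Convex.norm_image_sub_le_of_norm_hasDerivWithin_le
    (f := fun t => U t - t • w) (f' := fun t => D t - w) (C := ε) (s := Set.Icc a b)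
    (fun t ht => (((hU t (ha.trans ht.1)).sub
      (by simpa using (hasDerivAt_id t).smul_const w)).hasDerivWithinAt))
    (fun t ht => hbound t ht) (convex_Icc a b) (Set.left_mem_Icc.2 hab) (Set.right_mem_Icc.2 hab)
  have h1 : (U b - b • w) - (U a - a • w) = U b - U a - (b - a) • w := by
    rw [sub_smul]; abel
  have h2 : ‖b - a‖ = b - a := by
    rw [Real.norm_eq_abs, abs_of_nonneg (by linarith)]
  rw [h1, h2] at key
  exact key


private lemma quant_aux {X : Type*} [NormedAddCommGroup X] [NormedSpace ℝ X]
    (U : ℝ → X) (D : ℝ → X)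
    (hU : ∀ t ≥ (0:ℝ), HasDerivAt U (D t) t)
    (l : X) (hl : Tendsto D atTop (nhds l))
    (ε : ℝ) (hε : 0 < ε) :
    ∃ T ≥ (1:ℝ), ∃ C ≥ (0:ℝ),
      (∀ t ≥ T, ‖D t - l‖ ≤ ε) ∧ (∀ t ≥ T, ‖U t - t • l‖ ≤ C + ε * t) := by
  obtain ⟨N, hN⟩ := (Metric.tendsto_atTop.mp hl) ε hε
  refine ⟨max N 1, le_max_right _ _, ‖U (max N 1) - (max N 1) • l‖, norm_nonneg _, ?_, ?_⟩
  · intro t ht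
    have := hN t (le_trans (le_max_left N 1) ht)
    rw [dist_eq_norm] at this
    exact this.le
  · intro t ht
    set T := max N 1 with hT
    have hT0 : (0:ℝ) ≤ T := le_trans zero_le_one (le_max_right N 1)
    have hmvt := mvt_aux U D hU l ε T t hT0 ht (fun s hs => by
      have := hN s (le_trans (le_max_left N 1) hs.1)
      rw [dist_eq_norm] at this
      exact this.le)
    have hid : U t - t • l = (U T - T • l) + (U t - U T - (t - T) • l) := by
      rw [sub_smul]; abel
    calc ‖U t - t • l‖ ≤ ‖U T - T • l‖ + ‖U t - U T - (t - T) • l‖ := by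
          rw [hid]; exact norm_add_le _ _
      _ ≤ ‖U T - T • l‖ + ε * (t - T) := by linarith
      _ ≤ ‖U T - T • l‖ + ε * t := by nlinarith

set_option maxHeartbeats 1600000 in
/-- if `U` solves `U'(t) = J(U(t)) - U(t)` with `U(0) = 0` for a
nonexpansive `J`, and `U'(t) = J(U(t)) - U(t)` converges to `l` as `t → ∞`, then
`v_n = J^n(0)/n → l` and `v_λ = λ V_λ → l` as `λ → 0` (within `(0,1]`), where
`V_λ` is the unique fixed point of `x ↦ J((1-λ)x)`. -/
theorem vn_and_vlambda_tendsto_of_deriv_tendsto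
    {X : Type*} [NormedAddCommGroup X] [NormedSpace ℝ X] [CompleteSpace X]
    (J : X → X) (hJ : ∀ x y : X, ‖J x - J y‖ ≤ ‖x - y‖)
    (U : ℝ → X)
    (hU : ∀ t ≥ (0 : ℝ), HasDerivAt U (J (U t) - U t) t)
    (hU0 : U 0 = 0)
    (V : ℝ → X)
    (hV : ∀ lam ∈ Set.Ioc (0 : ℝ) 1, J ((1 - lam) • V lam) = V lam)
    (l : X)
    (hl : Tendsto (fun t : ℝ => J (U t) - U t) atTop (nhds l)) :
    Tendsto (fun n : ℕ => (n : ℝ)⁻¹ • J^[n] 0) atTop (nhds l) ∧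
    Tendsto (fun lam : ℝ => lam • V lam)
      (nhdsWithin 0 (Set.Ioc (0 : ℝ) 1)) (nhds l) := by
  set D : ℝ → X := fun t => J (U t) - U t with hD
  constructor
  rw [Metric.tendsto_atTop]
  intro ε hε
  have hε8 : 0 < ε / 8 := by linarith
  obtain ⟨T, hT1, C, hC0, h1, h2⟩ := quant_aux U D hU l hl (ε/8) hε8
  have hT0 : (0:ℝ) < T := lt_of_lt_of_le zero_lt_one hT1
  -- induction bound
  have hind : ∀ n : ℕ, ‖J^[n] 0 - U (T + n)‖ ≤ ‖U T‖ + 2 * (ε/8) * n := by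
    intro n
    induction n with
    | zero => simp [zero_sub]
    | succ n ih =>
      have hstep : ‖U (T + (n+1:ℕ)) - U (T + n) - ((T + (n+1:ℕ)) - (T + n)) • D (T + n)‖
          ≤ (2 * (ε/8)) * ((T + (n+1:ℕ)) - (T + n)) := by
        apply mvt_aux U D hU (D (T + n)) (2 * (ε/8)) (T + n) (T + (n+1:ℕ))
          (by positivity) (by push_cast; linarith)
        intro s hs
        have hn0 : (0:ℝ) ≤ (n:ℝ) := Nat.cast_nonneg n
        have hsT : s ≥ T := le_trans (by linarith) hs.1
        have hDn : ‖D (T + n) - l‖ ≤ ε/8 := h1 _ (by linarith)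
        have hDs : ‖D s - l‖ ≤ ε/8 := h1 s hsT
        calc ‖D s - D (T + n)‖ = ‖(D s - l) - (D (T + n) - l)‖ := by abel_nf
          _ ≤ ‖D s - l‖ + ‖D (T + n) - l‖ := norm_sub_le _ _
          _ ≤ 2 * (ε/8) := by linarith
      have hcast : ((T + (n+1:ℕ)) - (T + (n:ℕ)) : ℝ) = 1 := by push_cast; ring
      rw [hcast, one_smul, mul_one] at hstep
      -- ‖U (T+n+1) - U (T+n) - D (T+n)‖ ≤ 2*(ε/8)
      have htri : ‖J^[n+1] 0 - U (T + (n+1:ℕ))‖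
          ≤ ‖J (J^[n] 0) - J (U (T + n))‖ + ‖J (U (T + n)) - U (T + (n+1:ℕ))‖ := by
        rw [Function.iterate_succ_apply']
        have := dist_triangle (J (J^[n] 0)) (J (U (T + n))) (U (T + (n+1:ℕ)))
        simpa [dist_eq_norm] using this
      have hsecond : ‖J (U (T + n)) - U (T + (n+1:ℕ))‖ ≤ 2 * (ε/8) := by
        have : J (U (T + n)) - U (T + (n+1:ℕ))
            = -(U (T + (n+1:ℕ)) - U (T + n) - D (T + n)) := by
          simp only [hD]; abel
        rw [this, norm_neg]; exact hstep
      have hfirst : ‖J (J^[n] 0) - J (U (T + n))‖ ≤ ‖J^[n] 0 - U (T + n)‖ := hJ _ _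
      calc ‖J^[n+1] 0 - U (T + (n+1:ℕ))‖
          ≤ ‖J^[n] 0 - U (T + n)‖ + 2 * (ε/8) := by linarith
        _ ≤ ‖U T‖ + 2 * (ε/8) * (n+1:ℕ) := by push_cast; linarith
  -- conclude
  set K : ℝ := ‖U T‖ + C + (ε/8) * T + T * ‖l‖ with hK
  have hK0 : 0 ≤ K := by positivity
  refine ⟨⌈K / (ε/8)⌉₊ + 1, fun n hn => ?_⟩
  have hn1 : 1 ≤ n := le_trans (Nat.le_add_left 1 _) hn
  have hnpos : (0:ℝ) < n := by exact_mod_cast hn1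
  have hnK : K < (n:ℝ) * (ε/8) := by
    have h' : K / (ε/8) ≤ (⌈K / (ε/8)⌉₊ : ℝ) := Nat.le_ceil _
    have h'' : ((⌈K / (ε/8)⌉₊ + 1 : ℕ) : ℝ) ≤ (n:ℝ) := by exact_mod_cast hn
    push_cast at h''
    have : K / (ε/8) < (n:ℝ) := by linarith
    calc K = (K / (ε/8)) * (ε/8) := by field_simp
      _ < (n:ℝ) * (ε/8) := by apply mul_lt_mul_of_pos_right this hε8
  have hbig : ‖J^[n] 0 - (n:ℝ) • l‖ ≤ K + 3 * (ε/8) * n := by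
    have ha := hind n
    have hb := h2 (T + n) (by linarith [Nat.cast_nonneg (α := ℝ) n])
    have hc : ‖((T:ℝ) + n) • l - (n:ℝ) • l‖ = T * ‖l‖ := by
      rw [← sub_smul]
      simp [norm_smul, abs_of_pos hT0]
    calc ‖J^[n] 0 - (n:ℝ) • l‖
        ≤ ‖J^[n] 0 - U (T + n)‖ + ‖U (T + n) - ((T:ℝ) + n) • l‖
          + ‖((T:ℝ) + n) • l - (n:ℝ) • l‖ := by
          have := dist_triangle4 (J^[n] 0) (U (T + n)) (((T:ℝ) + n) • l) ((n:ℝ) • l)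
          simpa [dist_eq_norm] using this
      _ ≤ (‖U T‖ + 2 * (ε/8) * n) + (C + (ε/8) * (T + n)) + T * ‖l‖ := by
          rw [hc]; gcongr
      _ ≤ K + 3 * (ε/8) * n := by rw [hK]; ring_nf; nlinarith
  have hrw : (n:ℝ)⁻¹ • J^[n] 0 - l = (n:ℝ)⁻¹ • (J^[n] 0 - (n:ℝ) • l) := by
    rw [smul_sub, smul_smul, inv_mul_cancel₀ hnpos.ne', one_smul]
  rw [dist_eq_norm, hrw, norm_smul, Real.norm_eq_abs, abs_of_pos (inv_pos.mpr hnpos)]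
  calc (n:ℝ)⁻¹ * ‖J^[n] 0 - (n:ℝ) • l‖ ≤ (n:ℝ)⁻¹ * (K + 3 * (ε/8) * n) := by
        gcongr
    _ < ε := by
        rw [inv_mul_lt_iff₀ hnpos]
        nlinarith
  rw [Metric.tendsto_nhdsWithin_nhds]
  intro ε hε
  have hε8 : 0 < ε / 8 := by linarith
  obtain ⟨T, hT1, C, hC0, h1, h2⟩ := quant_aux U D hU l hl (ε/8) hε8
  set M : ℝ := max T (2 * C / (ε/8) + 1) with hM
  have hM1 : 1 ≤ M := le_trans hT1 (le_max_left _ _)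
  refine ⟨1 / (M + 1), by positivity, ?_⟩
  intro lam hlam hdist
  have hlam0 : 0 < lam := hlam.1
  have hlamδ : lam < 1 / (M + 1) := by
    rw [Real.dist_eq, sub_zero, abs_of_pos hlam0] at hdist
    exact hdist
  have hlam1 : lam < 1 := by
    have : 1 / (M + 1) ≤ 1 := by
      rw [div_le_one (by linarith)]; linarith
    linarith
  set μ : ℝ := (1 - lam) / lam with hμ
  have hμlam : μ * lam = 1 - lam := div_mul_cancel₀ _ hlam0.ne'
  have hμM : M < μ := by
    have h1lam : lam * (M + 1) < 1 := by
      rw [lt_div_iff₀ (by linarith : (0:ℝ) < M + 1)] at hlamδ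
      linarith
    rw [hμ, lt_div_iff₀ hlam0]
    nlinarith
  have hμT : T ≤ μ := le_trans (le_max_left _ _) hμM.le
  have hμ0 : 0 < μ := lt_of_lt_of_le (by linarith) hμT
  have hfix : J ((1 - lam) • V lam) = V lam := hV lam hlam
  -- accretivity key inequality
  have heq : (1 + μ) • ((1 - lam) • V lam - U μ) - μ • (J ((1 - lam) • V lam) - J (U μ))
      = μ • (J (U μ) - U μ) - U μ := by
    rw [hfix]
    match_scalars
    · linear_combination -hμlam
    · ring
    · ring
  have hkey : ‖(1 - lam) • V lam - U μ‖ ≤ ‖μ • (J (U μ) - U μ) - U μ‖ := by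
    have hJle := hJ ((1 - lam) • V lam) (U μ)
    have hn1 : ‖(1 + μ) • ((1 - lam) • V lam - U μ)‖
        = (1 + μ) * ‖(1 - lam) • V lam - U μ‖ := by
      rw [norm_smul, Real.norm_eq_abs, abs_of_pos (by linarith)]
    have hn2 : ‖μ • (J ((1 - lam) • V lam) - J (U μ))‖
        = μ * ‖J ((1 - lam) • V lam) - J (U μ)‖ := by
      rw [norm_smul, Real.norm_eq_abs, abs_of_pos hμ0]
    have htri := norm_sub_norm_le ((1 + μ) • ((1 - lam) • V lam - U μ))
      (μ • (J ((1 - lam) • V lam) - J (U μ)))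
    rw [hn1, hn2, heq] at htri
    nlinarith [norm_nonneg ((1 - lam) • V lam - U μ)]
  -- bound RHS
  have hDμ : ‖D μ - l‖ ≤ ε/8 := h1 μ hμT
  have hUμ : ‖U μ - μ • l‖ ≤ C + (ε/8) * μ := h2 μ hμT
  have hA : ‖μ • (J (U μ) - U μ) - U μ‖ ≤ (ε/8) * μ + (C + (ε/8) * μ) := by
    have hid : μ • (J (U μ) - U μ) - U μ = μ • (D μ - l) + (μ • l - U μ) := by
      simp only [hD]; module
    rw [hid]
    calc ‖μ • (D μ - l) + (μ • l - U μ)‖ ≤ ‖μ • (D μ - l)‖ + ‖μ • l - U μ‖ :=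
          norm_add_le _ _
      _ ≤ (ε/8) * μ + (C + (ε/8) * μ) := by
          rw [norm_smul, Real.norm_eq_abs, abs_of_pos hμ0, ← norm_sub_rev (U μ)]
          nlinarith [hDμ, hUμ, hμ0.le]
  -- conclude
  have hμv : μ • (lam • V lam) = (1 - lam) • V lam := by
    rw [smul_smul, hμlam]
  have hrw : lam • V lam - l = μ⁻¹ • ((1 - lam) • V lam - μ • l) := by
    rw [← hμv, ← smul_sub, smul_smul, inv_mul_cancel₀ hμ0.ne', one_smul]
  rw [dist_eq_norm, hrw, norm_smul, Real.norm_eq_abs, abs_of_pos (inv_pos.mpr hμ0)]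
  have hbound : ‖(1 - lam) • V lam - μ • l‖ ≤ 2*C + 3*(ε/8)*μ := by
    have htri : ‖(1 - lam) • V lam - μ • l‖
        ≤ ‖(1 - lam) • V lam - U μ‖ + ‖U μ - μ • l‖ := by
      have := dist_triangle ((1 - lam) • V lam) (U μ) (μ • l)
      simpa [dist_eq_norm] using this
    have hAB := hkey.trans hA
    linarith
  have h2C : 2*C < (ε/8) * μ := by
    have hMr : 2*C/(ε/8) + 1 ≤ M := le_max_right _ _
    have h' : 2*C/(ε/8) < μ := by linarith
    rw [div_lt_iff₀ hε8] at h'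
    linarith
  calc μ⁻¹ * ‖(1 - lam) • V lam - μ • l‖ ≤ μ⁻¹ * (2*C + 3*(ε/8)*μ) := by gcongr
    _ < ε := by
        rw [inv_mul_lt_iff₀ hμ0]
        nlinarith [mul_pos hε8 hμ0]
end
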